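/- arXiv:2110.12336 — 8 statements merged into one kernel-verified Lean document; each statement's English description precedes it below -/
import Mathlib

section
/- Let (Ω, 𝓕, P) be a probability space, A : Ω → {0,1}, Y⁽⁰⁾, Y⁽¹⁾ : Ω → ℝ with |Y⁽⁰⁾|, |Y⁽¹⁾| ≤ M almost surely, 𝓖_X ⊆ 𝓕 a sub-σ-algebra, and Y := A·Y⁽¹⁾ + (1−A)·Y⁽⁰⁾. Assume (Y⁽⁰⁾, Y⁽¹⁾) and A are conditionally independent given 𝓖_X, and the overlap condition: a version π₁ of E[A | 𝓖_X] satisfies π₁ ∈ [1/M, 1 − 1/M] almost surely; set π₀ := 1 − π₁. Let μ₁, μ₀ be 𝓖_X-measurable functions with μ₁·π₁ = E[A·Y | 𝓖_X] a.s. and μ₀·π₀ = E[(1−A)·Y | 𝓖_X] a.s. Then E[Y⁽¹⁾ − Y⁽⁰⁾] = E[μ₁ − μ₀]; i.e., the counterfactual definition of the average treatment effect, Δ* = E[Y⁽¹⁾ − Y⁽⁰⁾], coincides with the outcome-regression definition Δ* = E{E(Y | X, A = 1) − E(Y | X, A = 0)}. -/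
open MeasureTheory ProbabilityTheory Filter Set

section Aux

lemma integrable_of_ae_abs_le {Ω : Type*} [MeasurableSpace Ω] {μ : Measure Ω} [IsFiniteMeasure μ] {f : Ω → ℝ}
    (hf : AEStronglyMeasurable f μ) {C : ℝ} (h : ∀ᵐ ω ∂μ, |f ω| ≤ C) : Integrable f μ :=
  Integrable.mono' (integrable_const C) hf (by filter_upwards [h] with ω hω; simpa using hω)

lemma key_indep {Ω : Type*} (m : MeasurableSpace Ω) [mF : MeasurableSpace Ω] [StandardBorelSpace Ω]
    {μ : Measure Ω} [IsProbabilityMeasure μ] (hm : m ≤ mF)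
    {B : Ω → ℝ} (hB : Measurable B) (hBbin : ∀ ω, B ω = 0 ∨ B ω = 1)
    {Z : Ω → ℝ × ℝ} (hZ : Measurable Z)
    (hind : CondIndepFun m hm Z B μ)
    {ρ : Ω → ℝ} (hρmeas : Measurable[m] ρ) (hρ : ρ =ᵐ[μ] μ[B|m])
    (hρbdd : ∀ᵐ ω ∂μ, |ρ ω| ≤ 1)
    (g : ℝ × ℝ → ℝ) (hg : Measurable g) (C : ℝ) (hgC : ∀ x, |g x| ≤ C) :
    μ[fun ω => g (Z ω) * B ω | m] =ᵐ[μ] fun ω => ρ ω * (μ[fun ω => g (Z ω)|m]) ω := by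
  have hρmF : Measurable ρ := fun s hs => hm _ (hρmeas hs)
  have hB01 : ∀ ω, |B ω| ≤ 1 := by
    intro ω; rcases hBbin ω with h | h <;> simp [h]
  -- the main predicate
  set Q : (ℝ × ℝ → ℝ) → Prop :=
    fun φ => μ[fun ω => φ (Z ω) * B ω | m] =ᵐ[μ] μ[fun ω => ρ ω * φ (Z ω) | m] with hQ
  -- integrability helper
  have hint : ∀ (φ : ℝ × ℝ → ℝ), Measurable φ → ∀ (D : ℝ), (∀ x, |φ x| ≤ D) →
      Integrable (fun ω => φ (Z ω) * B ω) μ ∧ Integrable (fun ω => ρ ω * φ (Z ω)) μ ∧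
        Integrable (fun ω => φ (Z ω)) μ := by
    intro φ hφ D hD
    have hφZ : Measurable fun ω => φ (Z ω) := hφ.comp hZ
    refine ⟨integrable_of_ae_abs_le ((hφZ.mul hB).aestronglyMeasurable) (C := D)
      (Eventually.of_forall fun ω => ?_),
      integrable_of_ae_abs_le ((hρmF.mul hφZ).aestronglyMeasurable) (C := D) ?_,
      integrable_of_ae_abs_le (hφZ.aestronglyMeasurable) (C := D)
        (Eventually.of_forall fun ω => hD _)⟩
    · rw [abs_mul]
      calc |φ (Z ω)| * |B ω| ≤ D * 1 := by
            have := hD (Z ω)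
            have := hB01 ω
            have h0 : (0:ℝ) ≤ |φ (Z ω)| := abs_nonneg _
            nlinarith [abs_nonneg (B ω)]
        _ = D := mul_one D
    · filter_upwards [hρbdd] with ω hω
      rw [abs_mul]
      have := hD (Z ω)
      nlinarith [abs_nonneg (φ (Z ω)), abs_nonneg (ρ ω)]
  -- indicator (constant 1) case
  have hQind : ∀ s : Set (ℝ × ℝ), MeasurableSet s → Q (s.indicator fun _ => (1:ℝ)) := by
    intro s hs
    have h1 := (condIndepFun_iff_condExp_inter_preimage_eq_mul hZ hB).mp hind s {1} hs
      (measurableSet_singleton 1)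
    have e1 : Set.indicator (Z ⁻¹' s ∩ B ⁻¹' {1}) (fun _ => (1:ℝ))
        = fun ω => (s.indicator fun _ => (1:ℝ)) (Z ω) * B ω := by
      funext ω
      by_cases hzs : Z ω ∈ s <;> rcases hBbin ω with h | h <;>
        simp [Set.indicator_apply, hzs, h]
    have e2 : Set.indicator (B ⁻¹' {1}) (fun _ => (1:ℝ)) = B := by
      funext ω
      rcases hBbin ω with h | h <;> simp [Set.indicator_apply, h]
    have e3 : Set.indicator (Z ⁻¹' s) (fun _ => (1:ℝ))
        = fun ω => (s.indicator fun _ => (1:ℝ)) (Z ω) := by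
      funext ω; by_cases hzs : Z ω ∈ s <;> simp [Set.indicator_apply, hzs]
    rw [hQ]
    obtain ⟨hi1, hi2, hi3⟩ := hint (s.indicator fun _ => (1:ℝ))
      (measurable_const.indicator hs) 1 (fun x => by
        by_cases hx : x ∈ s <;> simp [Set.indicator_apply, hx])
    have hpull : μ[fun ω => ρ ω * (s.indicator fun _ => (1:ℝ)) (Z ω) | m]
        =ᵐ[μ] fun ω => ρ ω * (μ[fun ω => (s.indicator fun _ => (1:ℝ)) (Z ω)|m]) ω := by
      have := condExp_mul_of_stronglyMeasurable_left (m := m) (μ := μ)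
        hρmeas.stronglyMeasurable (g := fun ω => (s.indicator fun _ => (1:ℝ)) (Z ω)) ?_ hi3
      · exact this
      · exact hi2
    have hLHS : μ[fun ω => (s.indicator fun _ => (1:ℝ)) (Z ω) * B ω | m]
        =ᵐ[μ] fun ω => ρ ω * (μ[fun ω => (s.indicator fun _ => (1:ℝ)) (Z ω)|m]) ω := by
      rw [← e1, ← e3]
      refine h1.trans ?_
      have hcB : (μ⟦B ⁻¹' {1} | m⟧) =ᵐ[μ] ρ := by
        rw [e2]; exact hρ.symm
      filter_upwards [hcB] with ω hω
      rw [hω, mul_comm]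
    exact hLHS.trans hpull.symm
  -- simple function case
  have hQsimple : ∀ φ : SimpleFunc (ℝ × ℝ) ℝ, Q φ := by
    intro φ
    induction φ using SimpleFunc.induction with
    | @const c s hs =>
      -- the function is s.indicator (fun _ => c) = c • s.indicator 1
      have e : ⇑(SimpleFunc.piecewise s hs (SimpleFunc.const _ c) (SimpleFunc.const _ (0:ℝ)))
          = fun x => c * (s.indicator (fun _ => (1:ℝ))) x := by
        funext x; by_cases hx : x ∈ s <;> simp [SimpleFunc.piecewise_apply, hx, Set.indicator_apply]
      rw [hQ]
      simp only [e]
      have h1 := hQind s hs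
      rw [hQ] at h1
      have eL : (fun ω => (c * (s.indicator (fun _ => (1:ℝ))) (Z ω)) * B ω)
          = c • fun ω => (s.indicator (fun _ => (1:ℝ))) (Z ω) * B ω := by
        funext ω; simp [mul_assoc]
      have eR : (fun ω => ρ ω * (c * (s.indicator (fun _ => (1:ℝ))) (Z ω)))
          = c • fun ω => ρ ω * (s.indicator (fun _ => (1:ℝ))) (Z ω) := by
        funext ω; simp; ring
      rw [eL, eR]
      refine (condExp_smul c _ _).trans ?_
      refine EventuallyEq.trans ?_ (condExp_smul (m := m) (μ := μ) c _).symm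
      filter_upwards [h1] with ω hω
      simp [hω]
    | @add φ ψ hdisj hφ' hψ' =>
      rw [hQ]
      obtain ⟨Cφ, hCφ⟩ := φ.exists_forall_norm_le
      obtain ⟨Cψ, hCψ⟩ := ψ.exists_forall_norm_le
      obtain ⟨hiφ1, hiφ2, _⟩ := hint φ φ.measurable Cφ (fun x => hCφ x)
      obtain ⟨hiψ1, hiψ2, _⟩ := hint ψ ψ.measurable Cψ (fun x => hCψ x)
      have eL : (fun ω => (⇑(φ + ψ)) (Z ω) * B ω)
          = (fun ω => φ (Z ω) * B ω) + fun ω => ψ (Z ω) * B ω := by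
        funext ω; simp [SimpleFunc.coe_add, add_mul]
      have eR : (fun ω => ρ ω * (⇑(φ + ψ)) (Z ω))
          = (fun ω => ρ ω * φ (Z ω)) + fun ω => ρ ω * ψ (Z ω) := by
        funext ω; simp [SimpleFunc.coe_add, mul_add]
      rw [eL, eR]
      refine (condExp_add hiφ1 hiψ1 _).trans ?_
      refine EventuallyEq.trans ?_ (condExp_add (m := m) (μ := μ) hiφ2 hiψ2).symm
      rw [hQ] at hφ' hψ'
      filter_upwards [hφ', hψ'] with ω h1 h2
      simp [h1, h2]
  -- general bounded measurable case via dominated convergence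
  have hC0 : 0 ≤ C := le_trans (abs_nonneg _) (hgC (0, 0))
  set a : ℕ → SimpleFunc (ℝ × ℝ) ℝ :=
    fun n => SimpleFunc.approxOn g hg Set.univ 0 (Set.mem_univ 0) n with ha
  have hmain : μ[fun ω => g (Z ω) * B ω | m] =ᵐ[μ] μ[fun ω => ρ ω * g (Z ω) | m] := by
    refine tendsto_condExp_unique (μ := μ) (m := m)
      (fun n => fun ω => a n (Z ω) * B ω) (fun n => fun ω => ρ ω * a n (Z ω))
      (fun ω => g (Z ω) * B ω) (fun ω => ρ ω * g (Z ω))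
      ?_ ?_ ?_ ?_ (fun _ => 2 * C) (integrable_const _) (fun _ => 2 * C)
      (integrable_const _) ?_ ?_ ?_
    · intro n
      obtain ⟨D, hD⟩ := (a n).exists_forall_norm_le
      exact (hint (a n) (a n).measurable D (fun x => hD x)).1
    · intro n
      obtain ⟨D, hD⟩ := (a n).exists_forall_norm_le
      exact (hint (a n) (a n).measurable D (fun x => hD x)).2.1
    · refine Eventually.of_forall fun ω => ?_
      have := SimpleFunc.tendsto_approxOn hg (Set.mem_univ (0:ℝ))
        (x := Z ω) (by simp)
      exact this.mul_const _
    · refine Eventually.of_forall fun ω => ?_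
      have := SimpleFunc.tendsto_approxOn hg (Set.mem_univ (0:ℝ))
        (x := Z ω) (by simp)
      exact this.const_mul _
    · intro n
      refine Eventually.of_forall fun ω => ?_
      have h1 : ‖a n (Z ω)‖ ≤ ‖g (Z ω)‖ + ‖g (Z ω)‖ :=
        SimpleFunc.norm_approxOn_zero_le hg (Set.mem_univ 0) (Z ω) n
      have h2 : ‖g (Z ω)‖ ≤ C := by rw [Real.norm_eq_abs]; exact hgC _
      have h3 := hB01 ω
      simp only [Real.norm_eq_abs] at h1 h2
      rw [Real.norm_eq_abs, abs_mul]
      show _ ≤ 2 * C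
      nlinarith [abs_nonneg (a n (Z ω)), abs_nonneg (B ω), norm_nonneg (a n (Z ω)),
        norm_nonneg (g (Z ω))]
    · intro n
      filter_upwards [hρbdd] with ω hω
      have h1 : ‖a n (Z ω)‖ ≤ ‖g (Z ω)‖ + ‖g (Z ω)‖ :=
        SimpleFunc.norm_approxOn_zero_le hg (Set.mem_univ 0) (Z ω) n
      have h2 : ‖g (Z ω)‖ ≤ C := by rw [Real.norm_eq_abs]; exact hgC _
      simp only [Real.norm_eq_abs] at h1 h2
      rw [Real.norm_eq_abs, abs_mul]
      show _ ≤ 2 * C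
      nlinarith [abs_nonneg (a n (Z ω)), abs_nonneg (ρ ω), norm_nonneg (a n (Z ω)),
        norm_nonneg (g (Z ω))]
    · intro n
      have := hQsimple (a n)
      rw [hQ] at this
      exact this
  refine hmain.trans ?_
  obtain ⟨_, hi2, hi3⟩ := hint g hg C hgC
  exact condExp_mul_of_stronglyMeasurable_left hρmeas.stronglyMeasurable hi2 hi3

end Aux

lemma side_eq {Ω : Type*} (m : MeasurableSpace Ω) [mF : MeasurableSpace Ω] [StandardBorelSpace Ω]
    {μ : Measure Ω} [IsProbabilityMeasure μ] (hm : m ≤ mF)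
    (M : ℝ) (hM : 1 < M)
    {B : Ω → ℝ} (hB : Measurable B) (hBbin : ∀ ω, B ω = 0 ∨ B ω = 1)
    {Z : Ω → ℝ × ℝ} (hZ : Measurable Z)
    (hind : CondIndepFun m hm Z B μ)
    {ρ : Ω → ℝ} (hρmeas : Measurable[m] ρ) (hρ : ρ =ᵐ[μ] μ[B|m])
    (hρlb : ∀ᵐ ω ∂μ, 1 / M ≤ ρ ω ∧ ρ ω ≤ 1)
    {W : Ω → ℝ} (hWbdd : ∀ᵐ ω ∂μ, |W ω| ≤ M)
    {p : ℝ × ℝ → ℝ} (hp : Measurable p) (hpZ : ∀ ω, p (Z ω) = W ω)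
    {ν : Ω → ℝ} (hν : (fun ω => ν ω * ρ ω) =ᵐ[μ] μ[fun ω => B ω * W ω|m]) :
    Integrable ν μ ∧ ∫ ω, ν ω ∂μ = ∫ ω, W ω ∂μ := by
  have hM0 : (0:ℝ) < M := lt_trans one_pos hM
  have hMinv : (0:ℝ) < 1 / M := by positivity
  have hWmeas : Measurable W := by
    have : Measurable fun ω => p (Z ω) := hp.comp hZ
    simpa [funext hpZ] using this
  set g : ℝ × ℝ → ℝ := fun x => max (-M) (min M (p x)) with hgdef
  have hg : Measurable g := measurable_const.max (measurable_const.min hp)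
  have hgC : ∀ x, |g x| ≤ M := by
    intro x
    rw [abs_le]
    constructor
    · exact le_max_left _ _
    · exact max_le (by linarith) (min_le_left _ _)
  have hgZ : (fun ω => g (Z ω)) =ᵐ[μ] W := by
    filter_upwards [hWbdd] with ω hω
    rw [abs_le] at hω
    simp only [hgdef, hpZ ω]
    rw [min_eq_right hω.2, max_eq_right hω.1]
  have hρbdd : ∀ᵐ ω ∂μ, |ρ ω| ≤ 1 := by
    filter_upwards [hρlb] with ω hω
    rw [abs_le]; exact ⟨by linarith [hω.1], hω.2⟩
  have hkey := key_indep m hm hB hBbin hZ hind hρmeas hρ hρbdd g hg M hgC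
  have h1 : μ[fun ω => B ω * W ω|m] =ᵐ[μ] μ[fun ω => g (Z ω) * B ω|m] :=
    condExp_congr_ae (by filter_upwards [hgZ] with ω hω; rw [hω, mul_comm])
  have h2 : μ[fun ω => g (Z ω)|m] =ᵐ[μ] μ[W|m] := condExp_congr_ae hgZ
  have hνeq : ν =ᵐ[μ] μ[W|m] := by
    filter_upwards [hν, h1, hkey, h2, hρlb] with ω hν' h1' hk' h2' hρ'
    have hρne : ρ ω ≠ 0 := by linarith [hρ'.1]
    have heq : ν ω * ρ ω = ρ ω * (μ[W|m]) ω := by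
      rw [hν', h1', hk', h2']
    have := mul_right_cancel₀ hρne (heq.trans (mul_comm _ _))
    exact this
  have hWint : Integrable W μ := integrable_of_ae_abs_le hWmeas.aestronglyMeasurable hWbdd
  have hνint : Integrable ν μ := (integrable_condExp).congr hνeq.symm
  refine ⟨hνint, ?_⟩
  rw [integral_congr_ae hνeq]
  exact integral_condExp hm (f := W)

/-- **Equivalence of the counterfactual and outcome-regression definitions of the ATE.**
Under consistency, ignorability and overlap, `E[Y⁽¹⁾ − Y⁽⁰⁾] = E[μ₁ − μ₀]`, where
`π₁ = E[A ∣ 𝓖X]` is the propensity score, `π₀ = 1 − π₁`, and `μₐ` are the `𝓖X`-measurable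
outcome regressions characterized by `μ₁·π₁ = E[A·Y ∣ 𝓖X]` and `μ₀·π₀ = E[(1−A)·Y ∣ 𝓖X]` a.s. -/
theorem ate_counterfactual_eq_outcome_regression
    {Ω : Type*} (𝓖X : MeasurableSpace Ω) [mF : MeasurableSpace Ω] [StandardBorelSpace Ω]
    (P : Measure Ω) [IsProbabilityMeasure P]
    (h𝓖X : 𝓖X ≤ mF)
    (M : ℝ) (hM : 1 < M)
    (A Y0 Y1 : Ω → ℝ)
    (hA : Measurable A) (hAbin : ∀ ω, A ω = 0 ∨ A ω = 1)
    (hY0 : Measurable Y0) (hY1 : Measurable Y1)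
    (hY0bdd : ∀ᵐ ω ∂P, |Y0 ω| ≤ M) (hY1bdd : ∀ᵐ ω ∂P, |Y1 ω| ≤ M)
    (hignore : CondIndepFun 𝓖X h𝓖X (fun ω => (Y0 ω, Y1 ω)) A P)
    (Y : Ω → ℝ) (hY : ∀ ω, Y ω = A ω * Y1 ω + (1 - A ω) * Y0 ω)
    (π1 μ1 μ0 : Ω → ℝ)
    (hπ1meas : Measurable[𝓖X] π1) (hπ1 : π1 =ᵐ[P] P[A|𝓖X])
    (hoverlap : ∀ᵐ ω ∂P, π1 ω ∈ Set.Icc (1 / M) (1 - 1 / M))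
    (hμ1meas : Measurable[𝓖X] μ1) (hμ0meas : Measurable[𝓖X] μ0)
    (hμ1 : (fun ω => μ1 ω * π1 ω) =ᵐ[P] P[fun ω => A ω * Y ω|𝓖X])
    (hμ0 : (fun ω => μ0 ω * (1 - π1 ω)) =ᵐ[P] P[fun ω => (1 - A ω) * Y ω|𝓖X]) :
    ∫ ω, (Y1 ω - Y0 ω) ∂P = ∫ ω, (μ1 ω - μ0 ω) ∂P := by
  have hM0 : (0:ℝ) < M := lt_trans one_pos hM
  have hMinv : (0:ℝ) < 1 / M := by positivity
  set Z : Ω → ℝ × ℝ := fun ω => (Y0 ω, Y1 ω) with hZdef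
  have hZ : Measurable Z := hY0.prodMk hY1
  -- treatment side
  have hAY : (fun ω => A ω * Y ω) = fun ω => A ω * Y1 ω := by
    funext ω; rcases hAbin ω with h | h <;> simp [hY, h]
  have hside1 : Integrable μ1 P ∧ ∫ ω, μ1 ω ∂P = ∫ ω, Y1 ω ∂P := by
    refine side_eq 𝓖X h𝓖X M hM hA hAbin hZ hignore hπ1meas hπ1 ?_ hY1bdd
      (p := Prod.snd) measurable_snd (fun ω => rfl) ?_
    · filter_upwards [hoverlap] with ω hω
      exact ⟨hω.1, by nlinarith [hω.2]⟩
    · rw [← hAY]; exact hμ1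
  -- control side
  have hB0bin : ∀ ω, (1 - A ω) = 0 ∨ (1 - A ω) = 1 := by
    intro ω; rcases hAbin ω with h | h <;> simp [h]
  have hB0 : Measurable fun ω => 1 - A ω := measurable_const.sub hA
  have hind0 : CondIndepFun 𝓖X h𝓖X Z (fun ω => 1 - A ω) P :=
    hignore.comp measurable_id (measurable_const.sub measurable_id)
  have hAint : Integrable A P :=
    integrable_of_ae_abs_le hA.aestronglyMeasurable (C := 1)
      (Filter.Eventually.of_forall fun ω => by rcases hAbin ω with h | h <;> simp [h])
  have hρ0 : (fun ω => 1 - π1 ω) =ᵐ[P] P[fun ω => 1 - A ω|𝓖X] := by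
    have hsub : P[(fun _ => (1:ℝ)) - A|𝓖X] =ᵐ[P] P[fun _ => (1:ℝ)|𝓖X] - P[A|𝓖X] :=
      condExp_sub (integrable_const 1) hAint _
    have hconst : P[fun _ => (1:ℝ)|𝓖X] =ᵐ[P] fun _ => (1:ℝ) :=
      Filter.EventuallyEq.of_eq (condExp_const h𝓖X 1)
    have : P[fun ω => 1 - A ω|𝓖X] =ᵐ[P] fun ω => 1 - π1 ω := by
      refine (hsub.trans ?_)
      filter_upwards [hconst.symm, hπ1] with ω h1 h2
      simp only [Pi.sub_apply]
      rw [← h1, ← h2]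
    exact this.symm
  have hAY0 : (fun ω => (1 - A ω) * Y ω) = fun ω => (1 - A ω) * Y0 ω := by
    funext ω; rcases hAbin ω with h | h <;> simp [hY, h]
  have hside0 : Integrable μ0 P ∧ ∫ ω, μ0 ω ∂P = ∫ ω, Y0 ω ∂P := by
    refine side_eq 𝓖X h𝓖X M hM hB0 hB0bin hZ hind0
      ((@measurable_const ℝ Ω _ 𝓖X 1).sub hπ1meas) hρ0 ?_ hY0bdd
      (p := Prod.fst) measurable_fst (fun ω => rfl) ?_
    · filter_upwards [hoverlap] with ω hω
      refine ⟨by simp only [Pi.sub_apply]; linarith [hω.2], by simp only [Pi.sub_apply]; linarith [hω.1]⟩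
    · rw [← hAY0]; exact hμ0
  -- conclude
  have hY1int : Integrable Y1 P := integrable_of_ae_abs_le hY1.aestronglyMeasurable hY1bdd
  have hY0int : Integrable Y0 P := integrable_of_ae_abs_le hY0.aestronglyMeasurable hY0bdd
  rw [integral_sub hY1int hY0int, integral_sub hside1.1 hside0.1, hside1.2, hside0.2]
end

section
/- Let (Ω, 𝓕, P) be a probability space, A : Ω → {0,1}, Y : Ω → ℝ with |Y| ≤ M almost surely, and 𝓖_X ⊆ 𝓕 a sub-σ-algebra. Let π₁ = E[A | 𝓖_X] with π₁ ∈ [1/M, 1 − 1/M] a.s., π₀ = 1 − π₁, and μ₁, μ₀ the 𝓖_X-measurable outcome regressions with μ₁π₁ = E[AY | 𝓖_X] and μ₀π₀ = E[(1−A)Y | 𝓖_X] a.s.; set Δ* := E[μ₁ − μ₀]. Let π̃₁, μ̃₁, μ̃₀ be 𝓖_X-measurable working models with π̃₁ ∈ [1/M, 1 − 1/M] a.s., π̃₀ := 1 − π̃₁, and |μ̃₁|, |μ̃₀| ≤ M a.s. If either (i) π̃₁ = π₁ almost surely, or (ii) μ̃₁ = μ₁ and μ̃₀ = μ₀ almost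 surely, then the augmented-inverse-probability-weighted functional is unbiased: E[ μ̃₁ − μ̃₀ + A(Y − μ̃₁)/π̃₁ − (1−A)(Y − μ̃₀)/π̃₀ ] = Δ*. -/
open MeasureTheory ProbabilityTheory

lemma aipw_abs_mul_le {a b c d : ℝ} (ha : |a| ≤ c) (hb : |b| ≤ d) : |a * b| ≤ c * d := by
  rw [abs_mul]
  exact mul_le_mul ha hb (abs_nonneg _) ((abs_nonneg a).trans ha)

lemma aipw_intBdd {Ω : Type*} [MeasurableSpace Ω] (P : Measure Ω) [IsProbabilityMeasure P]
    (f : Ω → ℝ) (hf : AEStronglyMeasurable f P) (C : ℝ) (h : ∀ᵐ ω ∂P, |f ω| ≤ C) :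
    Integrable f P :=
  (integrable_const C).mono' hf (by simpa [Real.norm_eq_abs] using h)

lemma aipw_tower {Ω : Type*} (m : MeasurableSpace Ω) [mF : MeasurableSpace Ω] (hm : m ≤ mF)
    (P : Measure Ω) [IsProbabilityMeasure P] (g f : Ω → ℝ)
    (hg : StronglyMeasurable[m] g) (hf : Integrable f P)
    (hgf : Integrable (fun ω => g ω * f ω) P) :
    ∫ ω, g ω * f ω ∂P = ∫ ω, g ω * (P[f|m]) ω ∂P := by
  have h1 : P[g * f|m] =ᵐ[P] g * P[f|m] := condExp_mul_of_stronglyMeasurable_left hg hgf hf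
  calc ∫ ω, g ω * f ω ∂P = ∫ ω, (P[g * f|m]) ω ∂P := (integral_condExp hm).symm
    _ = ∫ ω, g ω * (P[f|m]) ω ∂P := integral_congr_ae h1

lemma aipw_integral_five {Ω : Type*} [MeasurableSpace Ω] (P : Measure Ω)
    (p1 p2 p3 p4 p5 : Ω → ℝ) (h1 : Integrable p1 P) (h2 : Integrable p2 P)
    (h3 : Integrable p3 P) (h4 : Integrable p4 P) (h5 : Integrable p5 P) :
    ∫ ω, (p1 ω + p2 ω - p3 ω - p4 ω + p5 ω) ∂P
      = ∫ ω, p1 ω ∂P + ∫ ω, p2 ω ∂P - ∫ ω, p3 ω ∂P - ∫ ω, p4 ω ∂P + ∫ ω, p5 ω ∂P := by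
  have e1 := integral_add (((h1.add h2).sub h3).sub h4) h5
  have e2 := integral_sub ((h1.add h2).sub h3) h4
  have e3 := integral_sub (h1.add h2) h3
  have e4 := integral_add h1 h2
  simp only [Pi.add_apply, Pi.sub_apply] at e1 e2 e3 e4
  rw [e1, e2, e3, e4]

/-- **Double robustness of the AIPW population functional.**
With true propensity score `π₁ = E[A ∣ 𝓖X]` (overlap `π₁ ∈ [1/M, 1−1/M]` a.s.) and true
outcome regressions `μₐ` with `μₐπₐ = E[1{A=a}Y ∣ 𝓖X]` a.s., and working `𝓖X`-measurable
models `π̃₁ ∈ [1/M, 1−1/M]`, `|μ̃₁|, |μ̃₀| ≤ M` a.s., if either `π̃₁ = π₁` a.s. or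
(`μ̃₁ = μ₁` and `μ̃₀ = μ₀` a.s.), then
`E[μ̃₁ − μ̃₀ + A(Y−μ̃₁)/π̃₁ − (1−A)(Y−μ̃₀)/π̃₀] = Δ* = E[μ₁ − μ₀]`. -/
theorem aipw_double_robustness
    {Ω : Type*} (𝓖X : MeasurableSpace Ω) [mF : MeasurableSpace Ω]
    (P : Measure Ω) [IsProbabilityMeasure P]
    (h𝓖X : 𝓖X ≤ mF)
    (M : ℝ) (hM : 1 < M)
    (A Y : Ω → ℝ)
    (hA : Measurable A) (hAbin : ∀ ω, A ω = 0 ∨ A ω = 1)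
    (hYmeas : Measurable Y) (hYbdd : ∀ᵐ ω ∂P, |Y ω| ≤ M)
    (π1 μ1 μ0 : Ω → ℝ)
    (hπ1meas : Measurable[𝓖X] π1) (hπ1 : π1 =ᵐ[P] P[A|𝓖X])
    (hoverlap : ∀ᵐ ω ∂P, π1 ω ∈ Set.Icc (1 / M) (1 - 1 / M))
    (hμ1meas : Measurable[𝓖X] μ1) (hμ0meas : Measurable[𝓖X] μ0)
    (hμ1 : (fun ω => μ1 ω * π1 ω) =ᵐ[P] P[fun ω => A ω * Y ω|𝓖X])
    (hμ0 : (fun ω => μ0 ω * (1 - π1 ω)) =ᵐ[P] P[fun ω => (1 - A ω) * Y ω|𝓖X])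
    (πt1 μt1 μt0 : Ω → ℝ)
    (hπt1meas : Measurable[𝓖X] πt1)
    (hπt1b : ∀ᵐ ω ∂P, πt1 ω ∈ Set.Icc (1 / M) (1 - 1 / M))
    (hμt1meas : Measurable[𝓖X] μt1) (hμt0meas : Measurable[𝓖X] μt0)
    (hμt1b : ∀ᵐ ω ∂P, |μt1 ω| ≤ M) (hμt0b : ∀ᵐ ω ∂P, |μt0 ω| ≤ M)
    (hdr : (πt1 =ᵐ[P] π1) ∨ (μt1 =ᵐ[P] μ1 ∧ μt0 =ᵐ[P] μ0)) :
    ∫ ω, (μt1 ω - μt0 ω + A ω * (Y ω - μt1 ω) / πt1 ω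
        - (1 - A ω) * (Y ω - μt0 ω) / (1 - πt1 ω)) ∂P
      = ∫ ω, (μ1 ω - μ0 ω) ∂P := by
  have hM0 : (0:ℝ) ≤ M := by linarith
  have hA1 : ∀ ω, |A ω| ≤ 1 := by
    intro ω; rcases hAbin ω with h | h <;> simp [h]
  have hA1' : ∀ ω, |1 - A ω| ≤ 1 := by
    intro ω; rcases hAbin ω with h | h <;> simp [h]
  -- measurability (w.r.t. mF)
  have hπt1' : Measurable πt1 := hπt1meas.mono h𝓖X le_rfl
  have hπ1' : Measurable π1 := hπ1meas.mono h𝓖X le_rfl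
  have hμ1' : Measurable μ1 := hμ1meas.mono h𝓖X le_rfl
  have hμ0' : Measurable μ0 := hμ0meas.mono h𝓖X le_rfl
  have hμt1' : Measurable μt1 := hμt1meas.mono h𝓖X le_rfl
  have hμt0' : Measurable μt0 := hμt0meas.mono h𝓖X le_rfl
  have hg1' : Measurable (fun ω => 1 / πt1 ω) := measurable_const.div hπt1'
  have hg0' : Measurable (fun ω => 1 / (1 - πt1 ω)) :=
    measurable_const.div (measurable_const.sub hπt1')
  -- bounds on g1, g0
  have hg1b : ∀ᵐ ω ∂P, |1 / πt1 ω| ≤ M := by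
    filter_upwards [hπt1b] with ω h
    have hp : 0 < πt1 ω := lt_of_lt_of_le (by positivity) h.1
    rw [abs_of_pos (by positivity), div_le_iff₀ hp]
    have := (div_le_iff₀ (show (0:ℝ) < M by linarith)).mp h.1
    nlinarith
  have hg0b : ∀ᵐ ω ∂P, |1 / (1 - πt1 ω)| ≤ M := by
    filter_upwards [hπt1b] with ω h
    have hp : 0 < 1 - πt1 ω := by
      have : 0 < 1 / M := by positivity
      linarith [h.2]
    rw [abs_of_pos (by positivity), div_le_iff₀ hp]
    have := (div_le_iff₀ (show (0:ℝ) < M by linarith)).mp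
      (show 1 / M ≤ 1 - πt1 ω by linarith [h.2])
    nlinarith
  -- bounds on the regression products via the conditional expectation
  have hAYb : ∀ᵐ ω ∂P, |A ω * Y ω| ≤ (M.toNNReal : ℝ) := by
    filter_upwards [hYbdd] with ω h
    rw [Real.coe_toNNReal _ hM0]
    calc |A ω * Y ω| ≤ 1 * M := aipw_abs_mul_le (hA1 ω) h
      _ = M := one_mul M
  have hA'Yb : ∀ᵐ ω ∂P, |(1 - A ω) * Y ω| ≤ (M.toNNReal : ℝ) := by
    filter_upwards [hYbdd] with ω h
    rw [Real.coe_toNNReal _ hM0]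
    calc |(1 - A ω) * Y ω| ≤ 1 * M := aipw_abs_mul_le (hA1' ω) h
      _ = M := one_mul M
  have hμ1π1b : ∀ᵐ ω ∂P, |μ1 ω * π1 ω| ≤ M := by
    have := ae_bdd_condExp_of_ae_bdd (m := 𝓖X) (μ := P) hAYb
    filter_upwards [hμ1, this] with ω h1 h2
    rw [h1]; rwa [Real.coe_toNNReal _ hM0] at h2
  have hμ0π0b : ∀ᵐ ω ∂P, |μ0 ω * (1 - π1 ω)| ≤ M := by
    have := ae_bdd_condExp_of_ae_bdd (m := 𝓖X) (μ := P) hA'Yb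
    filter_upwards [hμ0, this] with ω h1 h2
    rw [h1]; rwa [Real.coe_toNNReal _ hM0] at h2
  -- integrability of the five pieces
  have hIA : Integrable A P :=
    aipw_intBdd P A hA.aestronglyMeasurable 1 (Filter.Eventually.of_forall hA1)
  have hIA' : Integrable (fun ω => 1 - A ω) P :=
    aipw_intBdd P _ (measurable_const.sub hA).aestronglyMeasurable 1 (Filter.Eventually.of_forall hA1')
  have hIAY : Integrable (fun ω => A ω * Y ω) P :=
    aipw_intBdd P _ (hA.mul hYmeas).aestronglyMeasurable M
      (by filter_upwards [hYbdd] with ω h; simpa using aipw_abs_mul_le (hA1 ω) h)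
  have hIA'Y : Integrable (fun ω => (1 - A ω) * Y ω) P :=
    aipw_intBdd P _ ((measurable_const.sub hA).mul hYmeas).aestronglyMeasurable M
      (by filter_upwards [hYbdd] with ω h; simpa using aipw_abs_mul_le (hA1' ω) h)
  have hI1 : Integrable (fun ω => μt1 ω - μt0 ω) P :=
    aipw_intBdd P _ (hμt1'.sub hμt0').aestronglyMeasurable (M + M)
      (by filter_upwards [hμt1b, hμt0b] with ω h1 h2; exact (abs_sub _ _).trans (by linarith))
  have hI2 : Integrable (fun ω => 1 / πt1 ω * (A ω * Y ω)) P :=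
    aipw_intBdd P _ (hg1'.mul (hA.mul hYmeas)).aestronglyMeasurable (M * M)
      (by filter_upwards [hg1b, hYbdd] with ω h1 h2
          exact aipw_abs_mul_le h1 (by simpa using aipw_abs_mul_le (hA1 ω) h2))
  have hI3 : Integrable (fun ω => 1 / πt1 ω * μt1 ω * A ω) P :=
    aipw_intBdd P _ (((hg1'.mul hμt1').mul hA)).aestronglyMeasurable (M * M * 1)
      (by filter_upwards [hg1b, hμt1b] with ω h1 h2
          exact aipw_abs_mul_le (aipw_abs_mul_le h1 h2) (hA1 ω))
  have hI4 : Integrable (fun ω => 1 / (1 - πt1 ω) * ((1 - A ω) * Y ω)) P :=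
    aipw_intBdd P _ (hg0'.mul ((measurable_const.sub hA).mul hYmeas)).aestronglyMeasurable (M * M)
      (by filter_upwards [hg0b, hYbdd] with ω h1 h2
          exact aipw_abs_mul_le h1 (by simpa using aipw_abs_mul_le (hA1' ω) h2))
  have hI5 : Integrable (fun ω => 1 / (1 - πt1 ω) * μt0 ω * (1 - A ω)) P :=
    aipw_intBdd P _ (((hg0'.mul hμt0').mul (measurable_const.sub hA))).aestronglyMeasurable
      (M * M * 1)
      (by filter_upwards [hg0b, hμt0b] with ω h1 h2
          exact aipw_abs_mul_le (aipw_abs_mul_le h1 h2) (hA1' ω))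
  -- integrability of the Q pieces
  have hQ2 : Integrable (fun ω => 1 / πt1 ω * (μ1 ω * π1 ω)) P :=
    aipw_intBdd P _ (hg1'.mul (hμ1'.mul hπ1')).aestronglyMeasurable (M * M)
      (by filter_upwards [hg1b, hμ1π1b] with ω h1 h2; exact aipw_abs_mul_le h1 h2)
  have hπ1b1 : ∀ᵐ ω ∂P, |π1 ω| ≤ 1 := by
    filter_upwards [hoverlap] with ω h
    have h1M : 0 < 1 / M := by positivity
    rw [abs_le]; constructor <;> [linarith [h.1]; linarith [h.2]]
  have hQ3 : Integrable (fun ω => 1 / πt1 ω * μt1 ω * π1 ω) P :=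
    aipw_intBdd P _ ((hg1'.mul hμt1').mul hπ1').aestronglyMeasurable (M * M * 1)
      (by filter_upwards [hg1b, hμt1b, hπ1b1] with ω h1 h2 h3
          exact aipw_abs_mul_le (aipw_abs_mul_le h1 h2) h3)
  have hQ4 : Integrable (fun ω => 1 / (1 - πt1 ω) * (μ0 ω * (1 - π1 ω))) P :=
    aipw_intBdd P _ (hg0'.mul (hμ0'.mul (measurable_const.sub hπ1'))).aestronglyMeasurable (M * M)
      (by filter_upwards [hg0b, hμ0π0b] with ω h1 h2; exact aipw_abs_mul_le h1 h2)
  have hπ1b1' : ∀ᵐ ω ∂P, |1 - π1 ω| ≤ 1 := by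
    filter_upwards [hoverlap] with ω h
    have h1M : 0 < 1 / M := by positivity
    rw [abs_le]; constructor <;> [linarith [h.2]; linarith [h.1]]
  have hQ5 : Integrable (fun ω => 1 / (1 - πt1 ω) * μt0 ω * (1 - π1 ω)) P :=
    aipw_intBdd P _ ((hg0'.mul hμt0').mul (measurable_const.sub hπ1')).aestronglyMeasurable
      (M * M * 1)
      (by filter_upwards [hg0b, hμt0b, hπ1b1'] with ω h1 h2 h3
          exact aipw_abs_mul_le (aipw_abs_mul_le h1 h2) h3)
  -- conditional expectation of 1 - A
  have hπ1c : (fun ω => 1 - π1 ω) =ᵐ[P] P[fun ω => 1 - A ω|𝓖X] := by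
    have hsub := condExp_sub (m := 𝓖X) (μ := P) (integrable_const (1:ℝ)) hIA
    filter_upwards [hπ1, hsub] with ω h1 h2
    have h0 : (P[fun ω => 1 - A ω|𝓖X]) ω = (P[(fun _ => (1:ℝ)) - A|𝓖X]) ω := rfl
    rw [h0, h2]
    simp [Pi.sub_apply, condExp_const h𝓖X, h1]
  -- rewrite the integrand as five pieces
  have hsplit : ∫ ω, (μt1 ω - μt0 ω + A ω * (Y ω - μt1 ω) / πt1 ω
        - (1 - A ω) * (Y ω - μt0 ω) / (1 - πt1 ω)) ∂P
      = ∫ ω, (μt1 ω - μt0 ω) ∂P + ∫ ω, 1 / πt1 ω * (A ω * Y ω) ∂P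
        - ∫ ω, 1 / πt1 ω * μt1 ω * A ω ∂P
        - ∫ ω, 1 / (1 - πt1 ω) * ((1 - A ω) * Y ω) ∂P
        + ∫ ω, 1 / (1 - πt1 ω) * μt0 ω * (1 - A ω) ∂P := by
    rw [← aipw_integral_five P _ _ _ _ _ hI1 hI2 hI3 hI4 hI5]
    refine integral_congr_ae (Filter.Eventually.of_forall fun ω => ?_)
    simp only [div_eq_mul_inv, one_div]
    ring
  -- apply the tower property to each piece
  have e2 : ∫ ω, 1 / πt1 ω * (A ω * Y ω) ∂P = ∫ ω, 1 / πt1 ω * (μ1 ω * π1 ω) ∂P := by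
    rw [aipw_tower 𝓖X h𝓖X P (fun ω => 1 / πt1 ω) _ (measurable_const.div hπt1meas).stronglyMeasurable hIAY hI2]
    refine integral_congr_ae ?_
    filter_upwards [hμ1] with ω h; rw [← h]
  have e3 : ∫ ω, 1 / πt1 ω * μt1 ω * A ω ∂P = ∫ ω, 1 / πt1 ω * μt1 ω * π1 ω ∂P := by
    rw [aipw_tower 𝓖X h𝓖X P (fun ω => 1 / πt1 ω * μt1 ω) _
      ((measurable_const.div hπt1meas).mul hμt1meas).stronglyMeasurable hIA hI3]
    refine integral_congr_ae ?_
    filter_upwards [hπ1] with ω h; rw [← h]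
  have e4 : ∫ ω, 1 / (1 - πt1 ω) * ((1 - A ω) * Y ω) ∂P
      = ∫ ω, 1 / (1 - πt1 ω) * (μ0 ω * (1 - π1 ω)) ∂P := by
    rw [aipw_tower 𝓖X h𝓖X P (fun ω => 1 / (1 - πt1 ω)) _
      (measurable_const.div (measurable_const.sub hπt1meas)).stronglyMeasurable hIA'Y hI4]
    refine integral_congr_ae ?_
    filter_upwards [hμ0] with ω h; rw [← h]
  have e5 : ∫ ω, 1 / (1 - πt1 ω) * μt0 ω * (1 - A ω) ∂P
      = ∫ ω, 1 / (1 - πt1 ω) * μt0 ω * (1 - π1 ω) ∂P := by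
    rw [aipw_tower 𝓖X h𝓖X P (fun ω => 1 / (1 - πt1 ω) * μt0 ω) _
      ((measurable_const.div (measurable_const.sub hπt1meas)).mul hμt0meas).stronglyMeasurable
      hIA' hI5]
    refine integral_congr_ae ?_
    filter_upwards [hπ1c] with ω h; rw [← h]
  rw [hsplit, e2, e3, e4, e5,
    ← aipw_integral_five P _ _ _ _ _ hI1 hQ2 hQ3 hQ4 hQ5]
  -- final case analysis
  refine integral_congr_ae ?_
  rcases hdr with hcase | ⟨hc1, hc0⟩
  · filter_upwards [hcase, hoverlap] with ω h h2
    have h1M : 0 < 1 / M := by positivity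
    have hp1 : π1 ω ≠ 0 := ne_of_gt (lt_of_lt_of_le h1M h2.1)
    have hp0 : (1:ℝ) - π1 ω ≠ 0 := ne_of_gt (by linarith [h2.2])
    rw [h]
    field_simp
    ring
  · filter_upwards [hc1, hc0] with ω h1 h0
    rw [h1, h0]; ring
end

section
/- Let (Ω, 𝓕, P) be a probability space, 𝓖 ⊆ 𝓕 and 𝓖_W ⊆ 𝓖 sub-σ-algebras, φ a square-integrable 𝓖-measurable real random variable with E[φ] = 0, and g a version of E[φ | 𝓖_W]. Let R : Ω → {0,1} with E[R] = ρ ∈ (0,1) and σ(R) independent of 𝓖. Then the variance of φ_SSL := g + (R/ρ)(φ − g) satisfies the exact identity ρ·Var(φ_SSL) = E[φ²] − (1 − ρ)·E[g²]. In particular, along any sequence ρ_N → 0, ρ_N·Var(φ_SSL) → Var(φ) − Var(E[φ | 𝓖_W]). -/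
open MeasureTheory ProbabilityTheory Filter

lemma memℒp_two_condexp' {Ω : Type*} {m m0 : MeasurableSpace Ω} (hm : m ≤ m0)
    (P : Measure Ω) [IsProbabilityMeasure P] {f : Ω → ℝ} (hf : MemLp f 2 P) :
    MemLp (P[f|m]) 2 P := by
  have hfi : Integrable f P := hf.integrable one_le_two
  have heq : (condExpL2 ℝ ℝ hm (hf.toLp f) : Ω → ℝ) =ᵐ[P] P[f|m] := by
    refine ae_eq_condExp_of_forall_setIntegral_eq hm hfi
      (fun s hs hμs => integrableOn_condExpL2_of_measure_ne_top hm hμs.ne _)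
      (fun s hs hμs => ?_) (aestronglyMeasurable_condExpL2 hm _)
    rw [integral_condExpL2_eq hm (hf.toLp f) hs hμs.ne]
    exact setIntegral_congr_ae (hm s hs) (hf.coeFn_toLp.mono fun x hx _ => hx)
  exact (Lp.memLp _).ae_eq heq

lemma integrable_mul_of_memℒp_two' {Ω : Type*} [MeasurableSpace Ω] {P : Measure Ω}
    {f g : Ω → ℝ} (hf : MemLp f 2 P) (hg : MemLp g 2 P) :
    Integrable (fun ω => f ω * g ω) P := by
  have h := hg.smul (φ := f) hf (p := 2) (q := 2) (r := 1)
  rw [← memLp_one_iff_integrable]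
  simpa [Pi.smul_apply, smul_eq_mul, Pi.mul_def] using h

lemma ssl_key {Ω : Type*} (𝓖 𝓖W : MeasurableSpace Ω) [mF : MeasurableSpace Ω]
    (P : Measure Ω) [IsProbabilityMeasure P]
    (h𝓖 : 𝓖 ≤ mF) (h𝓖W : 𝓖W ≤ 𝓖)
    (φ g : Ω → ℝ)
    (hφmeas : Measurable[𝓖] φ) (hφL2 : MemLp φ 2 P)
    (hφmean : ∫ ω, φ ω ∂P = 0)
    (hgmeas : Measurable[𝓖W] g) (hg : g =ᵐ[P] P[φ|𝓖W])
    (ρ : ℝ) (hρ : ρ ∈ Set.Ioo (0 : ℝ) 1)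
    (R : Ω → ℝ) (hRmeas : Measurable R) (hRbin : ∀ ω, R ω = 0 ∨ R ω = 1)
    (hRmean : ∫ ω, R ω ∂P = ρ)
    (hindep : Indep (MeasurableSpace.comap R inferInstance) 𝓖 P) :
    ρ * variance (fun ω => g ω + (R ω / ρ) * (φ ω - g ω)) P
      = (∫ ω, (φ ω) ^ 2 ∂P) - (1 - ρ) * ∫ ω, (g ω) ^ 2 ∂P := by
  obtain ⟨hρ0, hρ1⟩ := hρ
  have hρne : ρ ≠ 0 := ne_of_gt hρ0
  have hmW : 𝓖W ≤ mF := h𝓖W.trans h𝓖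
  have hφint : Integrable φ P := hφL2.integrable one_le_two
  have hgL2 : MemLp g 2 P := (memℒp_two_condexp' hmW P hφL2).ae_eq hg.symm
  have hgint : Integrable g P := hgL2.integrable one_le_two
  have hgmean : ∫ ω, g ω ∂P = 0 := by
    rw [integral_congr_ae hg, integral_condExp hmW, hφmean]
  have hgmG : Measurable[𝓖] g := hgmeas.mono h𝓖W le_rfl
  -- L2 facts about h := φ - g
  have hhL2 : MemLp (fun ω => φ ω - g ω) 2 P := hφL2.sub hgL2
  have hhint : Integrable (fun ω => φ ω - g ω) P := hhL2.integrable one_le_two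
  have hhG : Measurable[𝓖] (fun ω => φ ω - g ω) := hφmeas.sub hgmG
  have hg2int : Integrable (fun ω => (g ω) ^ 2) P := hgL2.integrable_sq
  have hh2int : Integrable (fun ω => (φ ω - g ω) ^ 2) P := hhL2.integrable_sq
  have hgφint : Integrable (fun ω => g ω * φ ω) P := integrable_mul_of_memℒp_two' hgL2 hφL2
  have hghint : Integrable (fun ω => g ω * (φ ω - g ω)) P := integrable_mul_of_memℒp_two' hgL2 hhL2
  -- E[g φ] = E[g²]
  have hgφ : ∫ ω, g ω * φ ω ∂P = ∫ ω, (g ω) ^ 2 ∂P := by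
    have hpull : P[g * φ|𝓖W] =ᵐ[P] g * P[φ|𝓖W] :=
      condExp_mul_of_stronglyMeasurable_left hgmeas.stronglyMeasurable hgφint hφint
    calc ∫ ω, g ω * φ ω ∂P = ∫ ω, (P[g * φ|𝓖W]) ω ∂P := (integral_condExp hmW).symm
      _ = ∫ ω, (g * P[φ|𝓖W]) ω ∂P := integral_congr_ae hpull
      _ = ∫ ω, (g ω) ^ 2 ∂P := by
          refine integral_congr_ae ?_
          filter_upwards [hg] with ω hω
          simp [Pi.mul_apply, ← hω, sq]
  have Igh : ∫ ω, g ω * (φ ω - g ω) ∂P = 0 := by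
    have heq : (fun ω => g ω * (φ ω - g ω)) = fun ω => g ω * φ ω - (g ω) ^ 2 := by
      funext ω; ring
    rw [heq, integral_sub hgφint hg2int, hgφ, sub_self]
  have Ih2 : ∫ ω, (φ ω - g ω) ^ 2 ∂P = (∫ ω, (φ ω) ^ 2 ∂P) - ∫ ω, (g ω) ^ 2 ∂P := by
    have heq : (fun ω => (φ ω - g ω) ^ 2)
        = fun ω => (φ ω) ^ 2 - (2 * (g ω * φ ω) - (g ω) ^ 2) := by
      funext ω; ring
    have hInner : Integrable (fun ω => 2 * (g ω * φ ω) - (g ω) ^ 2) P :=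
      (hgφint.const_mul 2).sub hg2int
    rw [heq, integral_sub hφL2.integrable_sq hInner,
      integral_sub (hgφint.const_mul 2) hg2int, integral_const_mul, hgφ]
    ring
  have Ih : ∫ ω, (φ ω - g ω) ∂P = 0 := by
    rw [integral_sub hφint hgint, hφmean, hgmean, sub_self]
  -- independence tool
  have hRint : Integrable R P := by
    have hb : ∀ ω, ‖R ω‖ ≤ 1 := by
      intro ω; rcases hRbin ω with h | h <;> simp [h]
    exact (memLp_top_of_bound hRmeas.aestronglyMeasurable 1 (ae_of_all _ hb)).integrable le_top
  have hmul : ∀ u : Ω → ℝ, Measurable[𝓖] u → Integrable u P →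
      ∫ ω, R ω * u ω ∂P = ρ * ∫ ω, u ω ∂P := by
    intro u humeas huint
    have hIF : IndepFun R u P := indep_of_indep_of_le_right hindep humeas.comap_le
    rw [← hRmean]
    exact IndepFun.integral_mul_eq_mul_integral hIF hRint.aestronglyMeasurable huint.aestronglyMeasurable
  -- integrability of R·(...) terms
  have hRghint : Integrable (fun ω => R ω * (g ω * (φ ω - g ω))) P :=
    hghint.bdd_mul hRmeas.aestronglyMeasurable (c := 1)
      (ae_of_all _ fun ω => by rcases hRbin ω with h | h <;> simp [h])
  have hRh2int : Integrable (fun ω => R ω * (φ ω - g ω) ^ 2) P :=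
    hh2int.bdd_mul hRmeas.aestronglyMeasurable (c := 1)
      (ae_of_all _ fun ω => by rcases hRbin ω with h | h <;> simp [h])
  have hRhint : Integrable (fun ω => R ω * (φ ω - g ω)) P :=
    hhint.bdd_mul hRmeas.aestronglyMeasurable (c := 1)
      (ae_of_all _ fun ω => by rcases hRbin ω with h | h <;> simp [h])
  -- L2 of X
  have hRρtop : MemLp (fun ω => R ω / ρ) ⊤ P := by
    refine memLp_top_of_bound (hRmeas.div_const ρ).aestronglyMeasurable (1 / ρ)
      (ae_of_all _ fun ω => ?_)
    rcases hRbin ω with h | h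
    · simp [h, le_of_lt (one_div_pos.mpr hρ0), hρ0.le]
    · rw [h, Real.norm_eq_abs, abs_div, abs_one, abs_of_pos hρ0]
  have hXL2 : MemLp (fun ω => g ω + (R ω / ρ) * (φ ω - g ω)) 2 P := by
    refine hgL2.add ?_
    have h2 := hhL2.smul (φ := fun ω => R ω / ρ) hRρtop (p := ⊤) (q := 2) (r := 2)
    simpa [Pi.smul_apply, smul_eq_mul, Pi.mul_def] using h2
  -- mean of X is zero
  have hEX : ∫ ω, (g ω + (R ω / ρ) * (φ ω - g ω)) ∂P = 0 := by
    have heq : (fun ω => g ω + (R ω / ρ) * (φ ω - g ω))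
        = fun ω => g ω + (1 / ρ) * (R ω * (φ ω - g ω)) := by
      funext ω; ring
    rw [heq, integral_add hgint (hRhint.const_mul _), hgmean, integral_const_mul,
      hmul _ hhG hhint, Ih]
    ring
  -- second moment of X
  have hEX2 : ∫ ω, (g ω + (R ω / ρ) * (φ ω - g ω)) ^ 2 ∂P
      = (∫ ω, (g ω) ^ 2 ∂P) + (1 / ρ) * ((∫ ω, (φ ω) ^ 2 ∂P) - ∫ ω, (g ω) ^ 2 ∂P) := by
    have heq : (fun ω => (g ω + (R ω / ρ) * (φ ω - g ω)) ^ 2)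
        = fun ω => (g ω) ^ 2 + ((2 / ρ) * (R ω * (g ω * (φ ω - g ω)))
            + (1 / ρ ^ 2) * (R ω * (φ ω - g ω) ^ 2)) := by
      funext ω
      rcases hRbin ω with h | h <;> rw [h] <;> field_simp <;> ring
    have hI1 : Integrable (fun ω => (2 / ρ) * (R ω * (g ω * (φ ω - g ω)))) P :=
      hRghint.const_mul _
    have hI2 : Integrable (fun ω => (1 / ρ ^ 2) * (R ω * (φ ω - g ω) ^ 2)) P :=
      hRh2int.const_mul _
    have hI12 : Integrable (fun ω => (2 / ρ) * (R ω * (g ω * (φ ω - g ω)))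
        + (1 / ρ ^ 2) * (R ω * (φ ω - g ω) ^ 2)) P := hI1.add hI2
    rw [heq, integral_add hg2int hI12, integral_add hI1 hI2, integral_const_mul,
      integral_const_mul, hmul (fun ω => g ω * (φ ω - g ω)) (hgmG.mul hhG) hghint,
      hmul (fun ω => (φ ω - g ω) ^ 2) (hhG.pow_const 2) hh2int,
      Igh, Ih2]
    field_simp
    ring
  -- conclude
  rw [variance_eq_sub hXL2]
  have hEXpow : ∫ ω, ((fun ω => g ω + (R ω / ρ) * (φ ω - g ω)) ^ 2) ω ∂P
      = ∫ ω, (g ω + (R ω / ρ) * (φ ω - g ω)) ^ 2 ∂P := by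
    simp [Pi.pow_apply]
  rw [hEXpow, hEX2, hEX]
  field_simp
  ring

/-- **Variance identity for the semi-supervised influence function.**
For `𝓖W ⊆ 𝓖 ⊆ 𝓕`, square-integrable `𝓖`-measurable `φ` with `E[φ] = 0`, `g` a version of
`E[φ ∣ 𝓖W]`, and an MCAR labeling indicator `R ∈ {0,1}` with `E[R] = ρ ∈ (0,1)` and `σ(R)`
independent of `𝓖`: `ρ·Var(g + (R/ρ)(φ−g)) = E[φ²] − (1−ρ)·E[g²]`.  In particular, along any
sequence of labeling indicators with rates `ρ_N → 0`,
`ρ_N·Var(φ_SSL,N) → Var(φ) − Var(E[φ ∣ 𝓖W])`. -/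
theorem ssl_variance_identity
    {Ω : Type*} (𝓖 𝓖W : MeasurableSpace Ω) [mF : MeasurableSpace Ω]
    (P : Measure Ω) [IsProbabilityMeasure P]
    (h𝓖 : 𝓖 ≤ mF) (h𝓖W : 𝓖W ≤ 𝓖)
    (φ g : Ω → ℝ)
    (hφmeas : Measurable[𝓖] φ) (hφL2 : MemLp φ 2 P)
    (hφmean : ∫ ω, φ ω ∂P = 0)
    (hgmeas : Measurable[𝓖W] g) (hg : g =ᵐ[P] P[φ|𝓖W])
    (ρ : ℝ) (hρ : ρ ∈ Set.Ioo (0 : ℝ) 1)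
    (R : Ω → ℝ) (hRmeas : Measurable R) (hRbin : ∀ ω, R ω = 0 ∨ R ω = 1)
    (hRmean : ∫ ω, R ω ∂P = ρ)
    (hindep : Indep (MeasurableSpace.comap R inferInstance) 𝓖 P) :
    ρ * variance (fun ω => g ω + (R ω / ρ) * (φ ω - g ω)) P
      = (∫ ω, (φ ω) ^ 2 ∂P) - (1 - ρ) * ∫ ω, (g ω) ^ 2 ∂P ∧
    ∀ (ρs : ℕ → ℝ) (Rs : ℕ → Ω → ℝ),
      (∀ N, ρs N ∈ Set.Ioo (0 : ℝ) 1) →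
      (∀ N, Measurable (Rs N)) →
      (∀ N ω, Rs N ω = 0 ∨ Rs N ω = 1) →
      (∀ N, ∫ ω, Rs N ω ∂P = ρs N) →
      (∀ N, Indep (MeasurableSpace.comap (Rs N) inferInstance) 𝓖 P) →
      Tendsto ρs atTop (nhds 0) →
      Tendsto (fun N => ρs N * variance (fun ω => g ω + (Rs N ω / ρs N) * (φ ω - g ω)) P)
        atTop (nhds (variance φ P - variance g P)) := by
  constructor
  · exact ssl_key 𝓖 𝓖W P h𝓖 h𝓖W φ g hφmeas hφL2 hφmean hgmeas hg ρ hρ R hRmeas hRbin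
      hRmean hindep
  · intro ρs Rs hρs hRsmeas hRsbin hRsmean hRsindep hρslim
    have hkey : ∀ N, ρs N * variance (fun ω => g ω + (Rs N ω / ρs N) * (φ ω - g ω)) P
        = (∫ ω, (φ ω) ^ 2 ∂P) - (1 - ρs N) * ∫ ω, (g ω) ^ 2 ∂P := fun N =>
      ssl_key 𝓖 𝓖W P h𝓖 h𝓖W φ g hφmeas hφL2 hφmean hgmeas hg (ρs N) (hρs N) (Rs N)
        (hRsmeas N) (hRsbin N) (hRsmean N) (hRsindep N)
    have hmW : 𝓖W ≤ mF := h𝓖W.trans h𝓖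
    have hgL2 : MemLp g 2 P := (memℒp_two_condexp' hmW P hφL2).ae_eq hg.symm
    have hgmean : ∫ ω, g ω ∂P = 0 := by
      rw [integral_congr_ae hg, integral_condExp hmW, hφmean]
    have hvφ : variance φ P = ∫ ω, (φ ω) ^ 2 ∂P := by
      rw [variance_eq_sub hφL2]
      simp [Pi.pow_apply, hφmean]
    have hvg : variance g P = ∫ ω, (g ω) ^ 2 ∂P := by
      rw [variance_eq_sub hgL2]
      simp [Pi.pow_apply, hgmean]
    have hlim : Tendsto (fun N => (∫ ω, (φ ω) ^ 2 ∂P) - (1 - ρs N) * ∫ ω, (g ω) ^ 2 ∂P)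
        atTop (nhds ((∫ ω, (φ ω) ^ 2 ∂P) - (1 - 0) * ∫ ω, (g ω) ^ 2 ∂P)) :=
      tendsto_const_nhds.sub ((tendsto_const_nhds.sub hρslim).mul tendsto_const_nhds)
    rw [hvφ, hvg]
    simpa using hlim.congr fun N => (hkey N).symm
end

section
/- Let (Ω, 𝓕, P) be a probability space, 𝓖 ⊆ 𝓕 and 𝓖_W ⊆ 𝓖 sub-σ-algebras, φ a square-integrable 𝓖-measurable real random variable, and g a version of E[φ | 𝓖_W]. Let R : Ω → {0,1} with E[R] = ρ ∈ (0,1) and σ(R) independent of 𝓖. For any square-integrable 𝓖_W-measurable h, define T_h := h + (R/ρ)(φ − h). Then Var(T_h) = Var(T_g) + (1/ρ − 1)·E[(h − g)²]. Consequently, among all augmentations h ∈ L²(𝓖_W), the variance of T_h is uniquely minimized (up to almost-sure equality) at h = g = E[φ | 𝓖_W]. -/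
open MeasureTheory ProbabilityTheory

/-- **Variance optimality of the augmentation `g = E[φ ∣ 𝓖W]`.**
For `𝓖W ⊆ 𝓖 ⊆ 𝓕`, square-integrable `𝓖`-measurable `φ`, `g` a version of `E[φ ∣ 𝓖W]`, and
an MCAR labeling indicator `R ∈ {0,1}` with `E[R] = ρ ∈ (0,1)` and `σ(R)` independent of `𝓖`:
for any square-integrable `𝓖W`-measurable `h`, letting `T_h = h + (R/ρ)(φ − h)`,
`Var(T_h) = Var(T_g) + (1/ρ − 1)·E[(h − g)²]`; consequently the variance is minimized at
`h = g`, uniquely up to a.s. equality. -/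
theorem ssl_augmentation_variance_optimality
    {Ω : Type*} (𝓖 𝓖W : MeasurableSpace Ω) [mF : MeasurableSpace Ω]
    (P : Measure Ω) [IsProbabilityMeasure P]
    (h𝓖 : 𝓖 ≤ mF) (h𝓖W : 𝓖W ≤ 𝓖)
    (φ g : Ω → ℝ)
    (hφmeas : Measurable[𝓖] φ) (hφL2 : MemLp φ 2 P)
    (hgmeas : Measurable[𝓖W] g) (hg : g =ᵐ[P] P[φ|𝓖W])
    (ρ : ℝ) (hρ : ρ ∈ Set.Ioo (0 : ℝ) 1)
    (R : Ω → ℝ) (hRmeas : Measurable R) (hRbin : ∀ ω, R ω = 0 ∨ R ω = 1)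
    (hRmean : ∫ ω, R ω ∂P = ρ)
    (hindep : Indep (MeasurableSpace.comap R inferInstance) 𝓖 P) :
    ∀ h : Ω → ℝ, Measurable[𝓖W] h → MemLp h 2 P →
      variance (fun ω => h ω + (R ω / ρ) * (φ ω - h ω)) P
        = variance (fun ω => g ω + (R ω / ρ) * (φ ω - g ω)) P
          + (1 / ρ - 1) * ∫ ω, (h ω - g ω) ^ 2 ∂P ∧
      variance (fun ω => g ω + (R ω / ρ) * (φ ω - g ω)) P
        ≤ variance (fun ω => h ω + (R ω / ρ) * (φ ω - h ω)) P ∧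
      (variance (fun ω => h ω + (R ω / ρ) * (φ ω - h ω)) P
        = variance (fun ω => g ω + (R ω / ρ) * (φ ω - g ω)) P ↔ h =ᵐ[P] g) := by
  obtain ⟨hρ0, hρ1⟩ := hρ
  have hρne : ρ ≠ 0 := ne_of_gt hρ0
  have hm : 𝓖W ≤ mF := h𝓖W.trans h𝓖
  -- bounded functions of `R` are in `L^∞`
  have htop : ∀ u : ℝ → ℝ, Measurable u → MemLp (fun ω => u (R ω)) ⊤ P := by
    intro u hu
    refine memLp_top_of_bound ((hu.comp hRmeas).aestronglyMeasurable)
      (max ‖u 0‖ ‖u 1‖) (Filter.Eventually.of_forall fun ω => ?_)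
    rcases hRbin ω with h0 | h1
    · rw [h0]; exact le_max_left _ _
    · rw [h1]; exact le_max_right _ _
  have hRint : Integrable R P := ((htop id measurable_id).integrable le_top)
  -- `g` is in `L²`
  have hgL2 : MemLp g 2 P := by
    have hcl2 : ((condExpL2 ℝ ℝ hm (hφL2.toLp φ) : lpMeas ℝ ℝ 𝓖W 2 P) : Ω → ℝ) =ᵐ[P] P[φ|𝓖W] := by
      refine ae_eq_condExp_of_forall_setIntegral_eq hm (hφL2.integrable one_le_two)
        (fun s _ _ => (integrable_condExpL2_of_isFiniteMeasure hm).integrableOn)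
        (fun s hs hμs => ?_)
        (aestronglyMeasurable_condExpL2 hm _)
      rw [integral_condExpL2_eq hm (hφL2.toLp φ) hs hμs.ne]
      exact setIntegral_congr_ae (hm s hs) ((hφL2.coeFn_toLp).mono fun x hx _ => hx)
    exact (Lp.memLp _).ae_eq (hcl2.trans hg.symm)
  -- independence: expectation of products factorizes
  have key : ∀ u : ℝ → ℝ, Measurable u → ∀ kk : Ω → ℝ, Measurable[𝓖] kk →
      Integrable kk P →
      ∫ ω, u (R ω) * kk ω ∂P = (∫ ω, u (R ω) ∂P) * ∫ ω, kk ω ∂P := by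
    intro u hu kk hkk hkkint
    have huR : Integrable (fun ω => u (R ω)) P := (htop u hu).integrable le_top
    have hIF : IndepFun (fun ω => u (R ω)) kk P := by
      rw [IndepFun_iff_Indep]
      refine indep_of_indep_of_le_right (indep_of_indep_of_le_left hindep ?_) hkk.comap_le
      calc MeasurableSpace.comap (fun ω => u (R ω)) inferInstance
          = MeasurableSpace.comap R (MeasurableSpace.comap u inferInstance) :=
            (MeasurableSpace.comap_comp (f := u) (g := R)).symm
        _ ≤ MeasurableSpace.comap R inferInstance := MeasurableSpace.comap_mono hu.comap_le
    exact ProbabilityTheory.IndepFun.integral_fun_mul_eq_mul_integral hIF huR.aestronglyMeasurable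
      hkkint.aestronglyMeasurable
  -- products of L² functions are integrable
  have hmul2 : ∀ f1 f2 : Ω → ℝ, MemLp f1 2 P → MemLp f2 2 P →
      Integrable (fun ω => f1 ω * f2 ω) P := by
    intro f1 f2 h1 h2
    have : MemLp (f1 • f2) 1 P := h2.smul h1
    exact memLp_one_iff_integrable.mp this
  -- bounded function of R times L² is L²
  have hb2 : ∀ u : ℝ → ℝ, Measurable u → ∀ f : Ω → ℝ, MemLp f 2 P →
      MemLp (fun ω => u (R ω) * f ω) 2 P := by
    intro u hu f hf
    exact hf.smul (htop u hu)
  have hbi : ∀ u : ℝ → ℝ, Measurable u → ∀ f : Ω → ℝ, Integrable f P →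
      Integrable (fun ω => u (R ω) * f ω) P := by
    intro u hu f hf
    have : MemLp ((fun ω => u (R ω)) • f) 1 P :=
      (memLp_one_iff_integrable.mpr hf).smul (htop u hu)
    exact memLp_one_iff_integrable.mp this
  -- moments of 1 - R/ρ
  have hc0 : ∫ ω, (1 - R ω / ρ) ∂P = 0 := by
    rw [integral_sub (integrable_const 1) (hRint.div_const ρ), integral_div, hRmean]
    simp [hρne]
  have hc2 : ∫ ω, (1 - R ω / ρ) ^ 2 ∂P = 1 / ρ - 1 := by
    have hptw : ∀ ω, (1 - R ω / ρ) ^ 2 = 1 + (1 / ρ ^ 2 - 2 / ρ) * R ω := by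
      intro ω
      rcases hRbin ω with h' | h' <;> rw [h'] <;> field_simp <;> ring
    calc ∫ ω, (1 - R ω / ρ) ^ 2 ∂P = ∫ ω, (1 + (1 / ρ ^ 2 - 2 / ρ) * R ω) ∂P :=
          integral_congr_ae (Filter.Eventually.of_forall hptw)
      _ = 1 + (1 / ρ ^ 2 - 2 / ρ) * ρ := by
          rw [integral_add (integrable_const 1) (hRint.const_mul _), integral_const_mul,
            hRmean]
          simp
      _ = 1 / ρ - 1 := by field_simp; ring
  intro h hhmeas hhL2
  have hkmeasG : Measurable[𝓖] (fun ω => h ω - g ω) :=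
    ((hhmeas.sub hgmeas).mono h𝓖W le_rfl)
  have hkint : Integrable (fun ω => h ω - g ω) P := (hhL2.sub hgL2).integrable one_le_two
  -- orthogonality: E[(h-g)(φ-g)] = 0
  have hortho : ∫ ω, (h ω - g ω) * (φ ω - g ω) ∂P = 0 := by
    have hk2 : MemLp (h - g) 2 P := hhL2.sub hgL2
    have hφg2 : MemLp (φ - g) 2 P := hφL2.sub hgL2
    have hint1 : Integrable ((h - g) * (φ - g)) P := hmul2 _ _ hk2 hφg2
    have hint2 : Integrable (φ - g) P := hφg2.integrable one_le_two
    have hcond := condExp_mul_of_stronglyMeasurable_left (μ := P) (m := 𝓖W)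
      ((hhmeas.sub hgmeas).stronglyMeasurable) hint1 hint2
    have hgce : P[g|𝓖W] = g :=
      condExp_of_stronglyMeasurable hm hgmeas.stronglyMeasurable (hgL2.integrable one_le_two)
    have hzero : P[(h - g) * (φ - g)|𝓖W] =ᵐ[P] 0 := by
      refine hcond.trans ?_
      have hsub := condExp_sub (μ := P) (m := 𝓖W) (hφL2.integrable one_le_two)
        (hgL2.integrable one_le_two)
      filter_upwards [hsub, hg] with ω h1 h2
      simp only [Pi.mul_apply, Pi.sub_apply, Pi.zero_apply, h1, hgce, h2]
      ring
    calc ∫ ω, (h ω - g ω) * (φ ω - g ω) ∂P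
        = ∫ ω, ((h - g) * (φ - g)) ω ∂P := rfl
      _ = ∫ ω, (P[(h - g) * (φ - g)|𝓖W]) ω ∂P := (integral_condExp hm).symm
      _ = 0 := by rw [integral_congr_ae hzero]; simp
  -- L² facts
  have hThL2 : MemLp (fun ω => h ω + (R ω / ρ) * (φ ω - h ω)) 2 P :=
    hhL2.add (hb2 (fun x => x / ρ) (by fun_prop) _ (hφL2.sub hhL2))
  have hTgL2 : MemLp (fun ω => g ω + (R ω / ρ) * (φ ω - g ω)) 2 P :=
    hgL2.add (hb2 (fun x => x / ρ) (by fun_prop) _ (hφL2.sub hgL2))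
  have hDL2 : MemLp (fun ω => (1 - R ω / ρ) * (h ω - g ω)) 2 P :=
    hb2 (fun x => 1 - x / ρ) (by fun_prop) _ (hhL2.sub hgL2)
  have hDint : Integrable (fun ω => (1 - R ω / ρ) * (h ω - g ω)) P :=
    hDL2.integrable one_le_two
  -- E[D] = 0
  have hD0 : ∫ ω, (1 - R ω / ρ) * (h ω - g ω) ∂P = 0 := by
    have h1 := key (fun x => 1 - x / ρ) (by fun_prop) _ hkmeasG hkint
    rw [h1, hc0, zero_mul]
  -- E[D²] = (1/ρ - 1) E[(h-g)²]
  have hDsq : ∫ ω, ((1 - R ω / ρ) * (h ω - g ω)) ^ 2 ∂P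
      = (1 / ρ - 1) * ∫ ω, (h ω - g ω) ^ 2 ∂P := by
    have h1 := key (fun x => (1 - x / ρ) ^ 2) (by fun_prop) (fun ω => (h ω - g ω) ^ 2)
      (hkmeasG.pow_const 2) (hhL2.sub hgL2).integrable_sq
    calc ∫ ω, ((1 - R ω / ρ) * (h ω - g ω)) ^ 2 ∂P
        = ∫ ω, (1 - R ω / ρ) ^ 2 * (h ω - g ω) ^ 2 ∂P :=
          integral_congr_ae (Filter.Eventually.of_forall fun ω => by ring)
      _ = (1 / ρ - 1) * ∫ ω, (h ω - g ω) ^ 2 ∂P := by rw [h1, hc2]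
  -- E[T_g · D] = 0
  have hcross : ∫ ω, (g ω + (R ω / ρ) * (φ ω - g ω)) * ((1 - R ω / ρ) * (h ω - g ω)) ∂P
      = 0 := by
    have igk : Integrable (fun ω => g ω * (h ω - g ω)) P :=
      hmul2 _ _ hgL2 (hhL2.sub hgL2)
    have ikφ : Integrable (fun ω => (h ω - g ω) * (φ ω - g ω)) P :=
      hmul2 _ _ (hhL2.sub hgL2) (hφL2.sub hgL2)
    have e1 : ∫ ω, (1 - R ω / ρ) * (g ω * (h ω - g ω)) ∂P
        = (∫ ω, (1 - R ω / ρ) ∂P) * ∫ ω, g ω * (h ω - g ω) ∂P :=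
      key (fun x => 1 - x / ρ) (by fun_prop) (fun ω => g ω * (h ω - g ω))
        ((hgmeas.mono h𝓖W le_rfl).mul hkmeasG) igk
    have e2 : ∫ ω, (R ω / ρ * (1 - R ω / ρ)) * ((h ω - g ω) * (φ ω - g ω)) ∂P
        = (∫ ω, (R ω / ρ * (1 - R ω / ρ)) ∂P) * ∫ ω, (h ω - g ω) * (φ ω - g ω) ∂P :=
      key (fun x => x / ρ * (1 - x / ρ)) (by fun_prop)
        (fun ω => (h ω - g ω) * (φ ω - g ω))
        (hkmeasG.mul (hφmeas.sub (hgmeas.mono h𝓖W le_rfl))) ikφ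
    have i1 : Integrable (fun ω => (1 - R ω / ρ) * (g ω * (h ω - g ω))) P :=
      hbi (fun x => 1 - x / ρ) (by fun_prop) _ igk
    have i2 : Integrable (fun ω => (R ω / ρ * (1 - R ω / ρ)) * ((h ω - g ω) * (φ ω - g ω))) P :=
      hbi (fun x => x / ρ * (1 - x / ρ)) (by fun_prop) _ ikφ
    have hsplit : ∀ ω, (g ω + (R ω / ρ) * (φ ω - g ω)) * ((1 - R ω / ρ) * (h ω - g ω))
        = (1 - R ω / ρ) * (g ω * (h ω - g ω))
          + (R ω / ρ * (1 - R ω / ρ)) * ((h ω - g ω) * (φ ω - g ω)) := fun ω => by ring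
    rw [integral_congr_ae (Filter.Eventually.of_forall hsplit),
      integral_add i1 i2, e1, e2, hc0, hortho]
    ring
  -- the variance identity
  have hvar : variance (fun ω => h ω + (R ω / ρ) * (φ ω - h ω)) P
      = variance (fun ω => g ω + (R ω / ρ) * (φ ω - g ω)) P
        + (1 / ρ - 1) * ∫ ω, (h ω - g ω) ^ 2 ∂P := by
    rw [variance_eq_sub hThL2, variance_eq_sub hTgL2]
    have hmean : ∫ ω, (h ω + (R ω / ρ) * (φ ω - h ω)) ∂P
        = ∫ ω, (g ω + (R ω / ρ) * (φ ω - g ω)) ∂P := by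
      have e : ∀ ω, h ω + (R ω / ρ) * (φ ω - h ω)
          = (g ω + (R ω / ρ) * (φ ω - g ω)) + (1 - R ω / ρ) * (h ω - g ω) := fun ω => by ring
      rw [integral_congr_ae (Filter.Eventually.of_forall e),
        integral_add (hTgL2.integrable one_le_two) hDint, hD0, add_zero]
    have hsq : ∫ ω, (h ω + (R ω / ρ) * (φ ω - h ω)) ^ 2 ∂P
        = ∫ ω, (g ω + (R ω / ρ) * (φ ω - g ω)) ^ 2 ∂P
          + (1 / ρ - 1) * ∫ ω, (h ω - g ω) ^ 2 ∂P := by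
      have e : ∀ ω, (h ω + (R ω / ρ) * (φ ω - h ω)) ^ 2
          = (g ω + (R ω / ρ) * (φ ω - g ω)) ^ 2
            + (2 * ((g ω + (R ω / ρ) * (φ ω - g ω)) * ((1 - R ω / ρ) * (h ω - g ω)))
              + ((1 - R ω / ρ) * (h ω - g ω)) ^ 2) := fun ω => by ring
      have iTgD : Integrable (fun ω => (g ω + (R ω / ρ) * (φ ω - g ω))
          * ((1 - R ω / ρ) * (h ω - g ω))) P := hmul2 _ _ hTgL2 hDL2
      have iTgD2 : Integrable (fun ω => 2 * ((g ω + (R ω / ρ) * (φ ω - g ω))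
          * ((1 - R ω / ρ) * (h ω - g ω)))) P := iTgD.const_mul 2
      have iD2 : Integrable (fun ω => ((1 - R ω / ρ) * (h ω - g ω)) ^ 2) P :=
        hDL2.integrable_sq
      have isum : Integrable (fun ω => 2 * ((g ω + (R ω / ρ) * (φ ω - g ω))
          * ((1 - R ω / ρ) * (h ω - g ω))) + ((1 - R ω / ρ) * (h ω - g ω)) ^ 2) P :=
        iTgD2.add iD2
      rw [integral_congr_ae (Filter.Eventually.of_forall e),
        integral_add hTgL2.integrable_sq isum,
        integral_add iTgD2 iD2,
        integral_const_mul, hcross, hDsq]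
      ring
    show (∫ ω, (h ω + (R ω / ρ) * (φ ω - h ω)) ^ 2 ∂P)
        - (∫ ω, (h ω + (R ω / ρ) * (φ ω - h ω)) ∂P) ^ 2
      = (∫ ω, (g ω + (R ω / ρ) * (φ ω - g ω)) ^ 2 ∂P)
          - (∫ ω, (g ω + (R ω / ρ) * (φ ω - g ω)) ∂P) ^ 2
        + (1 / ρ - 1) * ∫ ω, (h ω - g ω) ^ 2 ∂P
    rw [hsq, hmean]; ring
  refine ⟨hvar, ?_, ?_⟩
  · have h2 : 0 ≤ ∫ ω, (h ω - g ω) ^ 2 ∂P := integral_nonneg fun ω => sq_nonneg _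
    have h3 : (0:ℝ) ≤ 1 / ρ - 1 := by
      rw [sub_nonneg, le_div_iff₀ hρ0]; linarith
    rw [hvar]
    nlinarith [mul_nonneg h3 h2]
  · constructor
    · intro heq
      have hI : (1 / ρ - 1) * ∫ ω, (h ω - g ω) ^ 2 ∂P = 0 := by
        rw [heq] at hvar; linarith
      have h3 : (1:ℝ) / ρ - 1 ≠ 0 := by
        have : (1:ℝ) < 1 / ρ := by rw [lt_div_iff₀ hρ0]; linarith
        linarith
      have hIz : ∫ ω, (h ω - g ω) ^ 2 ∂P = 0 := (mul_eq_zero.mp hI).resolve_left h3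
      have hae := (integral_eq_zero_iff_of_nonneg (fun ω => sq_nonneg (h ω - g ω))
        (hhL2.sub hgL2).integrable_sq).mp hIz
      filter_upwards [hae] with ω hω
      simp only [Pi.zero_apply] at hω
      have h4 : h ω - g ω = 0 := by
        have := pow_eq_zero_iff (two_ne_zero) |>.mp hω
        exact this
      linarith
    · intro hae
      have hIz : ∫ ω, (h ω - g ω) ^ 2 ∂P = 0 := by
        have h0 : (fun ω => (h ω - g ω) ^ 2) =ᵐ[P] 0 := by
          filter_upwards [hae] with ω hω
          simp [hω]
        rw [integral_congr_ae h0]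
        simp
      rw [hvar, hIz, mul_zero, add_zero]
end

section
/- Let (Ω, 𝓕, P) be a probability space, A : Ω → {0,1}, Y : Ω → ℝ with |Y| ≤ M almost surely, 𝓖_X ⊆ 𝓖_W ⊆ 𝓕 nested sub-σ-algebras, and R : Ω → {0,1} with E[R] = ρ ∈ (0,1) and σ(R) independent of σ(Y, A) ⊔ 𝓖_W. Let π₁ = E[A | 𝓖_X] with π₁ ∈ [1/M, 1 − 1/M] a.s., π₀ = 1 − π₁, and μ₁, μ₀ the true outcome regressions with μₐπₐ = E[1{A=a}Y | 𝓖_X] a.s.; set Δ* := E[μ₁ − μ₀]. Let π̂₁, π̂₀, μ̂₁, μ̂₀ be 𝓖_X-measurable working functions with π̂₁, π̂₀ ∈ [1/M, 1] and |μ̂₁|, |μ̂₀| ≤ M a.s., and let Π̂₁, Π̂₀, m̂₁, m̂₀ be arbitrary 𝓖_W-measurable functions bounded by M in absolute value. Define V̂ := μ̂₁ + Π̂₁(m̂₁ − μ̂₁)/π̂₁ − μ̂₀ − Π̂₀(m̂₀ − μ̂₀)/π̂₀ + (R/ρ)[ {AY − Aμ̂₁ − Π̂₁m̂₁ + Π̂₁μ̂₁}/π̂₁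 − {(1−A)Y − (1−A)μ̂₀ − Π̂₀m̂₀ + Π̂₀μ̂₀}/π̂₀ ]. Then E[V̂] − Δ* = E[(π₁ − π̂₁)(μ₁ − μ̂₁)/π̂₁] − E[(π₀ − π̂₀)(μ₀ − μ̂₀)/π̂₀]; in particular, the bias of V̂ does not depend on the imputation functions Π̂₁, Π̂₀, m̂₁, m̂₀. -/
open MeasureTheory ProbabilityTheory

lemma abs_div_le_of_bdd {M C x s : ℝ} (hM : 0 < M) (hx : |x| ≤ C) (hs : 1 / M ≤ s) :
    |x / s| ≤ C * M := by
  have hC : 0 ≤ C := (abs_nonneg x).trans hx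
  have hs0 : 0 < s := lt_of_lt_of_le (by positivity) hs
  have hinv : 1 / s ≤ M := by
    rw [div_le_iff₀ hs0]
    have h1 : M * (1 / M) ≤ M * s := by
      exact mul_le_mul_of_nonneg_left hs hM.le
    have h2 : M * (1 / M) = 1 := by field_simp
    linarith
  calc |x / s| = |x| * (1 / s) := by
        rw [abs_div, abs_of_pos hs0, div_eq_mul_one_div]
    _ ≤ C * M := mul_le_mul hx hinv (by positivity) hC

lemma split6 {Ω : Type*} [MeasurableSpace Ω] {P : Measure Ω}
    (f1 f2 f3 f4 f5 f6 : Ω → ℝ)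
    (h1 : Integrable f1 P) (h2 : Integrable f2 P) (h3 : Integrable f3 P)
    (h4 : Integrable f4 P) (h5 : Integrable f5 P) (h6 : Integrable f6 P) :
    ∫ ω, (f1 ω - f2 ω + f3 ω - f4 ω - f5 ω + f6 ω) ∂P
      = ∫ ω, f1 ω ∂P - ∫ ω, f2 ω ∂P + ∫ ω, f3 ω ∂P - ∫ ω, f4 ω ∂P
        - ∫ ω, f5 ω ∂P + ∫ ω, f6 ω ∂P := by
  have i12 : Integrable (fun ω => f1 ω - f2 ω) P := h1.sub h2
  have i123 : Integrable (fun ω => f1 ω - f2 ω + f3 ω) P := i12.add h3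
  have i1234 : Integrable (fun ω => f1 ω - f2 ω + f3 ω - f4 ω) P := i123.sub h4
  have i12345 : Integrable (fun ω => f1 ω - f2 ω + f3 ω - f4 ω - f5 ω) P := i1234.sub h5
  rw [integral_add i12345 h6, integral_sub i1234 h5, integral_sub i123 h4,
    integral_add i12 h3, integral_sub h1 h2]

lemma pullout {Ω : Type*} {m mF : MeasurableSpace Ω} (hm : m ≤ mF) {P : @Measure Ω mF}
    [IsProbabilityMeasure P] {g f : Ω → ℝ} (hg : StronglyMeasurable[m] g)
    (hfg : Integrable (fun ω => g ω * f ω) P) (hf : Integrable f P) :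
    ∫ ω, g ω * f ω ∂P = ∫ ω, g ω * (P[f|m]) ω ∂P := by
  have h1 : P[g * f|m] =ᵐ[P] g * P[f|m] := condExp_mul_of_stronglyMeasurable_left hg hfg hf
  calc ∫ ω, g ω * f ω ∂P = ∫ ω, (P[g * f|m]) ω ∂P := (integral_condExp hm).symm
    _ = ∫ ω, (g * P[f|m]) ω ∂P := integral_congr_ae h1
    _ = _ := rfl


/-- **Bias identity for the SMMAL functional.**
With nested σ-algebras `𝓖X ⊆ 𝓖W ⊆ 𝓕`, binary treatment `A`, bounded outcome `Y`, MCAR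
labeling indicator `R` (`E[R] = ρ ∈ (0,1)`, `σ(R)` independent of `σ(Y) ⊔ σ(A) ⊔ 𝓖W`),
true nuisances `π₁ = E[A ∣ 𝓖X] ∈ [1/M,1−1/M]`, `π₀ = 1−π₁`, `μₐπₐ = E[1{A=a}Y ∣ 𝓖X]`,
and `Δ* = E[μ₁−μ₀]`, the SMMAL functional `V̂` built from `𝓖X`-measurable working models
`π̂ₐ ∈ [1/M,1]`, `|μ̂ₐ| ≤ M` and arbitrary `𝓖W`-measurable imputations `Π̂ₐ, m̂ₐ` bounded
by `M` satisfies `E[V̂] − Δ* = E[(π₁−π̂₁)(μ₁−μ̂₁)/π̂₁] − E[(π₀−π̂₀)(μ₀−μ̂₀)/π̂₀]`;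
in particular the bias does not depend on the imputation models. -/
theorem smmal_bias_identity
    {Ω : Type*} (𝓖X 𝓖W : MeasurableSpace Ω) [mF : MeasurableSpace Ω]
    (P : Measure Ω) [IsProbabilityMeasure P]
    (h𝓖X : 𝓖X ≤ 𝓖W) (h𝓖W : 𝓖W ≤ mF)
    (M : ℝ) (hM : 1 < M)
    (A Y R : Ω → ℝ)
    (hA : Measurable A) (hAbin : ∀ ω, A ω = 0 ∨ A ω = 1)
    (hYmeas : Measurable Y) (hYbdd : ∀ᵐ ω ∂P, |Y ω| ≤ M)
    (ρ : ℝ) (hρ : ρ ∈ Set.Ioo (0 : ℝ) 1)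
    (hRmeas : Measurable R) (hRbin : ∀ ω, R ω = 0 ∨ R ω = 1)
    (hRmean : ∫ ω, R ω ∂P = ρ)
    (hindep : Indep (MeasurableSpace.comap R inferInstance)
      (MeasurableSpace.comap Y inferInstance ⊔ MeasurableSpace.comap A inferInstance ⊔ 𝓖W) P)
    (π1 μ1 μ0 : Ω → ℝ)
    (hπ1meas : Measurable[𝓖X] π1) (hπ1 : π1 =ᵐ[P] P[A|𝓖X])
    (hoverlap : ∀ᵐ ω ∂P, π1 ω ∈ Set.Icc (1 / M) (1 - 1 / M))
    (hμ1meas : Measurable[𝓖X] μ1) (hμ0meas : Measurable[𝓖X] μ0)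
    (hμ1 : (fun ω => μ1 ω * π1 ω) =ᵐ[P] P[fun ω => A ω * Y ω|𝓖X])
    (hμ0 : (fun ω => μ0 ω * (1 - π1 ω)) =ᵐ[P] P[fun ω => (1 - A ω) * Y ω|𝓖X])
    (πh1 πh0 μh1 μh0 : Ω → ℝ)
    (hπh1meas : Measurable[𝓖X] πh1) (hπh0meas : Measurable[𝓖X] πh0)
    (hπh1b : ∀ᵐ ω ∂P, πh1 ω ∈ Set.Icc (1 / M) 1)
    (hπh0b : ∀ᵐ ω ∂P, πh0 ω ∈ Set.Icc (1 / M) 1)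
    (hμh1meas : Measurable[𝓖X] μh1) (hμh0meas : Measurable[𝓖X] μh0)
    (hμh1b : ∀ᵐ ω ∂P, |μh1 ω| ≤ M) (hμh0b : ∀ᵐ ω ∂P, |μh0 ω| ≤ M)
    (Pih1 Pih0 mh1 mh0 : Ω → ℝ)
    (hPih1meas : Measurable[𝓖W] Pih1) (hPih0meas : Measurable[𝓖W] Pih0)
    (hmh1meas : Measurable[𝓖W] mh1) (hmh0meas : Measurable[𝓖W] mh0)
    (hPih1b : ∀ᵐ ω ∂P, |Pih1 ω| ≤ M) (hPih0b : ∀ᵐ ω ∂P, |Pih0 ω| ≤ M)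
    (hmh1b : ∀ᵐ ω ∂P, |mh1 ω| ≤ M) (hmh0b : ∀ᵐ ω ∂P, |mh0 ω| ≤ M) :
    (∫ ω, (μh1 ω + Pih1 ω * (mh1 ω - μh1 ω) / πh1 ω
        - μh0 ω - Pih0 ω * (mh0 ω - μh0 ω) / πh0 ω
        + (R ω / ρ) *
          ((A ω * Y ω - A ω * μh1 ω - Pih1 ω * mh1 ω + Pih1 ω * μh1 ω) / πh1 ω
          - ((1 - A ω) * Y ω - (1 - A ω) * μh0 ω - Pih0 ω * mh0 ω + Pih0 ω * μh0 ω)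
              / πh0 ω)) ∂P)
      - (∫ ω, (μ1 ω - μ0 ω) ∂P)
    = (∫ ω, (π1 ω - πh1 ω) * (μ1 ω - μh1 ω) / πh1 ω ∂P)
      - ∫ ω, ((1 - π1 ω) - πh0 ω) * (μ0 ω - μh0 ω) / πh0 ω ∂P := by
  have hM0 : (0:ℝ) < M := lt_trans one_pos hM
  have hm : 𝓖X ≤ mF := h𝓖X.trans h𝓖W
  -- pointwise facts about A and R
  have hA01 : ∀ ω, 0 ≤ A ω ∧ A ω ≤ 1 := by
    intro ω; rcases hAbin ω with h | h <;> simp [h]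
  have hAabs : ∀ ω, |A ω| ≤ 1 := by
    intro ω; rw [abs_le]; constructor <;> nlinarith [(hA01 ω).1, (hA01 ω).2]
  have h1Aabs : ∀ ω, |1 - A ω| ≤ 1 := by
    intro ω; rw [abs_le]; constructor <;> nlinarith [(hA01 ω).1, (hA01 ω).2]
  have hRabs : ∀ ω, |R ω| ≤ 1 := by
    intro ω; rcases hRbin ω with h | h <;> simp [h]
  -- product of absolute value bounds
  have mulb : ∀ {x y c d : ℝ}, |x| ≤ c → |y| ≤ d → 0 ≤ c → |x * y| ≤ c * d := by
    intro x y c d hx hy hc; rw [abs_mul]; exact mul_le_mul hx hy (abs_nonneg _) hc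
  have hinvb : ∀ s : ℝ, 1 / M ≤ s → |s⁻¹| ≤ M := by
    intro s hs
    have hs0 : 0 < s := lt_of_lt_of_le (by positivity) hs
    rw [abs_of_pos (inv_pos.mpr hs0), ← one_div, div_le_iff₀ hs0]
    have h1 : M * (1 / M) ≤ M * s := mul_le_mul_of_nonneg_left hs hM0.le
    have h2 : M * (1 / M) = 1 := by field_simp
    linarith
  -- global measurability
  have mπ1 : Measurable π1 := hπ1meas.mono hm le_rfl
  have mμ1 : Measurable μ1 := hμ1meas.mono hm le_rfl
  have mμ0 : Measurable μ0 := hμ0meas.mono hm le_rfl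
  have mπh1 : Measurable πh1 := hπh1meas.mono hm le_rfl
  have mπh0 : Measurable πh0 := hπh0meas.mono hm le_rfl
  have mμh1 : Measurable μh1 := hμh1meas.mono hm le_rfl
  have mμh0 : Measurable μh0 := hμh0meas.mono hm le_rfl
  have mPih1 : Measurable Pih1 := hPih1meas.mono h𝓖W le_rfl
  have mPih0 : Measurable Pih0 := hPih0meas.mono h𝓖W le_rfl
  have mmh1 : Measurable mh1 := hmh1meas.mono h𝓖W le_rfl
  have mmh0 : Measurable mh0 := hmh0meas.mono h𝓖W le_rfl
  -- integrability from boundedness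
  have mkInt : ∀ {f : Ω → ℝ} {C : ℝ}, Measurable f → (∀ᵐ ω ∂P, |f ω| ≤ C) →
      Integrable f P := by
    intro f C hf hb
    refine (integrable_const C).mono' hf.aestronglyMeasurable ?_
    simpa [Real.norm_eq_abs] using hb
  -- bounds for the true outcome regressions
  have hAYb : ∀ᵐ ω ∂P, |A ω * Y ω| ≤ M := by
    filter_upwards [hYbdd] with ω hy
    have := mulb (hAabs ω) hy zero_le_one
    linarith
  have h1AYb : ∀ᵐ ω ∂P, |(1 - A ω) * Y ω| ≤ M := by
    filter_upwards [hYbdd] with ω hy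
    have := mulb (h1Aabs ω) hy zero_le_one
    linarith
  have hcond1 : ∀ᵐ ω ∂P, |(P[fun ω => A ω * Y ω|𝓖X]) ω| ≤ M := by
    have := ae_bdd_condExp_of_ae_bdd (m := 𝓖X) (μ := P) (R := ⟨M, hM0.le⟩)
      (f := fun ω => A ω * Y ω) hAYb
    exact this
  have hcond0 : ∀ᵐ ω ∂P, |(P[fun ω => (1 - A ω) * Y ω|𝓖X]) ω| ≤ M := by
    have := ae_bdd_condExp_of_ae_bdd (m := 𝓖X) (μ := P) (R := ⟨M, hM0.le⟩)
      (f := fun ω => (1 - A ω) * Y ω) h1AYb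
    exact this
  have hμ1π : ∀ᵐ ω ∂P, |μ1 ω * π1 ω| ≤ M := by
    filter_upwards [hμ1, hcond1] with ω h e
    rw [h]; exact e
  have hμ0π : ∀ᵐ ω ∂P, |μ0 ω * (1 - π1 ω)| ≤ M := by
    filter_upwards [hμ0, hcond0] with ω h e
    rw [h]; exact e
  have hμ1b : ∀ᵐ ω ∂P, |μ1 ω| ≤ M * M := by
    filter_upwards [hμ1π, hoverlap] with ω h hov
    have h1 : 1 / M ≤ π1 ω := hov.1
    have hp : 0 < π1 ω := lt_of_lt_of_le (by positivity) h1
    rw [abs_mul, abs_of_pos hp] at h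
    have h3 : |μ1 ω| ≤ M / π1 ω := by rw [le_div_iff₀ hp]; exact h
    have h4 : M / π1 ω ≤ M * M := by
      rw [div_le_iff₀ hp]
      have h5 : M * M * (1 / M) ≤ M * M * π1 ω :=
        mul_le_mul_of_nonneg_left h1 (by positivity)
      have h6 : M * M * (1 / M) = M := by field_simp
      linarith
    linarith
  have hμ0b : ∀ᵐ ω ∂P, |μ0 ω| ≤ M * M := by
    filter_upwards [hμ0π, hoverlap] with ω h hov
    have h1 : 1 / M ≤ 1 - π1 ω := by have := hov.2; linarith
    have hp : 0 < 1 - π1 ω := lt_of_lt_of_le (by positivity) h1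
    rw [abs_mul, abs_of_pos hp] at h
    have h3 : |μ0 ω| ≤ M / (1 - π1 ω) := by rw [le_div_iff₀ hp]; exact h
    have h4 : M / (1 - π1 ω) ≤ M * M := by
      rw [div_le_iff₀ hp]
      have h5 : M * M * (1 / M) ≤ M * M * (1 - π1 ω) :=
        mul_le_mul_of_nonneg_left h1 (by positivity)
      have h6 : M * M * (1 / M) = M := by field_simp
      linarith
    linarith
  have hπ1abs : ∀ᵐ ω ∂P, |π1 ω| ≤ 1 := by
    filter_upwards [hoverlap] with ω hov
    have h1 : 1 / M ≤ π1 ω := hov.1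
    have hp : 0 < π1 ω := lt_of_lt_of_le (by positivity) h1
    rw [abs_of_pos hp]
    have hMi : 0 < 1 / M := by positivity
    have := hov.2; linarith
  have h1π1abs : ∀ᵐ ω ∂P, |1 - π1 ω| ≤ 1 := by
    filter_upwards [hoverlap] with ω hov
    have h1 : 1 / M ≤ π1 ω := hov.1
    have hp : 0 < π1 ω := lt_of_lt_of_le (by positivity) h1
    have hMi : 0 < 1 / M := by positivity
    rw [abs_le]; constructor <;> [skip; skip] <;> nlinarith [hov.2]
  -- integrable atoms
  have iμh1 : Integrable μh1 P := mkInt mμh1 hμh1b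
  have iμh0 : Integrable μh0 P := mkInt mμh0 hμh0b
  have iμ1 : Integrable μ1 P := mkInt mμ1 hμ1b
  have iμ0 : Integrable μ0 P := mkInt mμ0 hμ0b
  have iA : Integrable A P := mkInt hA (Filter.Eventually.of_forall hAabs)
  have i1A : Integrable (fun ω => 1 - A ω) P :=
    mkInt (measurable_const.sub hA) (Filter.Eventually.of_forall h1Aabs)
  have iAY : Integrable (fun ω => A ω * Y ω) P := mkInt (hA.mul hYmeas) hAYb
  have i1AY : Integrable (fun ω => (1 - A ω) * Y ω) P :=
    mkInt ((measurable_const.sub hA).mul hYmeas) h1AYb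
  have iT1 : Integrable (fun ω => Pih1 ω * (mh1 ω - μh1 ω) / πh1 ω) P := by
    refine mkInt (C := M * (M + M) * M) ((mPih1.mul (mmh1.sub mμh1)).div mπh1) ?_
    filter_upwards [hPih1b, hmh1b, hμh1b, hπh1b] with ω h1 h2 h3 h4
    refine abs_div_le_of_bdd hM0 ?_ h4.1
    refine mulb h1 ?_ hM0.le
    exact (abs_sub _ _).trans (by linarith)
  have iT0 : Integrable (fun ω => Pih0 ω * (mh0 ω - μh0 ω) / πh0 ω) P := by
    refine mkInt (C := M * (M + M) * M) ((mPih0.mul (mmh0.sub mμh0)).div mπh0) ?_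
    filter_upwards [hPih0b, hmh0b, hμh0b, hπh0b] with ω h1 h2 h3 h4
    refine abs_div_le_of_bdd hM0 ?_ h4.1
    refine mulb h1 ?_ hM0.le
    exact (abs_sub _ _).trans (by linarith)
  have iB : Integrable (fun ω => μh1 ω + Pih1 ω * (mh1 ω - μh1 ω) / πh1 ω
      - μh0 ω - Pih0 ω * (mh0 ω - μh0 ω) / πh0 ω) P :=
    ((iμh1.add iT1).sub iμh0).sub iT0
  -- bounds for the U-terms
  have hU1b : ∀ᵐ ω ∂P, |(A ω * Y ω - A ω * μh1 ω - Pih1 ω * mh1 ω + Pih1 ω * μh1 ω)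
      / πh1 ω| ≤ (2 * M + 2 * (M * M)) * M := by
    filter_upwards [hYbdd, hμh1b, hPih1b, hmh1b, hπh1b] with ω hy h3 h1 h2 h4
    refine abs_div_le_of_bdd hM0 ?_ h4.1
    have e1 : |A ω * Y ω| ≤ 1 * M := mulb (hAabs ω) hy zero_le_one
    have e2 : |A ω * μh1 ω| ≤ 1 * M := mulb (hAabs ω) h3 zero_le_one
    have e3 : |Pih1 ω * mh1 ω| ≤ M * M := mulb h1 h2 hM0.le
    have e4 : |Pih1 ω * μh1 ω| ≤ M * M := mulb h1 h3 hM0.le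
    have t1 := abs_add_le (A ω * Y ω - A ω * μh1 ω - Pih1 ω * mh1 ω) (Pih1 ω * μh1 ω)
    have t2 := abs_sub (A ω * Y ω - A ω * μh1 ω) (Pih1 ω * mh1 ω)
    have t3 := abs_sub (A ω * Y ω) (A ω * μh1 ω)
    linarith
  have hU0b : ∀ᵐ ω ∂P, |((1 - A ω) * Y ω - (1 - A ω) * μh0 ω - Pih0 ω * mh0 ω
      + Pih0 ω * μh0 ω) / πh0 ω| ≤ (2 * M + 2 * (M * M)) * M := by
    filter_upwards [hYbdd, hμh0b, hPih0b, hmh0b, hπh0b] with ω hy h3 h1 h2 h4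
    refine abs_div_le_of_bdd hM0 ?_ h4.1
    have e1 : |(1 - A ω) * Y ω| ≤ 1 * M := mulb (h1Aabs ω) hy zero_le_one
    have e2 : |(1 - A ω) * μh0 ω| ≤ 1 * M := mulb (h1Aabs ω) h3 zero_le_one
    have e3 : |Pih0 ω * mh0 ω| ≤ M * M := mulb h1 h2 hM0.le
    have e4 : |Pih0 ω * μh0 ω| ≤ M * M := mulb h1 h3 hM0.le
    have t1 := abs_add_le ((1 - A ω) * Y ω - (1 - A ω) * μh0 ω - Pih0 ω * mh0 ω)
      (Pih0 ω * μh0 ω)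
    have t2 := abs_sub ((1 - A ω) * Y ω - (1 - A ω) * μh0 ω) (Pih0 ω * mh0 ω)
    have t3 := abs_sub ((1 - A ω) * Y ω) ((1 - A ω) * μh0 ω)
    linarith
  have mU1d : Measurable (fun ω => (A ω * Y ω - A ω * μh1 ω - Pih1 ω * mh1 ω
      + Pih1 ω * μh1 ω) / πh1 ω) :=
    ((((hA.mul hYmeas).sub (hA.mul mμh1)).sub (mPih1.mul mmh1)).add
      (mPih1.mul mμh1)).div mπh1
  have mU0d : Measurable (fun ω => ((1 - A ω) * Y ω - (1 - A ω) * μh0 ω - Pih0 ω * mh0 ω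
      + Pih0 ω * μh0 ω) / πh0 ω) :=
    (((((measurable_const.sub hA).mul hYmeas).sub
      ((measurable_const.sub hA).mul mμh0)).sub (mPih0.mul mmh0)).add
      (mPih0.mul mμh0)).div mπh0
  have mG : Measurable (fun ω =>
      (A ω * Y ω - A ω * μh1 ω - Pih1 ω * mh1 ω + Pih1 ω * μh1 ω) / πh1 ω
      - ((1 - A ω) * Y ω - (1 - A ω) * μh0 ω - Pih0 ω * mh0 ω + Pih0 ω * μh0 ω)
          / πh0 ω) := mU1d.sub mU0d
  have hGb : ∀ᵐ ω ∂P, |(A ω * Y ω - A ω * μh1 ω - Pih1 ω * mh1 ω + Pih1 ω * μh1 ω)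
      / πh1 ω - ((1 - A ω) * Y ω - (1 - A ω) * μh0 ω - Pih0 ω * mh0 ω
      + Pih0 ω * μh0 ω) / πh0 ω| ≤ 2 * ((2 * M + 2 * (M * M)) * M) := by
    filter_upwards [hU1b, hU0b] with ω h1 h0
    have := abs_sub ((A ω * Y ω - A ω * μh1 ω - Pih1 ω * mh1 ω + Pih1 ω * μh1 ω) / πh1 ω)
      (((1 - A ω) * Y ω - (1 - A ω) * μh0 ω - Pih0 ω * mh0 ω + Pih0 ω * μh0 ω) / πh0 ω)
    linarith
  have iG : Integrable (fun ω =>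
      (A ω * Y ω - A ω * μh1 ω - Pih1 ω * mh1 ω + Pih1 ω * μh1 ω) / πh1 ω
      - ((1 - A ω) * Y ω - (1 - A ω) * μh0 ω - Pih0 ω * mh0 ω + Pih0 ω * μh0 ω)
          / πh0 ω) P := mkInt mG hGb
  have iRG : Integrable (fun ω => R ω *
      ((A ω * Y ω - A ω * μh1 ω - Pih1 ω * mh1 ω + Pih1 ω * μh1 ω) / πh1 ω
      - ((1 - A ω) * Y ω - (1 - A ω) * μh0 ω - Pih0 ω * mh0 ω + Pih0 ω * μh0 ω)
          / πh0 ω)) P := by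
    refine mkInt (C := 1 * (2 * ((2 * M + 2 * (M * M)) * M))) (hRmeas.mul mG) ?_
    filter_upwards [hGb] with ω hg
    have := mulb (hRabs ω) hg zero_le_one
    linarith
  -- integrable atoms for the H-decomposition
  have ig1f1 : Integrable (fun ω => (πh1 ω)⁻¹ * (A ω * Y ω)) P := by
    refine mkInt (C := M * M) (mπh1.inv.mul (hA.mul hYmeas)) ?_
    filter_upwards [hπh1b, hAYb] with ω h1 h2
    exact mulb (hinvb _ h1.1) h2 hM0.le
  have ig2f2 : Integrable (fun ω => μh1 ω * (πh1 ω)⁻¹ * A ω) P := by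
    refine mkInt (C := M * M * 1) ((mμh1.mul mπh1.inv).mul hA) ?_
    filter_upwards [hπh1b, hμh1b] with ω h1 h2
    exact mulb (mulb h2 (hinvb _ h1.1) hM0.le) (hAabs ω) (by positivity)
  have ig3f3 : Integrable (fun ω => (πh0 ω)⁻¹ * ((1 - A ω) * Y ω)) P := by
    refine mkInt (C := M * M) (mπh0.inv.mul ((measurable_const.sub hA).mul hYmeas)) ?_
    filter_upwards [hπh0b, h1AYb] with ω h1 h2
    exact mulb (hinvb _ h1.1) h2 hM0.le
  have ig4f4 : Integrable (fun ω => μh0 ω * (πh0 ω)⁻¹ * (1 - A ω)) P := by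
    refine mkInt (C := M * M * 1) ((mμh0.mul mπh0.inv).mul (measurable_const.sub hA)) ?_
    filter_upwards [hπh0b, hμh0b] with ω h1 h2
    exact mulb (mulb h2 (hinvb _ h1.1) hM0.le) (h1Aabs ω) (by positivity)
  have ic1 : Integrable (fun ω => (πh1 ω)⁻¹ * (μ1 ω * π1 ω)) P := by
    refine mkInt (C := M * M) (mπh1.inv.mul (mμ1.mul mπ1)) ?_
    filter_upwards [hπh1b, hμ1π] with ω h1 h2
    exact mulb (hinvb _ h1.1) h2 hM0.le
  have ic2 : Integrable (fun ω => μh1 ω * (πh1 ω)⁻¹ * π1 ω) P := by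
    refine mkInt (C := M * M * 1) ((mμh1.mul mπh1.inv).mul mπ1) ?_
    filter_upwards [hπh1b, hμh1b, hπ1abs] with ω h1 h2 h3
    exact mulb (mulb h2 (hinvb _ h1.1) hM0.le) h3 (by positivity)
  have ic3 : Integrable (fun ω => (πh0 ω)⁻¹ * (μ0 ω * (1 - π1 ω))) P := by
    refine mkInt (C := M * M) (mπh0.inv.mul (mμ0.mul (measurable_const.sub mπ1))) ?_
    filter_upwards [hπh0b, hμ0π] with ω h1 h2
    exact mulb (hinvb _ h1.1) h2 hM0.le
  have ic4 : Integrable (fun ω => μh0 ω * (πh0 ω)⁻¹ * (1 - π1 ω)) P := by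
    refine mkInt (C := M * M * 1) ((mμh0.mul mπh0.inv).mul (measurable_const.sub mπ1)) ?_
    filter_upwards [hπh0b, hμh0b, h1π1abs] with ω h1 h2 h3
    exact mulb (mulb h2 (hinvb _ h1.1) hM0.le) h3 (by positivity)
  -- integrable RHS terms
  have iR1 : Integrable (fun ω => (π1 ω - πh1 ω) * (μ1 ω - μh1 ω) / πh1 ω) P := by
    refine mkInt (C := 2 * (M * M + M) * M) (((mπ1.sub mπh1).mul (mμ1.sub mμh1)).div mπh1) ?_
    filter_upwards [hπh1b, hπ1abs, hμ1b, hμh1b] with ω h1 h2 h3 h4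
    refine abs_div_le_of_bdd hM0 ?_ h1.1
    have t1 : |π1 ω - πh1 ω| ≤ 2 := by
      have := abs_sub (π1 ω) (πh1 ω)
      have h5 : |πh1 ω| ≤ 1 := by
        rw [abs_of_pos (lt_of_lt_of_le (by positivity) h1.1)]; exact h1.2
      linarith
    have t2 : |μ1 ω - μh1 ω| ≤ M * M + M := by
      have := abs_sub (μ1 ω) (μh1 ω); linarith
    exact mulb t1 t2 (by norm_num)
  have iR2 : Integrable (fun ω => ((1 - π1 ω) - πh0 ω) * (μ0 ω - μh0 ω) / πh0 ω) P := by
    refine mkInt (C := 2 * (M * M + M) * M)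
      ((((measurable_const.sub mπ1).sub mπh0).mul (mμ0.sub mμh0)).div mπh0) ?_
    filter_upwards [hπh0b, h1π1abs, hμ0b, hμh0b] with ω h1 h2 h3 h4
    refine abs_div_le_of_bdd hM0 ?_ h1.1
    have t1 : |(1 - π1 ω) - πh0 ω| ≤ 2 := by
      have := abs_sub (1 - π1 ω) (πh0 ω)
      have h5 : |πh0 ω| ≤ 1 := by
        rw [abs_of_pos (lt_of_lt_of_le (by positivity) h1.1)]; exact h1.2
      linarith
    have t2 : |μ0 ω - μh0 ω| ≤ M * M + M := by
      have := abs_sub (μ0 ω) (μh0 ω); linarith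
    exact mulb t1 t2 (by norm_num)
  -- conditional expectation of 1 - A
  have hce1A : P[fun ω => 1 - A ω|𝓖X] =ᵐ[P] fun ω => 1 - π1 ω := by
    have h2 : P[(fun _ => (1:ℝ)) - A|𝓖X] =ᵐ[P] P[fun _ => (1:ℝ)|𝓖X] - P[A|𝓖X] :=
      condExp_sub (integrable_const (1:ℝ)) iA 𝓖X
    have h3 : P[fun _ => (1:ℝ)|𝓖X] = fun _ => (1:ℝ) := condExp_const hm (1:ℝ)
    filter_upwards [h2, hπ1] with ω h2ω h1ω
    show (P[(fun _ => (1:ℝ)) - A|𝓖X]) ω = 1 - π1 ω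
    rw [h2ω, Pi.sub_apply, h3, h1ω]
  -- pull-out identities
  have p1 : ∫ ω, (πh1 ω)⁻¹ * (A ω * Y ω) ∂P = ∫ ω, (πh1 ω)⁻¹ * (μ1 ω * π1 ω) ∂P := by
    have h := pullout (m := 𝓖X) (g := fun ω => (πh1 ω)⁻¹) (f := fun ω => A ω * Y ω)
      hm (hπh1meas.inv).stronglyMeasurable ig1f1 iAY
    rw [h]
    refine integral_congr_ae ?_
    filter_upwards [hμ1] with ω hω
    rw [← hω]
  have p2 : ∫ ω, μh1 ω * (πh1 ω)⁻¹ * A ω ∂P = ∫ ω, μh1 ω * (πh1 ω)⁻¹ * π1 ω ∂P := by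
    have h := pullout (m := 𝓖X) (g := fun ω => μh1 ω * (πh1 ω)⁻¹) (f := A)
      hm (hμh1meas.mul hπh1meas.inv).stronglyMeasurable ig2f2 iA
    rw [h]
    refine integral_congr_ae ?_
    filter_upwards [hπ1] with ω hω
    rw [← hω]
  have p3 : ∫ ω, (πh0 ω)⁻¹ * ((1 - A ω) * Y ω) ∂P
      = ∫ ω, (πh0 ω)⁻¹ * (μ0 ω * (1 - π1 ω)) ∂P := by
    have h := pullout (m := 𝓖X) (g := fun ω => (πh0 ω)⁻¹) (f := fun ω => (1 - A ω) * Y ω)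
      hm (hπh0meas.inv).stronglyMeasurable ig3f3 i1AY
    rw [h]
    refine integral_congr_ae ?_
    filter_upwards [hμ0] with ω hω
    rw [← hω]
  have p4 : ∫ ω, μh0 ω * (πh0 ω)⁻¹ * (1 - A ω) ∂P
      = ∫ ω, μh0 ω * (πh0 ω)⁻¹ * (1 - π1 ω) ∂P := by
    have h := pullout (m := 𝓖X) (g := fun ω => μh0 ω * (πh0 ω)⁻¹) (f := fun ω => 1 - A ω)
      hm (hμh0meas.mul hπh0meas.inv).stronglyMeasurable ig4f4 i1A
    rw [h]
    refine integral_congr_ae ?_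
    filter_upwards [hce1A] with ω hω
    rw [hω]
  -- independence: E[R * G] = rho * E[G]
  have hRGprod : ∫ ω, R ω *
      ((A ω * Y ω - A ω * μh1 ω - Pih1 ω * mh1 ω + Pih1 ω * μh1 ω) / πh1 ω
      - ((1 - A ω) * Y ω - (1 - A ω) * μh0 ω - Pih0 ω * mh0 ω + Pih0 ω * μh0 ω)
          / πh0 ω) ∂P
      = ρ * ∫ ω,
      ((A ω * Y ω - A ω * μh1 ω - Pih1 ω * mh1 ω + Pih1 ω * μh1 ω) / πh1 ω
      - ((1 - A ω) * Y ω - (1 - A ω) * μh0 ω - Pih0 ω * mh0 ω + Pih0 ω * μh0 ω)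
          / πh0 ω) ∂P := by
    set m' : MeasurableSpace Ω := MeasurableSpace.comap Y inferInstance
      ⊔ MeasurableSpace.comap A inferInstance ⊔ 𝓖W with hm'def
    have hYm' : Measurable[m'] Y :=
      measurable_iff_comap_le.mpr (le_trans le_sup_left le_sup_left)
    have hAm' : Measurable[m'] A :=
      measurable_iff_comap_le.mpr (le_trans le_sup_right le_sup_left)
    have hW' : 𝓖W ≤ m' := le_sup_right
    have hX' : 𝓖X ≤ m' := h𝓖X.trans hW'
    have m'πh1 : Measurable[m'] πh1 := hπh1meas.mono hX' le_rfl
    have m'πh0 : Measurable[m'] πh0 := hπh0meas.mono hX' le_rfl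
    have m'μh1 : Measurable[m'] μh1 := hμh1meas.mono hX' le_rfl
    have m'μh0 : Measurable[m'] μh0 := hμh0meas.mono hX' le_rfl
    have m'Pih1 : Measurable[m'] Pih1 := hPih1meas.mono hW' le_rfl
    have m'Pih0 : Measurable[m'] Pih0 := hPih0meas.mono hW' le_rfl
    have m'mh1 : Measurable[m'] mh1 := hmh1meas.mono hW' le_rfl
    have m'mh0 : Measurable[m'] mh0 := hmh0meas.mono hW' le_rfl
    have hGm' : Measurable[m'] (fun ω =>
        (A ω * Y ω - A ω * μh1 ω - Pih1 ω * mh1 ω + Pih1 ω * μh1 ω) / πh1 ω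
        - ((1 - A ω) * Y ω - (1 - A ω) * μh0 ω - Pih0 ω * mh0 ω + Pih0 ω * μh0 ω)
            / πh0 ω) := by
      refine Measurable.sub (Measurable.div ?_ m'πh1) (Measurable.div ?_ m'πh0)
      · exact (((hAm'.mul hYm').sub (hAm'.mul m'μh1)).sub (m'Pih1.mul m'mh1)).add
          (m'Pih1.mul m'μh1)
      · exact ((((measurable_const.sub hAm').mul hYm').sub
          ((measurable_const.sub hAm').mul m'μh0)).sub (m'Pih0.mul m'mh0)).add
          (m'Pih0.mul m'μh0)
    have hIF : IndepFun R (fun ω =>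
        (A ω * Y ω - A ω * μh1 ω - Pih1 ω * mh1 ω + Pih1 ω * μh1 ω) / πh1 ω
        - ((1 - A ω) * Y ω - (1 - A ω) * μh0 ω - Pih0 ω * mh0 ω + Pih0 ω * μh0 ω)
            / πh0 ω) P :=
      indep_of_indep_of_le_right hindep ((@measurable_iff_comap_le _ _ m' _ _).mp hGm')
    have h := IndepFun.integral_mul_eq_mul_integral hIF hRmeas.aestronglyMeasurable mG.aestronglyMeasurable
    rw [← hRmean]
    exact h
  have hρ0 : ρ ≠ 0 := ne_of_gt hρ.1
  -- the pointwise a.e. identity for the final step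
  have hae : (fun ω => μh1 ω - μh0 ω + (πh1 ω)⁻¹ * (μ1 ω * π1 ω)
        - μh1 ω * (πh1 ω)⁻¹ * π1 ω - (πh0 ω)⁻¹ * (μ0 ω * (1 - π1 ω))
        + μh0 ω * (πh0 ω)⁻¹ * (1 - π1 ω))
      =ᵐ[P] fun ω => (π1 ω - πh1 ω) * (μ1 ω - μh1 ω) / πh1 ω
        - ((1 - π1 ω) - πh0 ω) * (μ0 ω - μh0 ω) / πh0 ω + (μ1 ω - μ0 ω) := by
    filter_upwards [hπh1b, hπh0b] with ω h1 h0
    have hne1 : πh1 ω ≠ 0 := ne_of_gt (lt_of_lt_of_le (by positivity) h1.1)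
    have hne0 : πh0 ω ≠ 0 := ne_of_gt (lt_of_lt_of_le (by positivity) h0.1)
    field_simp
    ring
  -- main computation
  have hE : (∫ ω, (μh1 ω + Pih1 ω * (mh1 ω - μh1 ω) / πh1 ω
        - μh0 ω - Pih0 ω * (mh0 ω - μh0 ω) / πh0 ω
        + (R ω / ρ) *
          ((A ω * Y ω - A ω * μh1 ω - Pih1 ω * mh1 ω + Pih1 ω * μh1 ω) / πh1 ω
          - ((1 - A ω) * Y ω - (1 - A ω) * μh0 ω - Pih0 ω * mh0 ω + Pih0 ω * μh0 ω)
              / πh0 ω)) ∂P)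
      = (∫ ω, ((π1 ω - πh1 ω) * (μ1 ω - μh1 ω) / πh1 ω
          - ((1 - π1 ω) - πh0 ω) * (μ0 ω - μh0 ω) / πh0 ω + (μ1 ω - μ0 ω)) ∂P) := by
    calc
      (∫ ω, (μh1 ω + Pih1 ω * (mh1 ω - μh1 ω) / πh1 ω
          - μh0 ω - Pih0 ω * (mh0 ω - μh0 ω) / πh0 ω
          + (R ω / ρ) *
            ((A ω * Y ω - A ω * μh1 ω - Pih1 ω * mh1 ω + Pih1 ω * μh1 ω) / πh1 ω
            - ((1 - A ω) * Y ω - (1 - A ω) * μh0 ω - Pih0 ω * mh0 ω + Pih0 ω * μh0 ω)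
                / πh0 ω)) ∂P)
        = ∫ ω, ((μh1 ω + Pih1 ω * (mh1 ω - μh1 ω) / πh1 ω
          - μh0 ω - Pih0 ω * (mh0 ω - μh0 ω) / πh0 ω)
          + ρ⁻¹ * (R ω *
            ((A ω * Y ω - A ω * μh1 ω - Pih1 ω * mh1 ω + Pih1 ω * μh1 ω) / πh1 ω
            - ((1 - A ω) * Y ω - (1 - A ω) * μh0 ω - Pih0 ω * mh0 ω + Pih0 ω * μh0 ω)
                / πh0 ω))) ∂P :=
          integral_congr_ae (Filter.Eventually.of_forall fun ω => by ring)
      _ = (∫ ω, (μh1 ω + Pih1 ω * (mh1 ω - μh1 ω) / πh1 ω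
          - μh0 ω - Pih0 ω * (mh0 ω - μh0 ω) / πh0 ω) ∂P)
          + ∫ ω, ρ⁻¹ * (R ω *
            ((A ω * Y ω - A ω * μh1 ω - Pih1 ω * mh1 ω + Pih1 ω * μh1 ω) / πh1 ω
            - ((1 - A ω) * Y ω - (1 - A ω) * μh0 ω - Pih0 ω * mh0 ω + Pih0 ω * μh0 ω)
                / πh0 ω)) ∂P := integral_add iB (iRG.const_mul ρ⁻¹)
      _ = (∫ ω, (μh1 ω + Pih1 ω * (mh1 ω - μh1 ω) / πh1 ω
          - μh0 ω - Pih0 ω * (mh0 ω - μh0 ω) / πh0 ω) ∂P)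
          + ρ⁻¹ * ∫ ω, R ω *
            ((A ω * Y ω - A ω * μh1 ω - Pih1 ω * mh1 ω + Pih1 ω * μh1 ω) / πh1 ω
            - ((1 - A ω) * Y ω - (1 - A ω) * μh0 ω - Pih0 ω * mh0 ω + Pih0 ω * μh0 ω)
                / πh0 ω) ∂P := by rw [integral_const_mul]
      _ = (∫ ω, (μh1 ω + Pih1 ω * (mh1 ω - μh1 ω) / πh1 ω
          - μh0 ω - Pih0 ω * (mh0 ω - μh0 ω) / πh0 ω) ∂P)
          + ρ⁻¹ * (ρ * ∫ ω,
            ((A ω * Y ω - A ω * μh1 ω - Pih1 ω * mh1 ω + Pih1 ω * μh1 ω) / πh1 ω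
            - ((1 - A ω) * Y ω - (1 - A ω) * μh0 ω - Pih0 ω * mh0 ω + Pih0 ω * μh0 ω)
                / πh0 ω) ∂P) := by rw [hRGprod]
      _ = (∫ ω, (μh1 ω + Pih1 ω * (mh1 ω - μh1 ω) / πh1 ω
          - μh0 ω - Pih0 ω * (mh0 ω - μh0 ω) / πh0 ω) ∂P)
          + ∫ ω,
            ((A ω * Y ω - A ω * μh1 ω - Pih1 ω * mh1 ω + Pih1 ω * μh1 ω) / πh1 ω
            - ((1 - A ω) * Y ω - (1 - A ω) * μh0 ω - Pih0 ω * mh0 ω + Pih0 ω * μh0 ω)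
                / πh0 ω) ∂P := by rw [← mul_assoc, inv_mul_cancel₀ hρ0, one_mul]
      _ = ∫ ω, ((μh1 ω + Pih1 ω * (mh1 ω - μh1 ω) / πh1 ω
          - μh0 ω - Pih0 ω * (mh0 ω - μh0 ω) / πh0 ω)
          + ((A ω * Y ω - A ω * μh1 ω - Pih1 ω * mh1 ω + Pih1 ω * μh1 ω) / πh1 ω
            - ((1 - A ω) * Y ω - (1 - A ω) * μh0 ω - Pih0 ω * mh0 ω + Pih0 ω * μh0 ω)
                / πh0 ω)) ∂P := (integral_add iB iG).symm
      _ = ∫ ω, (μh1 ω - μh0 ω + (πh1 ω)⁻¹ * (A ω * Y ω)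
          - μh1 ω * (πh1 ω)⁻¹ * A ω - (πh0 ω)⁻¹ * ((1 - A ω) * Y ω)
          + μh0 ω * (πh0 ω)⁻¹ * (1 - A ω)) ∂P :=
          integral_congr_ae (Filter.Eventually.of_forall fun ω => by
            simp only [div_eq_mul_inv]; ring)
      _ = (∫ ω, μh1 ω ∂P) - (∫ ω, μh0 ω ∂P) + (∫ ω, (πh1 ω)⁻¹ * (A ω * Y ω) ∂P)
          - (∫ ω, μh1 ω * (πh1 ω)⁻¹ * A ω ∂P) - (∫ ω, (πh0 ω)⁻¹ * ((1 - A ω) * Y ω) ∂P)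
          + ∫ ω, μh0 ω * (πh0 ω)⁻¹ * (1 - A ω) ∂P :=
          split6 _ _ _ _ _ _ iμh1 iμh0 ig1f1 ig2f2 ig3f3 ig4f4
      _ = (∫ ω, μh1 ω ∂P) - (∫ ω, μh0 ω ∂P) + (∫ ω, (πh1 ω)⁻¹ * (μ1 ω * π1 ω) ∂P)
          - (∫ ω, μh1 ω * (πh1 ω)⁻¹ * π1 ω ∂P)
          - (∫ ω, (πh0 ω)⁻¹ * (μ0 ω * (1 - π1 ω)) ∂P)
          + ∫ ω, μh0 ω * (πh0 ω)⁻¹ * (1 - π1 ω) ∂P := by rw [p1, p2, p3, p4]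
      _ = ∫ ω, (μh1 ω - μh0 ω + (πh1 ω)⁻¹ * (μ1 ω * π1 ω)
          - μh1 ω * (πh1 ω)⁻¹ * π1 ω - (πh0 ω)⁻¹ * (μ0 ω * (1 - π1 ω))
          + μh0 ω * (πh0 ω)⁻¹ * (1 - π1 ω)) ∂P :=
          (split6 _ _ _ _ _ _ iμh1 iμh0 ic1 ic2 ic3 ic4).symm
      _ = ∫ ω, ((π1 ω - πh1 ω) * (μ1 ω - μh1 ω) / πh1 ω
          - ((1 - π1 ω) - πh0 ω) * (μ0 ω - μh0 ω) / πh0 ω + (μ1 ω - μ0 ω)) ∂P :=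
          integral_congr_ae hae
  have hsplit : ∫ ω, ((π1 ω - πh1 ω) * (μ1 ω - μh1 ω) / πh1 ω
        - ((1 - π1 ω) - πh0 ω) * (μ0 ω - μh0 ω) / πh0 ω + (μ1 ω - μ0 ω)) ∂P
      = (∫ ω, (π1 ω - πh1 ω) * (μ1 ω - μh1 ω) / πh1 ω ∂P)
        - (∫ ω, ((1 - π1 ω) - πh0 ω) * (μ0 ω - μh0 ω) / πh0 ω ∂P)
        + ∫ ω, (μ1 ω - μ0 ω) ∂P := by
    have i12 : Integrable (fun ω => (π1 ω - πh1 ω) * (μ1 ω - μh1 ω) / πh1 ω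
        - ((1 - π1 ω) - πh0 ω) * (μ0 ω - μh0 ω) / πh0 ω) P := iR1.sub iR2
    have idiff : Integrable (fun ω => μ1 ω - μ0 ω) P := iμ1.sub iμ0
    have hsub : ∫ ω, ((π1 ω - πh1 ω) * (μ1 ω - μh1 ω) / πh1 ω
          - ((1 - π1 ω) - πh0 ω) * (μ0 ω - μh0 ω) / πh0 ω) ∂P
        = (∫ ω, (π1 ω - πh1 ω) * (μ1 ω - μh1 ω) / πh1 ω ∂P)
          - ∫ ω, ((1 - π1 ω) - πh0 ω) * (μ0 ω - μh0 ω) / πh0 ω ∂P :=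
      integral_sub iR1 iR2
    rw [integral_add i12 idiff, hsub]
  rw [hE, hsplit]
  ring
end

section
/- Let (Ω, 𝓕, P) be a probability space, X : Ω → ℝ^{p+1} with ‖X‖_∞ ≤ M almost surely, A : Ω → {0,1}, and let g(u) = 1/(1 + e^{−u}) be the logistic function. Fix a ∈ {0,1} and suppose the propensity score model is correct: E[A | σ(X)] = g(α*ᵀX) almost surely for some α* ∈ ℝ^{p+1}. Let w : ℝ^{p+1} → [0, M] be any measurable weight function. Then α* is a global minimizer of the calibrated loss L(α) := E[ w(X) · { (a − A)·αᵀX + 1{A = a}·exp((−1)^a · αᵀX) } ] over α ∈ ℝ^{p+1}; that is, L(α) ≥ L(α*) for all α ∈ ℝ^{p+1}. -/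
open MeasureTheory ProbabilityTheory

section Aux

lemma key_pointwise (a s t : ℝ) (ha : a = 0 ∨ a = 1) :
    0 ≤ (a - 1 / (1 + Real.exp (-t))) * (s - t)
      + ((1 - a) + (2 * a - 1) * (1 / (1 + Real.exp (-t))))
        * (Real.exp ((1 - 2 * a) * s) - Real.exp ((1 - 2 * a) * t)) := by
  have het : 0 < Real.exp (-t) := Real.exp_pos _
  have h1t : 0 < 1 + Real.exp (-t) := by linarith
  set u := Real.exp (-t) with hu
  set v := (1 + u)⁻¹ with hv
  have hvpos : 0 < v := inv_pos.2 h1t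
  have huv : 1 - v = u * v := by
    rw [hv]; field_simp; ring
  rcases ha with rfl | rfl
  · have hut : u * Real.exp t = 1 := by rw [hu, ← Real.exp_add]; simp
    have hus : u * Real.exp s = Real.exp (s - t) := by rw [hu, ← Real.exp_add]; ring_nf
    have hadd := Real.add_one_le_exp (s - t)
    have key2 : s - t ≤ u * (Real.exp s - Real.exp t) := by nlinarith
    have h1 : (1:ℝ) + -v = u * v := by linarith
    norm_num
    rw [← hv, h1]
    nlinarith [mul_le_mul_of_nonneg_left key2 hvpos.le]
  · have hk : u * (t - s + 1) ≤ Real.exp (-s) := by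
      have h := Real.add_one_le_exp (t - s)
      have : u * Real.exp (t - s) = Real.exp (-s) := by rw [hu, ← Real.exp_add]; ring_nf
      nlinarith
    have inner : 0 ≤ u * (s - t) + (Real.exp (-s) - u) := by nlinarith
    norm_num
    rw [← hv, ← hu, huv]
    nlinarith [mul_nonneg hvpos.le inner]

lemma integrable_of_abs_bdd {Ω : Type*} [MeasurableSpace Ω] {P : Measure Ω} [IsFiniteMeasure P]
    {f : Ω → ℝ} (hf : AEStronglyMeasurable f P) (C : ℝ) (h : ∀ᵐ ω ∂P, |f ω| ≤ C) :
    Integrable f P :=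
  ⟨hf, HasFiniteIntegral.of_bounded (C := C) (by simpa [Real.norm_eq_abs] using h)⟩

lemma sum_abs_bound {p : ℕ} (β x : Fin (p + 1) → ℝ) {M : ℝ} (hx : ∀ i, |x i| ≤ M) :
    |∑ i, β i * x i| ≤ (∑ i, |β i|) * M := by
  calc |∑ i, β i * x i| ≤ ∑ i, |β i * x i| := Finset.abs_sum_le_sum_abs _ _
    _ ≤ ∑ i, |β i| * M := Finset.sum_le_sum fun i _ => by
        rw [abs_mul]; exact mul_le_mul_of_nonneg_left (hx i) (abs_nonneg _)
    _ = (∑ i, |β i|) * M := (Finset.sum_mul _ _ _).symm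

lemma abs_comb_le {wv c s ι e M K E : ℝ} (h1 : |wv| ≤ M) (h2 : |c| ≤ 1) (h3 : |s| ≤ K)
    (h4 : |ι| ≤ 1) (h5 : |e| ≤ E) : |wv * (c * s + ι * e)| ≤ M * (K + E) := by
  have habs : |c * s + ι * e| ≤ K + E := by
    calc |c * s + ι * e| ≤ |c * s| + |ι * e| := abs_add_le _ _
      _ = |c| * |s| + |ι| * |e| := by rw [abs_mul, abs_mul]
      _ ≤ K + E := by nlinarith [abs_nonneg c, abs_nonneg s, abs_nonneg ι, abs_nonneg e]
  calc |wv * (c * s + ι * e)| = |wv| * |c * s + ι * e| := abs_mul _ _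
    _ ≤ M * (K + E) :=
        mul_le_mul h1 habs (abs_nonneg _) (le_trans (abs_nonneg _) h1)

end Aux

/-- **Model robustness of the calibrated propensity-score loss.**
If the logistic propensity model is correct, `E[A ∣ σ(X)] = g(α*ᵀX)` a.s. with
`g(u) = 1/(1+e^{−u})`, then for any measurable weight `w : ℝ^{p+1} → [0,M]` and fixed
`a ∈ {0,1}`, the calibrated loss
`L(α) = E[w(X)·{(a−A)·αᵀX + 1{A=a}·exp((−1)^a·αᵀX)}]` is globally minimized at `α = α*`.
(For `a ∈ {0,1}` one has `(−1)^a = 1 − 2a`.) -/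
theorem calibrated_ps_loss_minimizer
    {Ω : Type*} [mF : MeasurableSpace Ω]
    (P : Measure Ω) [IsProbabilityMeasure P]
    (p : ℕ) (X : Ω → (Fin (p + 1) → ℝ)) (hX : Measurable X)
    (M : ℝ) (hM : 0 < M)
    (hXbdd : ∀ᵐ ω ∂P, ∀ i, |X ω i| ≤ M)
    (A : Ω → ℝ) (hA : Measurable A) (hAbin : ∀ ω, A ω = 0 ∨ A ω = 1)
    (a : ℝ) (ha : a = 0 ∨ a = 1)
    (αs : Fin (p + 1) → ℝ)
    (hPS : P[A|MeasurableSpace.comap X inferInstance] =ᵐ[P]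
      fun ω => 1 / (1 + Real.exp (-(∑ i, αs i * X ω i))))
    (w : (Fin (p + 1) → ℝ) → ℝ) (hw : Measurable w)
    (hwb : ∀ x, w x ∈ Set.Icc (0 : ℝ) M) :
    ∀ α : Fin (p + 1) → ℝ,
      (∫ ω, w (X ω) * ((a - A ω) * (∑ i, αs i * X ω i)
          + (if A ω = a then (1 : ℝ) else 0) * Real.exp ((1 - 2 * a) * ∑ i, αs i * X ω i)) ∂P)
      ≤ ∫ ω, w (X ω) * ((a - A ω) * (∑ i, α i * X ω i)
          + (if A ω = a then (1 : ℝ) else 0) * Real.exp ((1 - 2 * a) * ∑ i, α i * X ω i)) ∂P := by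
  intro α
  have hm : MeasurableSpace.comap X inferInstance ≤ mF := hX.comap_le
  -- basic functions on the feature space
  set sA : (Fin (p + 1) → ℝ) → ℝ := fun x => ∑ i, α i * x i with hsA_def
  set sS : (Fin (p + 1) → ℝ) → ℝ := fun x => ∑ i, αs i * x i with hsS_def
  have hsA_meas : Measurable sA :=
    Finset.measurable_sum Finset.univ fun i _ => by fun_prop
  have hsS_meas : Measurable sS :=
    Finset.measurable_sum Finset.univ fun i _ => by fun_prop
  set eA : (Fin (p + 1) → ℝ) → ℝ := fun x => Real.exp ((1 - 2 * a) * sA x) with heA_def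
  set eS : (Fin (p + 1) → ℝ) → ℝ := fun x => Real.exp ((1 - 2 * a) * sS x) with heS_def
  have heA_meas : Measurable eA := Real.measurable_exp.comp (hsA_meas.const_mul _)
  have heS_meas : Measurable eS := Real.measurable_exp.comp (hsS_meas.const_mul _)
  set φ₁ : (Fin (p + 1) → ℝ) → ℝ :=
    fun x => w x * (a * (sA x - sS x) + (1 - a) * (eA x - eS x)) with hφ₁_def
  set φ₂ : (Fin (p + 1) → ℝ) → ℝ :=
    fun x => w x * (-(sA x - sS x) + (2 * a - 1) * (eA x - eS x)) with hφ₂_def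
  have hφ₁_meas : Measurable φ₁ :=
    hw.mul (((hsA_meas.sub hsS_meas).const_mul a).add ((heA_meas.sub heS_meas).const_mul _))
  have hφ₂_meas : Measurable φ₂ :=
    hw.mul ((((hsA_meas.sub hsS_meas)).neg).add ((heA_meas.sub heS_meas).const_mul _))
  -- the gaussian... the logistic function of the true score
  set g : (Fin (p + 1) → ℝ) → ℝ := fun x => 1 / (1 + Real.exp (-sS x)) with hg_def
  have hg_meas : Measurable g := by
    apply Measurable.div measurable_const
    exact measurable_const.add (Real.measurable_exp.comp hsS_meas.neg)
  -- bounds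
  have haabs : |a| ≤ 1 := by rcases ha with rfl | rfl <;> norm_num
  have hb : |1 - 2 * a| = 1 := by rcases ha with rfl | rfl <;> norm_num
  set K : ℝ := ((∑ i, |α i|) + (∑ i, |αs i|)) * M with hK_def
  have hsum_nonneg : (0:ℝ) ≤ ∑ i, |αs i| := Finset.sum_nonneg fun i _ => abs_nonneg _
  have hsum_nonneg' : (0:ℝ) ≤ ∑ i, |α i| := Finset.sum_nonneg fun i _ => abs_nonneg _
  have hKnonneg : 0 ≤ K := by
    apply mul_nonneg (by linarith) hM.le
  have hbddA : ∀ x, (∀ i, |x i| ≤ M) → |sA x| ≤ K := by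
    intro x hx
    refine le_trans (sum_abs_bound α x hx) ?_
    rw [hK_def]; nlinarith
  have hbddS : ∀ x, (∀ i, |x i| ≤ M) → |sS x| ≤ K := by
    intro x hx
    refine le_trans (sum_abs_bound αs x hx) ?_
    rw [hK_def]; nlinarith
  have hbddeA : ∀ x, (∀ i, |x i| ≤ M) → eA x ≤ Real.exp K := by
    intro x hx
    apply Real.exp_le_exp.2
    calc (1 - 2 * a) * sA x ≤ |(1 - 2 * a) * sA x| := le_abs_self _
      _ = |sA x| := by rw [abs_mul, hb, one_mul]
      _ ≤ K := hbddA x hx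
  have hbddeS : ∀ x, (∀ i, |x i| ≤ M) → eS x ≤ Real.exp K := by
    intro x hx
    apply Real.exp_le_exp.2
    calc (1 - 2 * a) * sS x ≤ |(1 - 2 * a) * sS x| := le_abs_self _
      _ = |sS x| := by rw [abs_mul, hb, one_mul]
      _ ≤ K := hbddS x hx
  have hwabs : ∀ x, |w x| ≤ M := fun x => abs_le.mpr ⟨by linarith [(hwb x).1], (hwb x).2⟩
  have hAabs : ∀ ω, |A ω| ≤ 1 := by
    intro ω; rcases hAbin ω with h | h <;> rw [h] <;> norm_num
  have hgabs : ∀ x, |g x| ≤ 1 := by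
    intro x
    have h1 : 0 < 1 + Real.exp (-sS x) := by positivity
    rw [hg_def, abs_of_nonneg (by positivity)]
    rw [div_le_one h1]
    linarith [Real.exp_pos (-sS x)]
  -- integrands
  set F : Ω → ℝ := fun ω => w (X ω) * ((a - A ω) * sA (X ω)
      + (if A ω = a then (1:ℝ) else 0) * eA (X ω)) with hF_def
  set Fs : Ω → ℝ := fun ω => w (X ω) * ((a - A ω) * sS (X ω)
      + (if A ω = a then (1:ℝ) else 0) * eS (X ω)) with hFs_def
  have hind_meas : Measurable (fun ω => if A ω = a then (1:ℝ) else 0) := by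
    exact Measurable.ite (hA (measurableSet_singleton a)) measurable_const measurable_const
  have hind_abs : ∀ ω, |if A ω = a then (1:ℝ) else 0| ≤ 1 := by
    intro ω; split <;> norm_num
  have hcabs : ∀ ω, |a - A ω| ≤ 1 := by
    intro ω; rcases hAbin ω with h | h <;> rcases ha with rfl | rfl <;> rw [h] <;> norm_num
  have hF_meas : Measurable F := by
    apply (hw.comp hX).mul
    exact (((measurable_const.sub hA).mul (hsA_meas.comp hX)).add
      (hind_meas.mul (heA_meas.comp hX)))
  have hFs_meas : Measurable Fs := by
    apply (hw.comp hX).mul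
    exact (((measurable_const.sub hA).mul (hsS_meas.comp hX)).add
      (hind_meas.mul (heS_meas.comp hX)))
  have hF_int : Integrable F P := by
    apply integrable_of_abs_bdd hF_meas.aestronglyMeasurable (M * (K + Real.exp K))
    filter_upwards [hXbdd] with ω hω
    exact abs_comb_le (hwabs _) (hcabs ω) (hbddA _ hω) (hind_abs ω)
      (by rw [abs_of_pos (Real.exp_pos _)]; exact hbddeA _ hω)
  have hFs_int : Integrable Fs P := by
    apply integrable_of_abs_bdd hFs_meas.aestronglyMeasurable (M * (K + Real.exp K))
    filter_upwards [hXbdd] with ω hω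
    exact abs_comb_le (hwabs _) (hcabs ω) (hbddS _ hω) (hind_abs ω)
      (by rw [abs_of_pos (Real.exp_pos _)]; exact hbddeS _ hω)
  -- bounds for φ's
  have hφ₁_bdd : ∀ x, (∀ i, |x i| ≤ M) → |φ₁ x| ≤ M * (2 * K + 2 * Real.exp K) := by
    intro x hx
    have h3 : |sA x - sS x| ≤ 2 * K := by
      have := abs_sub (sA x) (sS x)
      calc |sA x - sS x| ≤ |sA x| + |sS x| := abs_sub _ _
        _ ≤ 2 * K := by linarith [hbddA x hx, hbddS x hx]
    have h5 : |eA x - eS x| ≤ 2 * Real.exp K := by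
      calc |eA x - eS x| ≤ |eA x| + |eS x| := abs_sub _ _
        _ ≤ 2 * Real.exp K := by
            rw [abs_of_pos (Real.exp_pos _), abs_of_pos (Real.exp_pos _)]
            linarith [hbddeA x hx, hbddeS x hx]
    have h2 : |(1 : ℝ) - a| ≤ 1 := by rcases ha with rfl | rfl <;> norm_num
    exact abs_comb_le (hwabs x) haabs h3 h2 h5
  have hφ₂_bdd : ∀ x, (∀ i, |x i| ≤ M) → |φ₂ x| ≤ M * (2 * K + 2 * Real.exp K) := by
    intro x hx
    have h3 : |sA x - sS x| ≤ 2 * K := by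
      calc |sA x - sS x| ≤ |sA x| + |sS x| := abs_sub _ _
        _ ≤ 2 * K := by linarith [hbddA x hx, hbddS x hx]
    have h5 : |eA x - eS x| ≤ 2 * Real.exp K := by
      calc |eA x - eS x| ≤ |eA x| + |eS x| := abs_sub _ _
        _ ≤ 2 * Real.exp K := by
            rw [abs_of_pos (Real.exp_pos _), abs_of_pos (Real.exp_pos _)]
            linarith [hbddeA x hx, hbddeS x hx]
    have h2 : |(2 * a - 1 : ℝ)| ≤ 1 := by rcases ha with rfl | rfl <;> norm_num
    have hrw : φ₂ x = w x * ((-1) * (sA x - sS x) + (2 * a - 1) * (eA x - eS x)) := by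
      rw [hφ₂_def]; ring
    rw [hrw]
    exact abs_comb_le (hwabs x) (by norm_num : |(-1:ℝ)| ≤ 1) h3 h2 h5
  -- integrability of φ's composed with X
  have hφ₁X_int : Integrable (fun ω => φ₁ (X ω)) P := by
    apply integrable_of_abs_bdd ((hφ₁_meas.comp hX)).aestronglyMeasurable
      (M * (2 * K + 2 * Real.exp K))
    filter_upwards [hXbdd] with ω hω
    exact hφ₁_bdd _ hω
  have hφ₂X_int : Integrable (fun ω => φ₂ (X ω)) P := by
    apply integrable_of_abs_bdd ((hφ₂_meas.comp hX)).aestronglyMeasurable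
      (M * (2 * K + 2 * Real.exp K))
    filter_upwards [hXbdd] with ω hω
    exact hφ₂_bdd _ hω
  have hφ₂A_int : Integrable (fun ω => φ₂ (X ω) * A ω) P := by
    apply integrable_of_abs_bdd (((hφ₂_meas.comp hX)).mul hA).aestronglyMeasurable
      (M * (2 * K + 2 * Real.exp K))
    filter_upwards [hXbdd] with ω hω
    rw [Pi.mul_apply, abs_mul]
    calc |φ₂ (X ω)| * |A ω| ≤ |φ₂ (X ω)| * 1 :=
          mul_le_mul_of_nonneg_left (hAabs ω) (abs_nonneg _)
      _ = |φ₂ (X ω)| := mul_one _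
      _ ≤ _ := hφ₂_bdd _ hω
  have hφ₂g_int : Integrable (fun ω => φ₂ (X ω) * g (X ω)) P := by
    apply integrable_of_abs_bdd (((hφ₂_meas.comp hX)).mul (hg_meas.comp hX)).aestronglyMeasurable
      (M * (2 * K + 2 * Real.exp K))
    filter_upwards [hXbdd] with ω hω
    rw [Pi.mul_apply, abs_mul]
    calc |φ₂ (X ω)| * |g (X ω)| ≤ |φ₂ (X ω)| * 1 :=
          mul_le_mul_of_nonneg_left (hgabs _) (abs_nonneg _)
      _ = |φ₂ (X ω)| := mul_one _
      _ ≤ _ := hφ₂_bdd _ hω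
  have hA_int : Integrable A P :=
    integrable_of_abs_bdd hA.aestronglyMeasurable 1 (Filter.Eventually.of_forall hAabs)
  -- pointwise identity: F - Fs = φ₁ ∘ X + (φ₂ ∘ X) * A
  have hdecomp : ∀ ω, F ω - Fs ω = φ₁ (X ω) + φ₂ (X ω) * A ω := by
    intro ω
    have hind : (if A ω = a then (1:ℝ) else 0) = (1 - a) + (2 * a - 1) * A ω := by
      rcases hAbin ω with h | h <;> rcases ha with rfl | rfl <;> simp [h] <;> norm_num
    simp only [hF_def, hFs_def, hφ₁_def, hφ₂_def, hind]
    ring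
  -- conditional expectation step
  set m := MeasurableSpace.comap X inferInstance with hm_def
  have hXm : Measurable[m] X := fun s hs => ⟨s, hs, rfl⟩
  have hφ₂Xm : StronglyMeasurable[m] (fun ω => φ₂ (X ω)) :=
    (hφ₂_meas.comp hXm).stronglyMeasurable
  have hpull : P[(fun ω => φ₂ (X ω)) * A|m] =ᵐ[P] (fun ω => φ₂ (X ω)) * P[A|m] :=
    condExp_mul_of_stronglyMeasurable_left hφ₂Xm (by exact hφ₂A_int) hA_int
  have hswap : ∫ ω, φ₂ (X ω) * A ω ∂P = ∫ ω, φ₂ (X ω) * g (X ω) ∂P := by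
    have h1 : ∫ ω, φ₂ (X ω) * A ω ∂P = ∫ ω, (P[(fun ω => φ₂ (X ω)) * A|m]) ω ∂P :=
      (integral_condExp hm).symm
    rw [h1]
    apply integral_congr_ae
    filter_upwards [hpull, hPS] with ω h₁ h₂
    rw [h₁]
    simp only [Pi.mul_apply]
    rw [h₂]
  -- final computation
  have key : 0 ≤ ∫ ω, (F ω - Fs ω) ∂P := by
    have heq : ∫ ω, (F ω - Fs ω) ∂P = ∫ ω, (φ₁ (X ω) + φ₂ (X ω) * A ω) ∂P := by
      apply integral_congr_ae
      exact Filter.Eventually.of_forall hdecomp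
    rw [heq, integral_add hφ₁X_int hφ₂A_int, hswap, ← integral_add hφ₁X_int hφ₂g_int]
    apply integral_nonneg
    intro ω
    have hpos := key_pointwise a (sA (X ω)) (sS (X ω)) ha
    have hw0 := (hwb (X ω)).1
    have : φ₁ (X ω) + φ₂ (X ω) * g (X ω)
        = w (X ω) * ((a - 1 / (1 + Real.exp (-sS (X ω)))) * (sA (X ω) - sS (X ω))
          + ((1 - a) + (2 * a - 1) * (1 / (1 + Real.exp (-sS (X ω)))))
            * (eA (X ω) - eS (X ω))) := by
      simp only [hφ₁_def, hφ₂_def, hg_def]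
      ring
    simp only [Pi.add_apply]
    rw [this]
    exact mul_nonneg hw0 (by simp only [heA_def, heS_def]; exact hpos)
  have hsub := integral_sub hF_int hFs_int
  have : ∫ ω, F ω ∂P - ∫ ω, Fs ω ∂P = ∫ ω, (F ω - Fs ω) ∂P := by
    rw [← hsub]
  linarith [key, this]
end

section
/- Let (Ω, 𝓕, P) be a probability space, X : Ω → ℝ^{p+1} with ‖X‖_∞ ≤ M almost surely, A : Ω → {0,1}, Y : Ω → [0,1], and let g(u) = 1/(1 + e^{−u}) and ℓ(y, u) = log(1 + e^u) − y·u. Fix a ∈ {0,1} and suppose the outcome regression model is correct: E[1{A = a}·Y | σ(X)] = E[1{A = a} | σ(X)] · g(β*ᵀX) almost surely for some β* ∈ ℝ^{p+1}. Let w : ℝ^{p+1} → [0, M] be any measurable weight function. Then β* is a global minimizer of the weighted logistic loss L(β) := E[ w(X) · 1{A = a} · ℓ(Y, βᵀX) ] over β ∈ ℝ^{p+1}; that is, L(β) ≥ L(β*) for all β ∈ ℝ^{p+1}. -/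
open MeasureTheory ProbabilityTheory



private lemma logistic_deriv (t : ℝ) :
    HasDerivAt (fun s => Real.log (1 + Real.exp s)) (Real.exp t / (1 + Real.exp t)) t := by
  have h1 : HasDerivAt (fun s => 1 + Real.exp s) (Real.exp t) t :=
    (Real.hasDerivAt_exp t).const_add 1
  exact h1.log (by positivity)

private lemma logistic_tangent (v u : ℝ) :
    Real.log (1 + Real.exp v) - (1 / (1 + Real.exp (-v))) * v ≤
      Real.log (1 + Real.exp u) - (1 / (1 + Real.exp (-v))) * u := by
  set q := 1 / (1 + Real.exp (-v)) with hq
  have hqe : q = Real.exp v / (1 + Real.exp v) := by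
    rw [hq, Real.exp_neg]
    rw [div_eq_div_iff (by positivity) (by positivity)]
    field_simp
    ring
  set F : ℝ → ℝ := fun t => Real.log (1 + Real.exp t) - q * t with hF
  have hder : ∀ t : ℝ, HasDerivAt F (Real.exp t / (1 + Real.exp t) - q) t := fun t =>
    (logistic_deriv t).sub ((hasDerivAt_id t).const_mul q |>.congr_deriv (by ring))
  have hcont : Continuous F := by
    apply Continuous.sub
    · exact ((continuous_const.add Real.continuous_exp).log (fun x => (add_pos one_pos (Real.exp_pos x)).ne'))
    · exact continuous_const.mul continuous_id
  have hmono : ∀ s t : ℝ, s ≤ t →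
      Real.exp s / (1 + Real.exp s) ≤ Real.exp t / (1 + Real.exp t) := by
    intro s t hst
    rw [div_le_div_iff₀ (by positivity) (by positivity)]
    have h := Real.exp_le_exp.mpr hst
    nlinarith [Real.exp_pos s, Real.exp_pos t]
  have hdiff : Differentiable ℝ F := fun t => (hder t).differentiableAt
  rcases le_total v u with h | h
  · have hmon : MonotoneOn F (Set.Icc v u) := by
      apply monotoneOn_of_deriv_nonneg (convex_Icc v u) hcont.continuousOn
        (hdiff.differentiableOn)
      intro x hx
      rw [(hder x).deriv, hqe, sub_nonneg]
      exact hmono v x (le_of_lt (Set.mem_Ioo.mp (by rwa [interior_Icc] at hx)).1)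
    exact hmon (Set.left_mem_Icc.mpr h) (Set.right_mem_Icc.mpr h) h
  · have hant : AntitoneOn F (Set.Icc u v) := by
      apply antitoneOn_of_deriv_nonpos (convex_Icc u v) hcont.continuousOn
        (hdiff.differentiableOn)
      intro x hx
      rw [(hder x).deriv, hqe, sub_nonpos]
      exact hmono x v (le_of_lt (Set.mem_Ioo.mp (by rwa [interior_Icc] at hx)).2)
    exact hant (Set.left_mem_Icc.mpr h) (Set.right_mem_Icc.mpr h) h

/-- **Model robustness of the calibrated outcome-regression loss.**
If the logistic outcome model is correct,
`E[1{A=a}·Y ∣ σ(X)] = E[1{A=a} ∣ σ(X)]·g(β*ᵀX)` a.s. with `g(u) = 1/(1+e^{−u})`, then for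
any measurable weight `w : ℝ^{p+1} → [0,M]` the weighted logistic loss
`L(β) = E[w(X)·1{A=a}·ℓ(Y, βᵀX)]`, with `ℓ(y,u) = log(1+eᵘ) − y·u`, is globally minimized
at `β = β*`. -/
theorem calibrated_or_loss_minimizer
    {Ω : Type*} [mF : MeasurableSpace Ω]
    (P : Measure Ω) [IsProbabilityMeasure P]
    (p : ℕ) (X : Ω → (Fin (p + 1) → ℝ)) (hX : Measurable X)
    (M : ℝ) (hM : 0 < M)
    (hXbdd : ∀ᵐ ω ∂P, ∀ i, |X ω i| ≤ M)
    (A : Ω → ℝ) (hA : Measurable A) (hAbin : ∀ ω, A ω = 0 ∨ A ω = 1)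
    (Y : Ω → ℝ) (hYmeas : Measurable Y) (hYrange : ∀ ω, Y ω ∈ Set.Icc (0 : ℝ) 1)
    (a : ℝ) (ha : a = 0 ∨ a = 1)
    (βs : Fin (p + 1) → ℝ)
    (hOR : P[fun ω => (if A ω = a then (1 : ℝ) else 0) * Y ω|MeasurableSpace.comap X inferInstance]
      =ᵐ[P] fun ω =>
        (P[fun ω' => (if A ω' = a then (1 : ℝ) else 0)|MeasurableSpace.comap X inferInstance]) ω
          * (1 / (1 + Real.exp (-(∑ i, βs i * X ω i)))))
    (w : (Fin (p + 1) → ℝ) → ℝ) (hw : Measurable w)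
    (hwb : ∀ x, w x ∈ Set.Icc (0 : ℝ) M) :
    ∀ β : Fin (p + 1) → ℝ,
      (∫ ω, w (X ω) * (if A ω = a then (1 : ℝ) else 0)
          * (Real.log (1 + Real.exp (∑ i, βs i * X ω i)) - Y ω * ∑ i, βs i * X ω i) ∂P)
      ≤ ∫ ω, w (X ω) * (if A ω = a then (1 : ℝ) else 0)
          * (Real.log (1 + Real.exp (∑ i, β i * X ω i)) - Y ω * ∑ i, β i * X ω i) ∂P := by
  classical
  intro β
  set m : MeasurableSpace Ω := MeasurableSpace.comap X inferInstance with hm_def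
  have hm : m ≤ mF := hX.comap_le
  have hXm : Measurable[m] X := Measurable.of_comap_le le_rfl
  -- indicator of A = a
  set I : Ω → ℝ := fun ω => if A ω = a then 1 else 0 with hI_def
  have hImeas : Measurable[mF] I :=
    Measurable.ite (m := mF) (hA (measurableSet_singleton a)) measurable_const measurable_const
  have hI01 : ∀ ω, 0 ≤ I ω ∧ I ω ≤ 1 := by
    intro ω; by_cases h : A ω = a <;> simp [hI_def, h]
  -- generic bounded-integrable helper
  have hbint : ∀ (f : Ω → ℝ) (C : ℝ), AEStronglyMeasurable[mF] f P →
      (∀ᵐ ω ∂P, |f ω| ≤ C) → Integrable f P := by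
    intro f C hmeas hb
    exact Integrable.mono' (integrable_const C) hmeas (by simpa [Real.norm_eq_abs] using hb)
  -- linear score bound
  have husum : ∀ b : Fin (p + 1) → ℝ, ∀ᵐ ω ∂P, |∑ i, b i * X ω i| ≤ (∑ i, |b i|) * M := by
    intro b
    filter_upwards [hXbdd] with ω hω
    calc |∑ i, b i * X ω i| ≤ ∑ i, |b i * X ω i| := Finset.abs_sum_le_sum_abs _ _
      _ ≤ ∑ i, |b i| * M := by
          refine Finset.sum_le_sum fun i _ => ?_
          rw [abs_mul]
          exact mul_le_mul_of_nonneg_left (hω i) (abs_nonneg _)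
      _ = (∑ i, |b i|) * M := (Finset.sum_mul _ _ _).symm
  have humeas : ∀ b : Fin (p + 1) → ℝ, Measurable fun x : Fin (p + 1) → ℝ => ∑ i, b i * x i :=
    fun b => Finset.measurable_sum _ fun i _ => (measurable_pi_apply i).const_mul _
  -- conditional expectation of I
  set G : Ω → ℝ := P[I|m] with hG_def
  have hGmeas : AEStronglyMeasurable[mF] G P :=
    (stronglyMeasurable_condExp.mono hm).aestronglyMeasurable
  have hIint : Integrable I P :=
    hbint I 1 hImeas.aestronglyMeasurable
      (Filter.Eventually.of_forall fun ω => abs_le.mpr ⟨by linarith [(hI01 ω).1], (hI01 ω).2⟩)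
  have hG0 : 0 ≤ᵐ[P] G :=
    condExp_nonneg (Filter.Eventually.of_forall fun ω => (hI01 ω).1)
  have hG1 : G ≤ᵐ[P] fun _ => (1 : ℝ) := by
    have h := condExp_mono (m := m) (μ := P) hIint (integrable_const 1)
      (Filter.Eventually.of_forall fun ω => (hI01 ω).2)
    rwa [condExp_const hm (1 : ℝ)] at h
  have hGbd : ∀ᵐ ω ∂P, |G ω| ≤ 1 := by
    filter_upwards [hG0, hG1] with ω h0 h1
    have h0' : (0 : ℝ) ≤ G ω := h0
    have h1' : G ω ≤ 1 := h1
    exact abs_le.mpr ⟨by linarith, h1'⟩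
  -- gstar
  set gs : Ω → ℝ := fun ω => 1 / (1 + Real.exp (-(∑ i, βs i * X ω i))) with hgs_def
  have hgsmeas : Measurable[mF] gs := by
    apply Measurable.div measurable_const
    exact measurable_const.add (((humeas βs).comp hX).neg.exp)
  have hgs01 : ∀ ω, 0 ≤ gs ω ∧ gs ω ≤ 1 := by
    intro ω
    constructor
    · positivity
    · rw [hgs_def, div_le_one (by positivity)]
      nlinarith [Real.exp_pos (-(∑ i, βs i * X ω i))]
  -- pull-out identity
  have pull : ∀ (φ h : Ω → ℝ), StronglyMeasurable[m] φ →
      Integrable (fun ω => φ ω * h ω) P → Integrable h P →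
      ∫ ω, φ ω * h ω ∂P = ∫ ω, φ ω * (P[h|m]) ω ∂P := by
    intro φ h hφ hint hhint
    rw [← integral_condExp hm (f := fun ω => φ ω * h ω)]
    exact integral_congr_ae (condExp_mul_of_stronglyMeasurable_left hφ hint hhint)
  -- the two m-measurable factors, for a given b
  have key : ∀ b : Fin (p + 1) → ℝ,
      ∫ ω, w (X ω) * (if A ω = a then (1 : ℝ) else 0)
          * (Real.log (1 + Real.exp (∑ i, b i * X ω i)) - Y ω * ∑ i, b i * X ω i) ∂P
      = ∫ ω, (w (X ω) * G ω)
          * (Real.log (1 + Real.exp (∑ i, b i * X ω i)) - gs ω * ∑ i, b i * X ω i) ∂P := by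
    intro b
    set φ1 : Ω → ℝ := fun ω => w (X ω) * Real.log (1 + Real.exp (∑ i, b i * X ω i)) with hφ1
    set φ2 : Ω → ℝ := fun ω => w (X ω) * ∑ i, b i * X ω i with hφ2
    have hφ1m : StronglyMeasurable[m] φ1 := by
      apply Measurable.stronglyMeasurable
      exact (hw.comp hXm).mul
        ((measurable_const.add ((humeas b).comp hXm).exp).log)
    have hφ2m : StronglyMeasurable[m] φ2 := by
      apply Measurable.stronglyMeasurable
      exact (hw.comp hXm).mul ((humeas b).comp hXm)
    have hφ1mF : AEStronglyMeasurable[mF] φ1 P := (hφ1m.mono hm).aestronglyMeasurable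
    have hφ2mF : AEStronglyMeasurable[mF] φ2 P := (hφ2m.mono hm).aestronglyMeasurable
    have hφ1bd : ∀ᵐ ω ∂P, |φ1 ω| ≤ M * (Real.log 2 + (∑ i, |b i|) * M) := by
      filter_upwards [husum b] with ω hω
      have hw0 := (hwb (X ω)).1
      have hwM := (hwb (X ω)).2
      have hL0 : 0 ≤ Real.log (1 + Real.exp (∑ i, b i * X ω i)) :=
        Real.log_nonneg (by nlinarith [Real.exp_pos (∑ i, b i * X ω i)])
      have hLle : Real.log (1 + Real.exp (∑ i, b i * X ω i))
          ≤ Real.log 2 + |∑ i, b i * X ω i| := by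
        have h1 : (1 : ℝ) + Real.exp (∑ i, b i * X ω i)
            ≤ 2 * Real.exp |∑ i, b i * X ω i| := by
          have e1 : Real.exp (∑ i, b i * X ω i) ≤ Real.exp |∑ i, b i * X ω i| :=
            Real.exp_le_exp.mpr (le_abs_self _)
          have e2 : (1 : ℝ) ≤ Real.exp |∑ i, b i * X ω i| :=
            Real.one_le_exp (abs_nonneg _)
          linarith
        calc Real.log (1 + Real.exp (∑ i, b i * X ω i))
            ≤ Real.log (2 * Real.exp |∑ i, b i * X ω i|) :=
              Real.log_le_log (by positivity) h1
          _ = Real.log 2 + |∑ i, b i * X ω i| := by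
              rw [Real.log_mul (by norm_num) (Real.exp_ne_zero _), Real.log_exp]
      have : |Real.log (1 + Real.exp (∑ i, b i * X ω i))|
          ≤ Real.log 2 + (∑ i, |b i|) * M := by
        rw [abs_of_nonneg hL0]; linarith
      have hwabs : |w (X ω)| ≤ M := by rw [abs_of_nonneg hw0]; exact hwM
      calc |φ1 ω| = |w (X ω)| * |Real.log (1 + Real.exp (∑ i, b i * X ω i))| := abs_mul _ _
        _ ≤ M * (Real.log 2 + (∑ i, |b i|) * M) :=
            mul_le_mul hwabs this (abs_nonneg _) (le_of_lt hM)
    have hφ2bd : ∀ᵐ ω ∂P, |φ2 ω| ≤ M * ((∑ i, |b i|) * M) := by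
      filter_upwards [husum b] with ω hω
      have hwabs : |w (X ω)| ≤ M := by
        rw [abs_of_nonneg (hwb (X ω)).1]; exact (hwb (X ω)).2
      calc |φ2 ω| = |w (X ω)| * |∑ i, b i * X ω i| := abs_mul _ _
        _ ≤ M * ((∑ i, |b i|) * M) := mul_le_mul hwabs hω (abs_nonneg _) (le_of_lt hM)
    have hIY : Integrable (fun ω => I ω * Y ω) P := by
      refine hbint _ 1 (hImeas.mul hYmeas).aestronglyMeasurable ?_
      refine Filter.Eventually.of_forall fun ω => ?_
      rw [abs_mul]
      have := hI01 ω
      have hY := hYrange ω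
      have h1 : |I ω| ≤ 1 := abs_le.mpr ⟨by linarith [this.1], this.2⟩
      have h2 : |Y ω| ≤ 1 := abs_le.mpr ⟨by linarith [hY.1], hY.2⟩
      calc |I ω| * |Y ω| ≤ 1 * 1 := mul_le_mul h1 h2 (abs_nonneg _) zero_le_one
        _ = 1 := by ring
    -- integrability of all needed products
    have i1 : Integrable (fun ω => φ1 ω * I ω) P := by
      refine hbint _ (M * (Real.log 2 + (∑ i, |b i|) * M) * 1)
        (hφ1mF.mul hImeas.aestronglyMeasurable) ?_
      filter_upwards [hφ1bd] with ω hb1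
      have := hI01 ω
      have hIa : |I ω| ≤ 1 := abs_le.mpr ⟨by linarith [this.1], this.2⟩
      calc |φ1 ω * I ω| = |φ1 ω| * |I ω| := abs_mul _ _
        _ ≤ M * (Real.log 2 + (∑ i, |b i|) * M) * 1 :=
            mul_le_mul hb1 hIa (abs_nonneg _) (le_trans (abs_nonneg _) hb1)
    have i2 : Integrable (fun ω => φ2 ω * (I ω * Y ω)) P := by
      refine hbint _ (M * ((∑ i, |b i|) * M) * 1)
        (hφ2mF.mul (hImeas.mul hYmeas).aestronglyMeasurable) ?_
      filter_upwards [hφ2bd] with ω hb2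
      have h01 := hI01 ω
      have hY := hYrange ω
      have hIa : |I ω| ≤ 1 := abs_le.mpr ⟨by linarith [h01.1], h01.2⟩
      have hYa : |Y ω| ≤ 1 := abs_le.mpr ⟨by linarith [hY.1], hY.2⟩
      have hIY1 : |I ω * Y ω| ≤ 1 := by
        calc |I ω * Y ω| = |I ω| * |Y ω| := abs_mul _ _
          _ ≤ 1 * 1 := mul_le_mul hIa hYa (abs_nonneg _) zero_le_one
          _ = 1 := by ring
      calc |φ2 ω * (I ω * Y ω)| = |φ2 ω| * |I ω * Y ω| := abs_mul _ _
        _ ≤ M * ((∑ i, |b i|) * M) * 1 :=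
            mul_le_mul hb2 hIY1 (abs_nonneg _) (le_trans (abs_nonneg _) hb2)
    have i3 : Integrable (fun ω => φ1 ω * G ω) P := by
      refine hbint _ (M * (Real.log 2 + (∑ i, |b i|) * M) * 1)
        (hφ1mF.mul hGmeas) ?_
      filter_upwards [hφ1bd, hGbd] with ω hb1 hg
      calc |φ1 ω * G ω| = |φ1 ω| * |G ω| := abs_mul _ _
        _ ≤ M * (Real.log 2 + (∑ i, |b i|) * M) * 1 :=
            mul_le_mul hb1 hg (abs_nonneg _) (le_trans (abs_nonneg _) hb1)
    have i4 : Integrable (fun ω => φ2 ω * (G ω * gs ω)) P := by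
      refine hbint _ (M * ((∑ i, |b i|) * M) * 1)
        (hφ2mF.mul (hGmeas.mul hgsmeas.aestronglyMeasurable)) ?_
      filter_upwards [hφ2bd, hGbd] with ω hb2 hg
      have hgsa : |gs ω| ≤ 1 := abs_le.mpr ⟨by linarith [(hgs01 ω).1], (hgs01 ω).2⟩
      have hGgs : |G ω * gs ω| ≤ 1 := by
        calc |G ω * gs ω| = |G ω| * |gs ω| := abs_mul _ _
          _ ≤ 1 * 1 := mul_le_mul hg hgsa (abs_nonneg _) zero_le_one
          _ = 1 := by ring
      calc |φ2 ω * (G ω * gs ω)| = |φ2 ω| * |G ω * gs ω| := abs_mul _ _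
        _ ≤ M * ((∑ i, |b i|) * M) * 1 :=
            mul_le_mul hb2 hGgs (abs_nonneg _) (le_trans (abs_nonneg _) hb2)
    -- split LHS
    have lhs_eq : ∫ ω, w (X ω) * (if A ω = a then (1 : ℝ) else 0)
          * (Real.log (1 + Real.exp (∑ i, b i * X ω i)) - Y ω * ∑ i, b i * X ω i) ∂P
        = (∫ ω, φ1 ω * I ω ∂P) - ∫ ω, φ2 ω * (I ω * Y ω) ∂P := by
      rw [← integral_sub i1 i2]
      apply integral_congr_ae
      refine Filter.Eventually.of_forall fun ω => ?_
      simp only [hφ1, hφ2, hI_def]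
      ring
    have e1 : ∫ ω, φ1 ω * I ω ∂P = ∫ ω, φ1 ω * G ω ∂P := pull φ1 I hφ1m i1 hIint
    have e2 : ∫ ω, φ2 ω * (I ω * Y ω) ∂P = ∫ ω, φ2 ω * (G ω * gs ω) ∂P := by
      rw [pull φ2 (fun ω => I ω * Y ω) hφ2m i2 hIY]
      apply integral_congr_ae
      filter_upwards [hOR] with ω hω
      have : (P[fun ω => I ω * Y ω|m]) ω = G ω * gs ω := by
        simpa [hI_def, hgs_def, hG_def] using hω
      rw [this]
    have rhs_eq : ∫ ω, (w (X ω) * G ω)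
          * (Real.log (1 + Real.exp (∑ i, b i * X ω i)) - gs ω * ∑ i, b i * X ω i) ∂P
        = (∫ ω, φ1 ω * G ω ∂P) - ∫ ω, φ2 ω * (G ω * gs ω) ∂P := by
      rw [← integral_sub i3 i4]
      apply integral_congr_ae
      refine Filter.Eventually.of_forall fun ω => ?_
      simp only [hφ1, hφ2]
      ring
    rw [lhs_eq, e1, e2, rhs_eq]
  -- final comparison
  rw [key βs, key β]
  -- integrability of both sides
  have fint : ∀ b : Fin (p + 1) → ℝ, Integrable (fun ω => (w (X ω) * G ω)
      * (Real.log (1 + Real.exp (∑ i, b i * X ω i)) - gs ω * ∑ i, b i * X ω i)) P := by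
    intro b
    refine hbint _ ((M * 1) * (Real.log 2 + (∑ i, |b i|) * M + (∑ i, |b i|) * M)) ?_ ?_
    · apply AEStronglyMeasurable.mul
      · exact ((hw.comp hX).aestronglyMeasurable).mul hGmeas
      · apply AEStronglyMeasurable.sub
        · exact (measurable_const.add ((humeas b).comp hX).exp).log.aestronglyMeasurable
        · exact (hgsmeas.mul ((humeas b).comp hX)).aestronglyMeasurable
    · filter_upwards [husum b, hGbd] with ω hub hg
      have hw0 := (hwb (X ω)).1
      have hwM := (hwb (X ω)).2
      have hwG : |w (X ω) * G ω| ≤ M * 1 := by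
        calc |w (X ω) * G ω| = |w (X ω)| * |G ω| := abs_mul _ _
          _ ≤ M * 1 := mul_le_mul (by rwa [abs_of_nonneg hw0]) hg (abs_nonneg _) (le_of_lt hM)
      have hL0 : 0 ≤ Real.log (1 + Real.exp (∑ i, b i * X ω i)) :=
        Real.log_nonneg (by nlinarith [Real.exp_pos (∑ i, b i * X ω i)])
      have hLle : Real.log (1 + Real.exp (∑ i, b i * X ω i))
          ≤ Real.log 2 + |∑ i, b i * X ω i| := by
        have h1 : (1 : ℝ) + Real.exp (∑ i, b i * X ω i)
            ≤ 2 * Real.exp |∑ i, b i * X ω i| := by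
          have e1 : Real.exp (∑ i, b i * X ω i) ≤ Real.exp |∑ i, b i * X ω i| :=
            Real.exp_le_exp.mpr (le_abs_self _)
          have e2 : (1 : ℝ) ≤ Real.exp |∑ i, b i * X ω i| :=
            Real.one_le_exp (abs_nonneg _)
          linarith
        calc Real.log (1 + Real.exp (∑ i, b i * X ω i))
            ≤ Real.log (2 * Real.exp |∑ i, b i * X ω i|) :=
              Real.log_le_log (by positivity) h1
          _ = Real.log 2 + |∑ i, b i * X ω i| := by
              rw [Real.log_mul (by norm_num) (Real.exp_ne_zero _), Real.log_exp]
      have hgsa : |gs ω| ≤ 1 := abs_le.mpr ⟨by linarith [(hgs01 ω).1], (hgs01 ω).2⟩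
      have hsec : |Real.log (1 + Real.exp (∑ i, b i * X ω i)) - gs ω * ∑ i, b i * X ω i|
          ≤ Real.log 2 + (∑ i, |b i|) * M + (∑ i, |b i|) * M := by
        have h2 : |gs ω * ∑ i, b i * X ω i| ≤ (∑ i, |b i|) * M := by
          rw [abs_mul]
          calc |gs ω| * |∑ i, b i * X ω i| ≤ 1 * ((∑ i, |b i|) * M) :=
                mul_le_mul hgsa hub (abs_nonneg _) zero_le_one
            _ = (∑ i, |b i|) * M := by ring
        have h3 := abs_sub_abs_le_abs_sub (Real.log (1 + Real.exp (∑ i, b i * X ω i)))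
          (gs ω * ∑ i, b i * X ω i)
        have h4 : |Real.log (1 + Real.exp (∑ i, b i * X ω i))|
            ≤ Real.log 2 + (∑ i, |b i|) * M := by
          rw [abs_of_nonneg hL0]; linarith
        calc |Real.log (1 + Real.exp (∑ i, b i * X ω i)) - gs ω * ∑ i, b i * X ω i|
            ≤ |Real.log (1 + Real.exp (∑ i, b i * X ω i))| + |gs ω * ∑ i, b i * X ω i| :=
              abs_sub _ _
          _ ≤ Real.log 2 + (∑ i, |b i|) * M + (∑ i, |b i|) * M := by linarith
      calc |w (X ω) * G ω * (Real.log (1 + Real.exp (∑ i, b i * X ω i))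
              - gs ω * ∑ i, b i * X ω i)|
          = |w (X ω) * G ω| * |Real.log (1 + Real.exp (∑ i, b i * X ω i))
              - gs ω * ∑ i, b i * X ω i| := abs_mul _ _
        _ ≤ M * 1 * (Real.log 2 + (∑ i, |b i|) * M + (∑ i, |b i|) * M) :=
            mul_le_mul hwG hsec (abs_nonneg _) (by positivity)
  apply integral_mono_ae (fint βs) (fint β)
  filter_upwards [hG0] with ω hg0
  have hfac : 0 ≤ w (X ω) * G ω := mul_nonneg (hwb (X ω)).1 hg0
  exact mul_le_mul_of_nonneg_left (logistic_tangent (∑ i, βs i * X ω i) (∑ i, β i * X ω i)) hfac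
end

section
/- Let (Ω, 𝓕, P) be a probability space, A : Ω → {0,1}, Y : Ω → ℝ with |Y| ≤ M almost surely, and 𝓖_X ⊆ 𝓕 a sub-σ-algebra. Let π₁ = E[A | 𝓖_X] with π₁ ∈ [1/M, 1 − 1/M] a.s., π₀ = 1 − π₁, and μ₁, μ₀ the 𝓖_X-measurable outcome regressions with μₐπₐ = E[1{A=a}Y | 𝓖_X] a.s. Let δ_π, δ_μ₁, δ_μ₀ be bounded 𝓖_X-measurable perturbation directions, and for t in a neighborhood of 0 small enough that π₁ + t·δ_π ∈ [1/(2M), 1 − 1/(2M)] a.s., define F(t) := E[ (μ₁ + tδ_μ₁) − (μ₀ + tδ_μ₀) + A(Y − μ₁ − tδ_μ₁)/(π₁ + tδ_π) − (1−A)(Y − μ₀ − tδ_μ₀)/(π₀ − tδ_π) ]. Then F is differentiable at t = 0 with F′(0) = 0 (Neyman orthogonality of the AIPW functional at the true nuisance functions). -/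
open MeasureTheory ProbabilityTheory

private lemma abs_mul_le' {a b K1 K2 : ℝ} (h1 : |a| ≤ K1) (h2 : |b| ≤ K2) :
    |a * b| ≤ K1 * K2 := by
  rw [abs_mul]
  exact mul_le_mul h1 h2 (abs_nonneg b) (le_trans (abs_nonneg a) h1)

private lemma abs_add_le' {a b K1 K2 : ℝ} (h1 : |a| ≤ K1) (h2 : |b| ≤ K2) :
    |a + b| ≤ K1 + K2 := le_trans (abs_add_le a b) (add_le_add h1 h2)

private lemma abs_sub_le'' {a b K1 K2 : ℝ} (h1 : |a| ≤ K1) (h2 : |b| ≤ K2) :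
    |a - b| ≤ K1 + K2 := le_trans (abs_sub a b) (add_le_add h1 h2)

private lemma div_bound' {M den num N : ℝ} (hM : 1 < M) (hden : 1 / (2 * M) ≤ den)
    (hnum : |num| ≤ N) : |num / den| ≤ N * (2 * M) := by
  have hMpos : (0:ℝ) < M := lt_trans one_pos hM
  have hdpos : 0 < den := lt_of_lt_of_le (by positivity) hden
  have hN : 0 ≤ N := le_trans (abs_nonneg _) hnum
  rw [abs_div, abs_of_pos hdpos, div_le_iff₀ hdpos]
  calc |num| ≤ N := hnum
    _ ≤ N * (2 * M) * den := by
        have h2 : 1 ≤ den * (2 * M) := (div_le_iff₀ (by positivity : (0:ℝ) < 2*M)).mp hden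
        nlinarith
  
private lemma quot_bound' {M den num N : ℝ} (hM : 1 < M) (hden : 1 / (2 * M) ≤ den)
    (hnum : |num| ≤ N) : |num / den ^ 2| ≤ N * (4 * M ^ 2) := by
  have hMpos : (0:ℝ) < M := lt_trans one_pos hM
  have hdpos : 0 < den := lt_of_lt_of_le (by positivity) hden
  have hN : 0 ≤ N := le_trans (abs_nonneg _) hnum
  rw [abs_div, abs_of_pos (by positivity : (0:ℝ) < den ^ 2), div_le_iff₀ (by positivity : (0:ℝ) < den ^ 2)]
  have h1 : 1 / (2 * M) * (1 / (2 * M)) ≤ den * den :=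
    mul_le_mul hden hden (by positivity) hdpos.le
  calc |num| ≤ N := hnum
    _ ≤ N * (4 * M ^ 2) * den ^ 2 := by
        have heq : 1 / (2 * M) * (1 / (2 * M)) = 1 / (4 * M ^ 2) := by
          field_simp; ring
        have h3 : 1 / (4 * M ^ 2) ≤ den ^ 2 := by rw [← heq]; nlinarith [h1]
        have h4 : 1 ≤ den ^ 2 * (4 * M ^ 2) :=
          (div_le_iff₀ (by positivity : (0:ℝ) < 4 * M ^ 2)).mp h3
        nlinarith

private lemma integrable_of_ae_bound {Ω : Type*} [MeasurableSpace Ω] {P : Measure Ω}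
    [IsFiniteMeasure P] {f : Ω → ℝ} (hf : AEStronglyMeasurable f P) {K : ℝ}
    (h : ∀ᵐ ω ∂P, |f ω| ≤ K) : Integrable f P :=
  Integrable.mono' (integrable_const K) hf (h.mono fun ω hω => by simpa using hω)

private lemma key_swap {Ω : Type*} {𝓖X : MeasurableSpace Ω} [mF : MeasurableSpace Ω]
    {P : Measure Ω} [IsProbabilityMeasure P] (h𝓖X : 𝓖X ≤ mF)
    {h Z W : Ω → ℝ} (hh : StronglyMeasurable[𝓖X] h)
    (hZ : Integrable Z P) (hhZ : Integrable (fun ω => h ω * Z ω) P)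
    (hW : (P[Z|𝓖X]) =ᵐ[P] W) :
    ∫ ω, h ω * Z ω ∂P = ∫ ω, h ω * W ω ∂P := by
  have h1 : ∫ ω, (P[fun ω => h ω * Z ω|𝓖X]) ω ∂P = ∫ ω, h ω * Z ω ∂P :=
    integral_condExp h𝓖X
  have h2 : P[fun ω => h ω * Z ω|𝓖X] =ᵐ[P] fun ω => h ω * W ω := by
    have := condExp_mul_of_stronglyMeasurable_left (m := 𝓖X) (μ := P) hh hhZ hZ
    refine this.trans ?_
    filter_upwards [hW] with ω hω
    simp [hω]
  rw [← h1]
  exact integral_congr_ae h2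

set_option maxHeartbeats 2000000 in
/-- **Neyman orthogonality of the AIPW functional at the true nuisance functions.**
With true nuisances `π₁ = E[A ∣ 𝓖X] ∈ [1/M, 1−1/M]` a.s., `π₀ = 1−π₁`,
`μₐπₐ = E[1{A=a}Y ∣ 𝓖X]` a.s., and bounded `𝓖X`-measurable perturbation directions
`δπ, δμ₁, δμ₀`, if for all `|t| < ε` one has `π₁ + t·δπ ∈ [1/(2M), 1−1/(2M)]` a.s., then
`F(t) = E[(μ₁+tδμ₁) − (μ₀+tδμ₀) + A(Y−μ₁−tδμ₁)/(π₁+tδπ) − (1−A)(Y−μ₀−tδμ₀)/(π₀−tδπ)]`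
is differentiable at `t = 0` with `F′(0) = 0`. -/
theorem aipw_neyman_orthogonality
    {Ω : Type*} (𝓖X : MeasurableSpace Ω) [mF : MeasurableSpace Ω]
    (P : Measure Ω) [IsProbabilityMeasure P]
    (h𝓖X : 𝓖X ≤ mF)
    (M : ℝ) (hM : 1 < M)
    (A Y : Ω → ℝ)
    (hA : Measurable A) (hAbin : ∀ ω, A ω = 0 ∨ A ω = 1)
    (hYmeas : Measurable Y) (hYbdd : ∀ᵐ ω ∂P, |Y ω| ≤ M)
    (π1 μ1 μ0 : Ω → ℝ)
    (hπ1meas : Measurable[𝓖X] π1) (hπ1 : π1 =ᵐ[P] P[A|𝓖X])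
    (hoverlap : ∀ᵐ ω ∂P, π1 ω ∈ Set.Icc (1 / M) (1 - 1 / M))
    (hμ1meas : Measurable[𝓖X] μ1) (hμ0meas : Measurable[𝓖X] μ0)
    (hμ1 : (fun ω => μ1 ω * π1 ω) =ᵐ[P] P[fun ω => A ω * Y ω|𝓖X])
    (hμ0 : (fun ω => μ0 ω * (1 - π1 ω)) =ᵐ[P] P[fun ω => (1 - A ω) * Y ω|𝓖X])
    (δπ δμ1 δμ0 : Ω → ℝ)
    (hδπmeas : Measurable[𝓖X] δπ) (hδμ1meas : Measurable[𝓖X] δμ1)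
    (hδμ0meas : Measurable[𝓖X] δμ0)
    (C : ℝ)
    (hδbdd : ∀ᵐ ω ∂P, |δπ ω| ≤ C ∧ |δμ1 ω| ≤ C ∧ |δμ0 ω| ≤ C)
    (ε : ℝ) (hε : 0 < ε)
    (hrange : ∀ t : ℝ, |t| < ε →
      ∀ᵐ ω ∂P, π1 ω + t * δπ ω ∈ Set.Icc (1 / (2 * M)) (1 - 1 / (2 * M))) :
    HasDerivAt (fun t : ℝ =>
      ∫ ω, ((μ1 ω + t * δμ1 ω) - (μ0 ω + t * δμ0 ω)
        + A ω * (Y ω - μ1 ω - t * δμ1 ω) / (π1 ω + t * δπ ω)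
        - (1 - A ω) * (Y ω - μ0 ω - t * δμ0 ω) / ((1 - π1 ω) - t * δπ ω)) ∂P)
      0 0 := by
  have hMpos : (0:ℝ) < M := lt_trans one_pos hM
  set C0 : ℝ := |C| + 1 with hC0def
  have hC0pos : (0:ℝ) < C0 := by positivity
  set ε' : ℝ := 1 / (2 * M * C0) with hε'def
  have hε'pos : 0 < ε' := by positivity
  have hε'C0 : ε' * C0 = 1 / (2 * M) := by
    rw [hε'def]; field_simp
  have h2Minv1 : 1 / (2 * M) ≤ 1 := by
    rw [div_le_one (by positivity)]; linarith
  have hMsplit : 1 / M = 1 / (2 * M) + 1 / (2 * M) := by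
    field_simp; ring
  -- measurability wrt ambient σ-algebra
  have hπ1m : Measurable π1 := hπ1meas.mono h𝓖X le_rfl
  have hμ1m : Measurable μ1 := hμ1meas.mono h𝓖X le_rfl
  have hμ0m : Measurable μ0 := hμ0meas.mono h𝓖X le_rfl
  have hδπm : Measurable δπ := hδπmeas.mono h𝓖X le_rfl
  have hδμ1m : Measurable δμ1 := hδμ1meas.mono h𝓖X le_rfl
  have hδμ0m : Measurable δμ0 := hδμ0meas.mono h𝓖X le_rfl
  have hAabs : ∀ ω, |A ω| ≤ 1 ∧ |1 - A ω| ≤ 1 := by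
    intro ω; rcases hAbin ω with h | h <;> rw [h] <;> norm_num
  have hMnn : (M.toNNReal : ℝ) = M := Real.coe_toNNReal M hMpos.le
  have hAYbdd : ∀ᵐ ω ∂P, |A ω * Y ω| ≤ M := by
    filter_upwards [hYbdd] with ω hY
    calc |A ω * Y ω| ≤ 1 * M := abs_mul_le' (hAabs ω).1 hY
      _ = M := one_mul M
  have hAY'bdd : ∀ᵐ ω ∂P, |(1 - A ω) * Y ω| ≤ M := by
    filter_upwards [hYbdd] with ω hY
    calc |(1 - A ω) * Y ω| ≤ 1 * M := abs_mul_le' (hAabs ω).2 hY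
      _ = M := one_mul M
  have hcond1 : ∀ᵐ ω ∂P, |(P[fun ω => A ω * Y ω|𝓖X]) ω| ≤ M := by
    have h := ae_bdd_condExp_of_ae_bdd (m := 𝓖X) (μ := P) (R := M.toNNReal)
      (f := fun ω => A ω * Y ω) (by simpa [hMnn] using hAYbdd)
    simpa [hMnn] using h
  have hcond0 : ∀ᵐ ω ∂P, |(P[fun ω => (1 - A ω) * Y ω|𝓖X]) ω| ≤ M := by
    have h := ae_bdd_condExp_of_ae_bdd (m := 𝓖X) (μ := P) (R := M.toNNReal)
      (f := fun ω => (1 - A ω) * Y ω) (by simpa [hMnn] using hAY'bdd)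
    simpa [hMnn] using h
  have hμ1bdd : ∀ᵐ ω ∂P, |μ1 ω| ≤ M ^ 2 := by
    filter_upwards [hμ1, hcond1, hoverlap] with ω he hc hov
    obtain ⟨hl, hu⟩ := hov
    have hπpos : 0 < π1 ω := lt_of_lt_of_le (by positivity) hl
    have h1 : |μ1 ω| * π1 ω ≤ M := by
      rw [← abs_of_pos hπpos, ← abs_mul]
      rw [he]; exact hc
    have h4 : |μ1 ω| * (1 / M) ≤ M :=
      le_trans (mul_le_mul_of_nonneg_left hl (abs_nonneg _)) h1
    have h5 : |μ1 ω| * (1 / M) * M ≤ M * M := mul_le_mul_of_nonneg_right h4 hMpos.le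
    have h6 : |μ1 ω| * (1 / M) * M = |μ1 ω| := by field_simp
    nlinarith [h5, h6]
  have hμ0bdd : ∀ᵐ ω ∂P, |μ0 ω| ≤ M ^ 2 := by
    filter_upwards [hμ0, hcond0, hoverlap] with ω he hc hov
    obtain ⟨hl, hu⟩ := hov
    have hπ0l : 1 / M ≤ 1 - π1 ω := by linarith
    have hπpos : 0 < 1 - π1 ω := lt_of_lt_of_le (by positivity) hπ0l
    have h1 : |μ0 ω| * (1 - π1 ω) ≤ M := by
      rw [← abs_of_pos hπpos, ← abs_mul]
      rw [he]; exact hc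
    have h4 : |μ0 ω| * (1 / M) ≤ M :=
      le_trans (mul_le_mul_of_nonneg_left hπ0l (abs_nonneg _)) h1
    have h5 : |μ0 ω| * (1 / M) * M ≤ M * M := mul_le_mul_of_nonneg_right h4 hMpos.le
    have h6 : |μ0 ω| * (1 / M) * M = |μ0 ω| := by field_simp
    nlinarith [h5, h6]
  have hCC0 : C ≤ C0 := by
    rw [hC0def]; linarith [le_abs_self C]
  have hgood : ∀ᵐ ω ∂P, |Y ω| ≤ M ∧ (1 / M ≤ π1 ω ∧ π1 ω ≤ 1 - 1 / M) ∧
      (|δπ ω| ≤ C0 ∧ |δμ1 ω| ≤ C0 ∧ |δμ0 ω| ≤ C0) ∧ |μ1 ω| ≤ M ^ 2 ∧ |μ0 ω| ≤ M ^ 2 := by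
    filter_upwards [hYbdd, hoverlap, hδbdd, hμ1bdd, hμ0bdd] with ω h1 h2 h3 h4 h5
    exact ⟨h1, ⟨h2.1, h2.2⟩, ⟨le_trans h3.1 hCC0, le_trans h3.2.1 hCC0, le_trans h3.2.2 hCC0⟩,
      h4, h5⟩
  -- denominator bounds
  have hden : ∀ ω, 1 / M ≤ π1 ω → π1 ω ≤ 1 - 1 / M → |δπ ω| ≤ C0 → ∀ t : ℝ, |t| < ε' →
      (1 / (2 * M) ≤ π1 ω + t * δπ ω ∧ π1 ω + t * δπ ω ≤ 1) ∧
      (1 / (2 * M) ≤ (1 - π1 ω) - t * δπ ω ∧ (1 - π1 ω) - t * δπ ω ≤ 1) := by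
    intro ω hl hu hd t ht
    have h1 : |t * δπ ω| ≤ 1 / (2 * M) := by
      calc |t * δπ ω| = |t| * |δπ ω| := abs_mul t _
        _ ≤ ε' * C0 := mul_le_mul ht.le hd (abs_nonneg _) hε'pos.le
        _ = 1 / (2 * M) := hε'C0
    have h2 := abs_le.mp h1
    have h3 : (0:ℝ) < 1 / (2 * M) := by positivity
    constructor
    · constructor
      · linarith [h2.1, hMsplit]
      · linarith [h2.2, h3]
    · constructor
      · linarith [h2.2, hMsplit]
      · linarith [h2.1, h3]
  have htprod : ∀ (t d : ℝ), |t| < ε' → |d| ≤ C0 → |t * d| ≤ 1 := by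
    intro t d ht hd
    calc |t * d| = |t| * |d| := abs_mul t d
      _ ≤ ε' * C0 := mul_le_mul ht.le hd (abs_nonneg _) hε'pos.le
      _ = 1 / (2 * M) := hε'C0
      _ ≤ 1 := h2Minv1
  -- the pointwise derivative
  set F' : ℝ → Ω → ℝ := fun t ω =>
    δμ1 ω - δμ0 ω
    + (A ω * -(δμ1 ω) * (π1 ω + t * δπ ω)
        - A ω * (Y ω - μ1 ω - t * δμ1 ω) * δπ ω) / (π1 ω + t * δπ ω) ^ 2
    - ((1 - A ω) * -(δμ0 ω) * ((1 - π1 ω) - t * δπ ω)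
        - (1 - A ω) * (Y ω - μ0 ω - t * δμ0 ω) * -(δπ ω)) / ((1 - π1 ω) - t * δπ ω) ^ 2
    with hF'def
  have hdiff : ∀ᵐ ω ∂P, ∀ t ∈ Metric.ball (0:ℝ) ε',
      HasDerivAt (fun s : ℝ => (μ1 ω + s * δμ1 ω) - (μ0 ω + s * δμ0 ω)
        + A ω * (Y ω - μ1 ω - s * δμ1 ω) / (π1 ω + s * δπ ω)
        - (1 - A ω) * (Y ω - μ0 ω - s * δμ0 ω) / ((1 - π1 ω) - s * δπ ω)) (F' t ω) t := by
    filter_upwards [hgood] with ω hg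
    obtain ⟨hY, ⟨hπl, hπu⟩, ⟨hdπ, hdμ1, hdμ0⟩, hμ1b, hμ0b⟩ := hg
    intro t ht
    rw [Metric.mem_ball, dist_zero_right, Real.norm_eq_abs] at ht
    obtain ⟨⟨hv1, hv2⟩, ⟨hz1, hz2⟩⟩ := hden ω hπl hπu hdπ t ht
    have hvne : π1 ω + t * δπ ω ≠ 0 := ne_of_gt (lt_of_lt_of_le (by positivity) hv1)
    have hzne : (1 - π1 ω) - t * δπ ω ≠ 0 := ne_of_gt (lt_of_lt_of_le (by positivity) hz1)
    have hd1 : HasDerivAt (fun s : ℝ => (μ1 ω + s * δμ1 ω) - (μ0 ω + s * δμ0 ω))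
        (δμ1 ω - δμ0 ω) t :=
      ((hasDerivAt_mul_const (δμ1 ω)).const_add (μ1 ω)).sub
        ((hasDerivAt_mul_const (δμ0 ω)).const_add (μ0 ω))
    have hc1 : HasDerivAt (fun s : ℝ => A ω * (Y ω - μ1 ω - s * δμ1 ω)) (A ω * -(δμ1 ω)) t :=
      ((hasDerivAt_mul_const (δμ1 ω)).const_sub (Y ω - μ1 ω)).const_mul (A ω)
    have hdv : HasDerivAt (fun s : ℝ => π1 ω + s * δπ ω) (δπ ω) t :=
      (hasDerivAt_mul_const (δπ ω)).const_add (π1 ω)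
    have hc2 : HasDerivAt (fun s : ℝ => (1 - A ω) * (Y ω - μ0 ω - s * δμ0 ω))
        ((1 - A ω) * -(δμ0 ω)) t :=
      ((hasDerivAt_mul_const (δμ0 ω)).const_sub (Y ω - μ0 ω)).const_mul (1 - A ω)
    have hdz : HasDerivAt (fun s : ℝ => (1 - π1 ω) - s * δπ ω) (-(δπ ω)) t :=
      (hasDerivAt_mul_const (δπ ω)).const_sub (1 - π1 ω)
    exact (hd1.add (hc1.div hdv hvne)).sub (hc2.div hdz hzne)
  -- the uniform bound
  set B : ℝ := (C0 + C0) + (C0 * 1 + (M + M ^ 2 + 1) * C0) * (4 * M ^ 2)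
      + (C0 * 1 + (M + M ^ 2 + 1) * C0) * (4 * M ^ 2) with hBdef
  have hbound : ∀ᵐ ω ∂P, ∀ t ∈ Metric.ball (0:ℝ) ε', ‖F' t ω‖ ≤ B := by
    filter_upwards [hgood] with ω hg
    obtain ⟨hY, ⟨hπl, hπu⟩, ⟨hdπ, hdμ1, hdμ0⟩, hμ1b, hμ0b⟩ := hg
    intro t ht
    rw [Metric.mem_ball, dist_zero_right, Real.norm_eq_abs] at ht
    obtain ⟨⟨hv1, hv2⟩, ⟨hz1, hz2⟩⟩ := hden ω hπl hπu hdπ t ht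
    have h3 : (0:ℝ) < 1 / (2 * M) := by positivity
    have habsv : |π1 ω + t * δπ ω| ≤ 1 := abs_le.mpr ⟨by linarith, hv2⟩
    have habsz : |(1 - π1 ω) - t * δπ ω| ≤ 1 := abs_le.mpr ⟨by linarith, hz2⟩
    have e1 : |A ω * -(δμ1 ω)| ≤ C0 * 1 := by
      rw [mul_one]
      calc |A ω * -(δμ1 ω)| ≤ 1 * C0 := abs_mul_le' (hAabs ω).1 (by rwa [abs_neg])
        _ = C0 := one_mul C0
    have e2 : |A ω * (Y ω - μ1 ω - t * δμ1 ω)| ≤ M + M ^ 2 + 1 := by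
      calc |A ω * (Y ω - μ1 ω - t * δμ1 ω)|
          ≤ 1 * (M + M ^ 2 + 1) :=
            abs_mul_le' (hAabs ω).1 (abs_sub_le'' (abs_sub_le'' hY hμ1b) (htprod t _ ht hdμ1))
        _ = M + M ^ 2 + 1 := one_mul _
    have e1' : |(1 - A ω) * -(δμ0 ω)| ≤ C0 * 1 := by
      rw [mul_one]
      calc |(1 - A ω) * -(δμ0 ω)| ≤ 1 * C0 := abs_mul_le' (hAabs ω).2 (by rwa [abs_neg])
        _ = C0 := one_mul C0
    have e2' : |(1 - A ω) * (Y ω - μ0 ω - t * δμ0 ω)| ≤ M + M ^ 2 + 1 := by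
      calc |(1 - A ω) * (Y ω - μ0 ω - t * δμ0 ω)|
          ≤ 1 * (M + M ^ 2 + 1) :=
            abs_mul_le' (hAabs ω).2 (abs_sub_le'' (abs_sub_le'' hY hμ0b) (htprod t _ ht hdμ0))
        _ = M + M ^ 2 + 1 := one_mul _
    have hdπ' : |-(δπ ω)| ≤ C0 := by rwa [abs_neg]
    have hnum1 : |A ω * -(δμ1 ω) * (π1 ω + t * δπ ω)
        - A ω * (Y ω - μ1 ω - t * δμ1 ω) * δπ ω| ≤ C0 * 1 + (M + M ^ 2 + 1) * C0 := by
      have q1 : |A ω * -(δμ1 ω) * (π1 ω + t * δπ ω)| ≤ C0 * 1 * 1 := abs_mul_le' e1 habsv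
      have q2 : |A ω * (Y ω - μ1 ω - t * δμ1 ω) * δπ ω| ≤ (M + M ^ 2 + 1) * C0 :=
        abs_mul_le' e2 hdπ
      have := abs_sub_le'' q1 q2
      linarith [this]
    have hnum2 : |(1 - A ω) * -(δμ0 ω) * ((1 - π1 ω) - t * δπ ω)
        - (1 - A ω) * (Y ω - μ0 ω - t * δμ0 ω) * -(δπ ω)|
        ≤ C0 * 1 + (M + M ^ 2 + 1) * C0 := by
      have q1 : |(1 - A ω) * -(δμ0 ω) * ((1 - π1 ω) - t * δπ ω)| ≤ C0 * 1 * 1 :=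
        abs_mul_le' e1' habsz
      have q2 : |(1 - A ω) * (Y ω - μ0 ω - t * δμ0 ω) * -(δπ ω)| ≤ (M + M ^ 2 + 1) * C0 :=
        abs_mul_le' e2' hdπ'
      have := abs_sub_le'' q1 q2
      linarith [this]
    have hq1 := quot_bound' hM hv1 hnum1
    have hq2 := quot_bound' hM hz1 hnum2
    have hbase : |δμ1 ω - δμ0 ω| ≤ C0 + C0 := abs_sub_le'' hdμ1 hdμ0
    rw [Real.norm_eq_abs, hF'def]
    exact abs_sub_le'' (abs_add_le' hbase hq1) hq2
  -- measurability of F t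
  have hFm : ∀ t : ℝ, AEStronglyMeasurable (fun ω => (μ1 ω + t * δμ1 ω) - (μ0 ω + t * δμ0 ω)
      + A ω * (Y ω - μ1 ω - t * δμ1 ω) / (π1 ω + t * δπ ω)
      - (1 - A ω) * (Y ω - μ0 ω - t * δμ0 ω) / ((1 - π1 ω) - t * δπ ω)) P := by
    intro t
    refine Measurable.aestronglyMeasurable ?_
    exact (((hμ1m.add (hδμ1m.const_mul t)).sub (hμ0m.add (hδμ0m.const_mul t))).add
      ((hA.mul ((hYmeas.sub hμ1m).sub (hδμ1m.const_mul t))).div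
        (hπ1m.add (hδπm.const_mul t)))).sub
      (((measurable_const.sub hA).mul ((hYmeas.sub hμ0m).sub (hδμ0m.const_mul t))).div
        ((measurable_const.sub hπ1m).sub (hδπm.const_mul t)))
  have hF'0m : AEStronglyMeasurable (F' 0) P := by
    refine Measurable.aestronglyMeasurable ?_
    show Measurable (F' 0)
    rw [hF'def]
    exact ((hδμ1m.sub hδμ0m).add
      ((((hA.mul hδμ1m.neg).mul (hπ1m.add (hδπm.const_mul 0))).sub
        ((hA.mul ((hYmeas.sub hμ1m).sub (hδμ1m.const_mul 0))).mul hδπm)).div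
        ((hπ1m.add (hδπm.const_mul 0)).pow_const 2))).sub
      (((((measurable_const.sub hA).mul hδμ0m.neg).mul
          ((measurable_const.sub hπ1m).sub (hδπm.const_mul 0))).sub
        (((measurable_const.sub hA).mul ((hYmeas.sub hμ0m).sub (hδμ0m.const_mul 0))).mul
          hδπm.neg)).div
        (((measurable_const.sub hπ1m).sub (hδπm.const_mul 0)).pow_const 2))
  have hFint0 : Integrable (fun ω => (μ1 ω + (0:ℝ) * δμ1 ω) - (μ0 ω + (0:ℝ) * δμ0 ω)
      + A ω * (Y ω - μ1 ω - (0:ℝ) * δμ1 ω) / (π1 ω + (0:ℝ) * δπ ω)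
      - (1 - A ω) * (Y ω - μ0 ω - (0:ℝ) * δμ0 ω) / ((1 - π1 ω) - (0:ℝ) * δπ ω)) P := by
    refine integrable_of_ae_bound (hFm 0)
      (K := ((M ^ 2 + 1) + (M ^ 2 + 1)) + (M + M ^ 2 + 1) * (2 * M)
        + (M + M ^ 2 + 1) * (2 * M)) ?_
    filter_upwards [hgood] with ω hg
    obtain ⟨hY, ⟨hπl, hπu⟩, ⟨hdπ, hdμ1, hdμ0⟩, hμ1b, hμ0b⟩ := hg
    have h0 : |(0:ℝ)| < ε' := by simpa using hε'pos
    obtain ⟨⟨hv1, hv2⟩, ⟨hz1, hz2⟩⟩ := hden ω hπl hπu hdπ 0 h0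
    have ht1 : |(0:ℝ) * δμ1 ω| ≤ 1 := htprod 0 _ h0 hdμ1
    have ht0 : |(0:ℝ) * δμ0 ω| ≤ 1 := htprod 0 _ h0 hdμ0
    have b1 : |μ1 ω + 0 * δμ1 ω| ≤ M ^ 2 + 1 := abs_add_le' hμ1b ht1
    have b0 : |μ0 ω + 0 * δμ0 ω| ≤ M ^ 2 + 1 := abs_add_le' hμ0b ht0
    have e2 : |A ω * (Y ω - μ1 ω - 0 * δμ1 ω)| ≤ M + M ^ 2 + 1 := by
      calc |A ω * (Y ω - μ1 ω - 0 * δμ1 ω)| ≤ 1 * (M + M ^ 2 + 1) :=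
            abs_mul_le' (hAabs ω).1 (abs_sub_le'' (abs_sub_le'' hY hμ1b) ht1)
        _ = M + M ^ 2 + 1 := one_mul _
    have e2' : |(1 - A ω) * (Y ω - μ0 ω - 0 * δμ0 ω)| ≤ M + M ^ 2 + 1 := by
      calc |(1 - A ω) * (Y ω - μ0 ω - 0 * δμ0 ω)| ≤ 1 * (M + M ^ 2 + 1) :=
            abs_mul_le' (hAabs ω).2 (abs_sub_le'' (abs_sub_le'' hY hμ0b) ht0)
        _ = M + M ^ 2 + 1 := one_mul _
    have d1 := div_bound' hM hv1 e2
    have d2 := div_bound' hM hz1 e2'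
    exact abs_sub_le'' (abs_add_le' (abs_sub_le'' b1 b0) d1) d2
  have hmain := hasDerivAt_integral_of_dominated_loc_of_deriv_le (μ := P) (x₀ := (0:ℝ))
    (F := fun t ω => (μ1 ω + t * δμ1 ω) - (μ0 ω + t * δμ0 ω)
      + A ω * (Y ω - μ1 ω - t * δμ1 ω) / (π1 ω + t * δπ ω)
      - (1 - A ω) * (Y ω - μ0 ω - t * δμ0 ω) / ((1 - π1 ω) - t * δπ ω))
    (F' := F') (bound := fun _ => B) (Metric.ball_mem_nhds 0 hε'pos)
    (Filter.Eventually.of_forall hFm) hFint0 hF'0m hbound (integrable_const B) hdiff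
  -- integrability of the pieces of F' 0 rewritten with conditional moments
  have hhalfM : 1 / (2 * M) ≤ 1 / M := by
    have h3 : (0:ℝ) < 1 / (2 * M) := by positivity
    linarith [hMsplit]
  have hIb : Integrable (fun ω => δμ1 ω - δμ0 ω) P := by
    refine integrable_of_ae_bound (hδμ1m.sub hδμ0m).aestronglyMeasurable (K := C0 + C0) ?_
    filter_upwards [hgood] with ω hg
    exact abs_sub_le'' hg.2.2.1.2.1 hg.2.2.1.2.2
  have hIA : Integrable A P :=
    integrable_of_ae_bound hA.aestronglyMeasurable (K := 1)
      (Filter.Eventually.of_forall fun ω => (hAabs ω).1)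
  have hIAY : Integrable (fun ω => A ω * Y ω) P :=
    integrable_of_ae_bound (hA.mul hYmeas).aestronglyMeasurable (K := M) hAYbdd
  have hI1A : Integrable (fun ω => 1 - A ω) P :=
    integrable_of_ae_bound (measurable_const.sub hA).aestronglyMeasurable (K := 1)
      (Filter.Eventually.of_forall fun ω => (hAabs ω).2)
  have hI1AY : Integrable (fun ω => (1 - A ω) * Y ω) P :=
    integrable_of_ae_bound ((measurable_const.sub hA).mul hYmeas).aestronglyMeasurable
      (K := M) hAY'bdd
  -- the 𝓖X-measurable multipliers
  have hm1 : Measurable[𝓖X] (fun ω => -(δμ1 ω) / π1 ω + δπ ω * μ1 ω / π1 ω ^ 2) :=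
    (hδμ1meas.neg.div hπ1meas).add ((hδπmeas.mul hμ1meas).div (hπ1meas.pow_const 2))
  have hm2 : Measurable[𝓖X] (fun ω => -(δπ ω) / π1 ω ^ 2) :=
    hδπmeas.neg.div (hπ1meas.pow_const 2)
  have hm3 : Measurable[𝓖X] (fun ω => δμ0 ω / (1 - π1 ω) + δπ ω * μ0 ω / (1 - π1 ω) ^ 2) :=
    (hδμ0meas.div (measurable_const.sub hπ1meas)).add
      ((hδπmeas.mul hμ0meas).div ((measurable_const.sub hπ1meas).pow_const 2))
  have hm4 : Measurable[𝓖X] (fun ω => -(δπ ω) / (1 - π1 ω) ^ 2) :=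
    hδπmeas.neg.div ((measurable_const.sub hπ1meas).pow_const 2)
  -- a.e. bounds on the multipliers
  have hmb1 : ∀ᵐ ω ∂P, |(-(δμ1 ω) / π1 ω + δπ ω * μ1 ω / π1 ω ^ 2)| ≤
      C0 * (2 * M) + C0 * M ^ 2 * (4 * M ^ 2) := by
    filter_upwards [hgood] with ω hg
    obtain ⟨hY, ⟨hπl, hπu⟩, ⟨hdπ, hdμ1, hdμ0⟩, hμ1b, hμ0b⟩ := hg
    have hπ2 : 1 / (2 * M) ≤ π1 ω := le_trans hhalfM hπl
    exact abs_add_le' (div_bound' hM hπ2 (by rwa [abs_neg]))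
      (quot_bound' hM hπ2 (abs_mul_le' hdπ hμ1b))
  have hmb2 : ∀ᵐ ω ∂P, |(-(δπ ω) / π1 ω ^ 2)| ≤ C0 * (4 * M ^ 2) := by
    filter_upwards [hgood] with ω hg
    obtain ⟨hY, ⟨hπl, hπu⟩, ⟨hdπ, hdμ1, hdμ0⟩, hμ1b, hμ0b⟩ := hg
    have hπ2 : 1 / (2 * M) ≤ π1 ω := le_trans hhalfM hπl
    exact quot_bound' hM hπ2 (by rwa [abs_neg])
  have hmb3 : ∀ᵐ ω ∂P, |(δμ0 ω / (1 - π1 ω) + δπ ω * μ0 ω / (1 - π1 ω) ^ 2)| ≤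
      C0 * (2 * M) + C0 * M ^ 2 * (4 * M ^ 2) := by
    filter_upwards [hgood] with ω hg
    obtain ⟨hY, ⟨hπl, hπu⟩, ⟨hdπ, hdμ1, hdμ0⟩, hμ1b, hμ0b⟩ := hg
    have hπ2 : 1 / (2 * M) ≤ 1 - π1 ω := le_trans hhalfM (by linarith)
    exact abs_add_le' (div_bound' hM hπ2 hdμ0)
      (quot_bound' hM hπ2 (abs_mul_le' hdπ hμ0b))
  have hmb4 : ∀ᵐ ω ∂P, |(-(δπ ω) / (1 - π1 ω) ^ 2)| ≤ C0 * (4 * M ^ 2) := by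
    filter_upwards [hgood] with ω hg
    obtain ⟨hY, ⟨hπl, hπu⟩, ⟨hdπ, hdμ1, hdμ0⟩, hμ1b, hμ0b⟩ := hg
    have hπ2 : 1 / (2 * M) ≤ 1 - π1 ω := le_trans hhalfM (by linarith)
    exact quot_bound' hM hπ2 (by rwa [abs_neg])
  -- a.e. bounds on π1 and the regressions
  have hπabs : ∀ᵐ ω ∂P, |π1 ω| ≤ 1 ∧ |1 - π1 ω| ≤ 1 ∧ |μ1 ω * π1 ω| ≤ M ^ 2 * 1 ∧
      |μ0 ω * (1 - π1 ω)| ≤ M ^ 2 * 1 := by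
    filter_upwards [hgood] with ω hg
    obtain ⟨hY, ⟨hπl, hπu⟩, ⟨hdπ, hdμ1, hdμ0⟩, hμ1b, hμ0b⟩ := hg
    have h1M : (0:ℝ) < 1 / M := by positivity
    have p1 : |π1 ω| ≤ 1 := abs_le.mpr ⟨by linarith, by linarith⟩
    have p2 : |1 - π1 ω| ≤ 1 := abs_le.mpr ⟨by linarith, by linarith⟩
    exact ⟨p1, p2, abs_mul_le' hμ1b p1, abs_mul_le' hμ0b p2⟩
  -- integrability of the six product terms (with A-side and with conditional side)
  have hIT1 : Integrable (fun ω => (-(δμ1 ω) / π1 ω + δπ ω * μ1 ω / π1 ω ^ 2) * A ω) P := by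
    refine integrable_of_ae_bound ((hm1.mono h𝓖X le_rfl).mul hA).aestronglyMeasurable
      (K := (C0 * (2 * M) + C0 * M ^ 2 * (4 * M ^ 2)) * 1) ?_
    filter_upwards [hmb1] with ω h1
    exact abs_mul_le' h1 (hAabs ω).1
  have hIT2 : Integrable (fun ω => (-(δπ ω) / π1 ω ^ 2) * (A ω * Y ω)) P := by
    refine integrable_of_ae_bound
      ((hm2.mono h𝓖X le_rfl).mul (hA.mul hYmeas)).aestronglyMeasurable
      (K := C0 * (4 * M ^ 2) * M) ?_
    filter_upwards [hmb2, hAYbdd] with ω h1 h2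
    exact abs_mul_le' h1 h2
  have hIT3 : Integrable
      (fun ω => (δμ0 ω / (1 - π1 ω) + δπ ω * μ0 ω / (1 - π1 ω) ^ 2) * (1 - A ω)) P := by
    refine integrable_of_ae_bound
      ((hm3.mono h𝓖X le_rfl).mul (measurable_const.sub hA)).aestronglyMeasurable
      (K := (C0 * (2 * M) + C0 * M ^ 2 * (4 * M ^ 2)) * 1) ?_
    filter_upwards [hmb3] with ω h1
    exact abs_mul_le' h1 (hAabs ω).2
  have hIT4 : Integrable (fun ω => (-(δπ ω) / (1 - π1 ω) ^ 2) * ((1 - A ω) * Y ω)) P := by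
    refine integrable_of_ae_bound
      ((hm4.mono h𝓖X le_rfl).mul ((measurable_const.sub hA).mul hYmeas)).aestronglyMeasurable
      (K := C0 * (4 * M ^ 2) * M) ?_
    filter_upwards [hmb4, hAY'bdd] with ω h1 h2
    exact abs_mul_le' h1 h2
  have hIT1' : Integrable (fun ω => (-(δμ1 ω) / π1 ω + δπ ω * μ1 ω / π1 ω ^ 2) * π1 ω) P := by
    refine integrable_of_ae_bound ((hm1.mono h𝓖X le_rfl).mul hπ1m).aestronglyMeasurable
      (K := (C0 * (2 * M) + C0 * M ^ 2 * (4 * M ^ 2)) * 1) ?_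
    filter_upwards [hmb1, hπabs] with ω h1 h2
    exact abs_mul_le' h1 h2.1
  have hIT2' : Integrable (fun ω => (-(δπ ω) / π1 ω ^ 2) * (μ1 ω * π1 ω)) P := by
    refine integrable_of_ae_bound
      ((hm2.mono h𝓖X le_rfl).mul (hμ1m.mul hπ1m)).aestronglyMeasurable
      (K := C0 * (4 * M ^ 2) * (M ^ 2 * 1)) ?_
    filter_upwards [hmb2, hπabs] with ω h1 h2
    exact abs_mul_le' h1 h2.2.2.1
  have hIT3' : Integrable
      (fun ω => (δμ0 ω / (1 - π1 ω) + δπ ω * μ0 ω / (1 - π1 ω) ^ 2) * (1 - π1 ω)) P := by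
    refine integrable_of_ae_bound
      ((hm3.mono h𝓖X le_rfl).mul (measurable_const.sub hπ1m)).aestronglyMeasurable
      (K := (C0 * (2 * M) + C0 * M ^ 2 * (4 * M ^ 2)) * 1) ?_
    filter_upwards [hmb3, hπabs] with ω h1 h2
    exact abs_mul_le' h1 h2.2.1
  have hIT4' : Integrable
      (fun ω => (-(δπ ω) / (1 - π1 ω) ^ 2) * (μ0 ω * (1 - π1 ω))) P := by
    refine integrable_of_ae_bound
      ((hm4.mono h𝓖X le_rfl).mul (hμ0m.mul (measurable_const.sub hπ1m))).aestronglyMeasurable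
      (K := C0 * (4 * M ^ 2) * (M ^ 2 * 1)) ?_
    filter_upwards [hmb4, hπabs] with ω h1 h2
    exact abs_mul_le' h1 h2.2.2.2
  -- conditional expectation of 1 - A
  have hcondA : P[fun ω => 1 - A ω|𝓖X] =ᵐ[P] fun ω => 1 - π1 ω := by
    have hsub : P[(fun _ : Ω => (1:ℝ)) - A|𝓖X] =ᵐ[P]
        P[(fun _ : Ω => (1:ℝ))|𝓖X] - P[A|𝓖X] := condExp_sub (integrable_const 1) hIA 𝓖X
    refine Filter.EventuallyEq.trans (by exact hsub) ?_
    have hc : P[(fun _ : Ω => (1:ℝ))|𝓖X] = fun _ => (1:ℝ) := condExp_const h𝓖X 1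
    filter_upwards [hπ1] with ω hω
    rw [Pi.sub_apply, hc, ← hω]
  -- the four swaps
  have s1 := key_swap h𝓖X hm1.stronglyMeasurable hIA hIT1 hπ1.symm
  have s2 := key_swap h𝓖X hm2.stronglyMeasurable hIAY hIT2 hμ1.symm
  have s3 := key_swap h𝓖X hm3.stronglyMeasurable hI1A hIT3 hcondA
  have s4 := key_swap h𝓖X hm4.stronglyMeasurable hI1AY hIT4 hμ0.symm
  -- rewrite F' 0 in terms of the six product terms
  have step1 : (fun ω => F' 0 ω) =ᵐ[P] (fun ω => (δμ1 ω - δμ0 ω)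
      + (-(δμ1 ω) / π1 ω + δπ ω * μ1 ω / π1 ω ^ 2) * A ω
      + (-(δπ ω) / π1 ω ^ 2) * (A ω * Y ω)
      + (δμ0 ω / (1 - π1 ω) + δπ ω * μ0 ω / (1 - π1 ω) ^ 2) * (1 - A ω)
      + (-(δπ ω) / (1 - π1 ω) ^ 2) * ((1 - A ω) * Y ω)) := by
    filter_upwards [hgood] with ω hg
    obtain ⟨hY, ⟨hπl, hπu⟩, hrest⟩ := hg
    have h1M : (0:ℝ) < 1 / M := by positivity
    have hπne : π1 ω ≠ 0 := ne_of_gt (lt_of_lt_of_le h1M hπl)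
    have hπ0ne : (1:ℝ) - π1 ω ≠ 0 := ne_of_gt (lt_of_lt_of_le h1M (by linarith))
    show F' 0 ω = _
    simp only [hF'def, zero_mul, add_zero, sub_zero]
    field_simp
    ring
  have step2 : (fun ω => (δμ1 ω - δμ0 ω)
      + (-(δμ1 ω) / π1 ω + δπ ω * μ1 ω / π1 ω ^ 2) * π1 ω
      + (-(δπ ω) / π1 ω ^ 2) * (μ1 ω * π1 ω)
      + (δμ0 ω / (1 - π1 ω) + δπ ω * μ0 ω / (1 - π1 ω) ^ 2) * (1 - π1 ω)
      + (-(δπ ω) / (1 - π1 ω) ^ 2) * (μ0 ω * (1 - π1 ω))) =ᵐ[P] (fun _ => (0:ℝ)) := by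
    filter_upwards [hgood] with ω hg
    obtain ⟨hY, ⟨hπl, hπu⟩, hrest⟩ := hg
    have h1M : (0:ℝ) < 1 / M := by positivity
    have hπne : π1 ω ≠ 0 := ne_of_gt (lt_of_lt_of_le h1M hπl)
    have hπ0ne : (1:ℝ) - π1 ω ≠ 0 := ne_of_gt (lt_of_lt_of_le h1M (by linarith))
    show _ = (0:ℝ)
    field_simp
    ring
  -- integrable partial sums
  have hI1 : Integrable (fun ω => (δμ1 ω - δμ0 ω)
      + (-(δμ1 ω) / π1 ω + δπ ω * μ1 ω / π1 ω ^ 2) * A ω) P := hIb.add hIT1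
  have hI2 : Integrable (fun ω => (δμ1 ω - δμ0 ω)
      + (-(δμ1 ω) / π1 ω + δπ ω * μ1 ω / π1 ω ^ 2) * A ω
      + (-(δπ ω) / π1 ω ^ 2) * (A ω * Y ω)) P := hI1.add hIT2
  have hI3 : Integrable (fun ω => (δμ1 ω - δμ0 ω)
      + (-(δμ1 ω) / π1 ω + δπ ω * μ1 ω / π1 ω ^ 2) * A ω
      + (-(δπ ω) / π1 ω ^ 2) * (A ω * Y ω)
      + (δμ0 ω / (1 - π1 ω) + δπ ω * μ0 ω / (1 - π1 ω) ^ 2) * (1 - A ω)) P := hI2.add hIT3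
  have hI1' : Integrable (fun ω => (δμ1 ω - δμ0 ω)
      + (-(δμ1 ω) / π1 ω + δπ ω * μ1 ω / π1 ω ^ 2) * π1 ω) P := hIb.add hIT1'
  have hI2' : Integrable (fun ω => (δμ1 ω - δμ0 ω)
      + (-(δμ1 ω) / π1 ω + δπ ω * μ1 ω / π1 ω ^ 2) * π1 ω
      + (-(δπ ω) / π1 ω ^ 2) * (μ1 ω * π1 ω)) P := hI1'.add hIT2'
  have hI3' : Integrable (fun ω => (δμ1 ω - δμ0 ω)
      + (-(δμ1 ω) / π1 ω + δπ ω * μ1 ω / π1 ω ^ 2) * π1 ω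
      + (-(δπ ω) / π1 ω ^ 2) * (μ1 ω * π1 ω)
      + (δμ0 ω / (1 - π1 ω) + δπ ω * μ0 ω / (1 - π1 ω) ^ 2) * (1 - π1 ω)) P := hI2'.add hIT3'
  -- split the integrals
  have e4 : ∫ ω, ((δμ1 ω - δμ0 ω)
      + (-(δμ1 ω) / π1 ω + δπ ω * μ1 ω / π1 ω ^ 2) * A ω
      + (-(δπ ω) / π1 ω ^ 2) * (A ω * Y ω)
      + (δμ0 ω / (1 - π1 ω) + δπ ω * μ0 ω / (1 - π1 ω) ^ 2) * (1 - A ω)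
      + (-(δπ ω) / (1 - π1 ω) ^ 2) * ((1 - A ω) * Y ω)) ∂P
      = (((∫ ω, (δμ1 ω - δμ0 ω) ∂P
        + ∫ ω, (-(δμ1 ω) / π1 ω + δπ ω * μ1 ω / π1 ω ^ 2) * A ω ∂P)
        + ∫ ω, (-(δπ ω) / π1 ω ^ 2) * (A ω * Y ω) ∂P)
        + ∫ ω, (δμ0 ω / (1 - π1 ω) + δπ ω * μ0 ω / (1 - π1 ω) ^ 2) * (1 - A ω) ∂P)
        + ∫ ω, (-(δπ ω) / (1 - π1 ω) ^ 2) * ((1 - A ω) * Y ω) ∂P := by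
    rw [integral_add hI3 hIT4, integral_add hI2 hIT3, integral_add hI1 hIT2,
      integral_add hIb hIT1]
  have e4' : ∫ ω, ((δμ1 ω - δμ0 ω)
      + (-(δμ1 ω) / π1 ω + δπ ω * μ1 ω / π1 ω ^ 2) * π1 ω
      + (-(δπ ω) / π1 ω ^ 2) * (μ1 ω * π1 ω)
      + (δμ0 ω / (1 - π1 ω) + δπ ω * μ0 ω / (1 - π1 ω) ^ 2) * (1 - π1 ω)
      + (-(δπ ω) / (1 - π1 ω) ^ 2) * (μ0 ω * (1 - π1 ω))) ∂P
      = (((∫ ω, (δμ1 ω - δμ0 ω) ∂P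
        + ∫ ω, (-(δμ1 ω) / π1 ω + δπ ω * μ1 ω / π1 ω ^ 2) * π1 ω ∂P)
        + ∫ ω, (-(δπ ω) / π1 ω ^ 2) * (μ1 ω * π1 ω) ∂P)
        + ∫ ω, (δμ0 ω / (1 - π1 ω) + δπ ω * μ0 ω / (1 - π1 ω) ^ 2) * (1 - π1 ω) ∂P)
        + ∫ ω, (-(δπ ω) / (1 - π1 ω) ^ 2) * (μ0 ω * (1 - π1 ω)) ∂P := by
    rw [integral_add hI3' hIT4', integral_add hI2' hIT3', integral_add hI1' hIT2',
      integral_add hIb hIT1']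
  have hzero : ∫ ω, F' 0 ω ∂P = 0 := by
    rw [integral_congr_ae step1, e4, s1, s2, s3, s4, ← e4', integral_congr_ae step2,
      integral_zero]
  have hfinal := hmain.2
  rw [hzero] at hfinal
  exact hfinal
end
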